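/- arXiv:1709.07712 — 7 statements merged into one kernel-verified Lean document; each statement's English description precedes it below -/
import Mathlib

section
/- Let G be a prime (house, co-dart)-free graph that contains an induced odd cycle (hole) of length at least 7. Then G is triangle-free. -/
open SimpleGraph

/-- A homogeneous set: every vertex outside is complete or anticomplete to it. -/
def IsHomogeneousSet {V : Type*} (G : SimpleGraph V) (S : Set V) : Prop :=
  ∀ v ∉ S, (∀ s ∈ S, G.Adj v s) ∨ (∀ s ∈ S, ¬ G.Adj v s)

/-- A graph is prime if its only homogeneous sets are trivial. -/
def IsPrime {V : Type*} (G : SimpleGraph V) : Prop :=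
  ∀ S : Set V, IsHomogeneousSet G S → S = ∅ ∨ (∃ v, S = {v}) ∨ S = Set.univ

/-- `Free G H` : `G` contains no induced subgraph isomorphic to `H`. -/
def Free {V W : Type*} (G : SimpleGraph V) (H : SimpleGraph W) : Prop :=
  ¬ Nonempty (H ↪g G)

/-- The house: complement of the path on 5 vertices. -/
def house : SimpleGraph (Fin 5) := (pathGraph 5)ᶜ

/-- The dart: a diamond on 0,1,2,3 (missing edge 2-3) plus a pendant vertex 4
adjacent to the degree-3 vertex 0. -/
def dart : SimpleGraph (Fin 5) :=
  SimpleGraph.fromRel (fun a b =>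
    (a, b) ∈ [((0 : Fin 5), (1 : Fin 5)), (0, 2), (0, 3), (1, 2), (1, 3), (0, 4)])

/-- The co-dart: complement of the dart. -/
def codart : SimpleGraph (Fin 5) := dartᶜ

/-- The bull: triangle 0,1,2 with pendant vertices 3 (at 0) and 4 (at 1). -/
def bull : SimpleGraph (Fin 5) :=
  SimpleGraph.fromRel (fun a b =>
    (a, b) ∈ [((0 : Fin 5), (1 : Fin 5)), (1, 2), (0, 2), (0, 3), (1, 4)])

/-- The fork (chair): path 0-1-2-3 plus a vertex 4 adjacent to 1. -/
def fork : SimpleGraph (Fin 5) :=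
  SimpleGraph.fromRel (fun a b =>
    (a, b) ∈ [((0 : Fin 5), (1 : Fin 5)), (1, 2), (2, 3), (1, 4)])

/-- The hammer: triangle 0,1,2 with a path 2-3-4 attached. -/
def hammer : SimpleGraph (Fin 5) :=
  SimpleGraph.fromRel (fun a b =>
    (a, b) ∈ [((0 : Fin 5), (1 : Fin 5)), (1, 2), (0, 2), (2, 3), (3, 4)])

/-- A graph is perfect if every induced subgraph has chromatic number equal to
its clique number. -/
def IsPerfect {V : Type*} (G : SimpleGraph V) : Prop :=
  ∀ S : Set V, (G.induce S).chromaticNumber = ((G.induce S).cliqueNum : ℕ∞)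

/-- A realization of an induced cycle of length `ℓ` by nonempty pairwise disjoint sets
`A i`, with `A i` complete to `A (i+1)` and no other edges between distinct sets. -/
def CycleBlowup {V : Type*} (G : SimpleGraph V) {ℓ : ℕ} (A : ZMod ℓ → Set V) : Prop :=
  (∀ i, (A i).Nonempty) ∧
  (∀ i j, i ≠ j → Disjoint (A i) (A j)) ∧
  (∀ i, ∀ x ∈ A i, ∀ y ∈ A (i + 1), G.Adj x y) ∧
  (∀ i j, i ≠ j → j ≠ i + 1 → i ≠ j + 1 → ∀ x ∈ A i, ∀ y ∈ A j, ¬ G.Adj x y)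

section Helpers
set_option linter.unreachableTactic false
set_option linter.unusedTactic false
variable {V : Type*} {G : SimpleGraph V}

lemma no_house (hh : _root_.Free G house) (p0 p1 p2 p3 p4 : V)
    (h01 : p0 ≠ p1) (h12 : p1 ≠ p2) (h23 : p2 ≠ p3) (h34 : p3 ≠ p4)
    (n01 : ¬ G.Adj p0 p1) (n12 : ¬ G.Adj p1 p2) (n23 : ¬ G.Adj p2 p3) (n34 : ¬ G.Adj p3 p4)
    (a02 : G.Adj p0 p2) (a03 : G.Adj p0 p3) (a04 : G.Adj p0 p4)
    (a13 : G.Adj p1 p3) (a14 : G.Adj p1 p4) (a24 : G.Adj p2 p4) : False := by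
  apply hh
  have d02 := a02.ne; have d03 := a03.ne; have d04 := a04.ne
  have d13 := a13.ne; have d14 := a14.ne; have d24 := a24.ne
  have a20 := a02.symm; have a30 := a03.symm; have a40 := a04.symm
  have a31 := a13.symm; have a41 := a14.symm; have a42 := a24.symm
  have n10 : ¬ G.Adj p1 p0 := fun h => n01 h.symm
  have n21 : ¬ G.Adj p2 p1 := fun h => n12 h.symm
  have n32 : ¬ G.Adj p3 p2 := fun h => n23 h.symm
  have n43 : ¬ G.Adj p4 p3 := fun h => n34 h.symm
  refine ⟨⟨⟨![p0, p1, p2, p3, p4], ?_⟩, ?_⟩⟩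
  · intro i j h
    fin_cases i <;> fin_cases j <;> simp_all <;>
      first
        | rfl
        | exact absurd h.symm (by assumption)
  · intro i j
    show G.Adj _ _ ↔ _
    fin_cases i <;> fin_cases j <;>
      simp only [Matrix.cons_val_zero, Matrix.cons_val_one, Matrix.head_cons,
        Matrix.cons_val_two, Matrix.tail_cons, Matrix.cons_val_three, Matrix.cons_val_four,
        Matrix.cons_val_fin_one, Matrix.cons_val'] <;>
      first
        | exact iff_of_false (G.loopless.irrefl _) (by rw [house, compl_adj, pathGraph_adj]; decide)
        | exact iff_of_true (by assumption) (by rw [house, compl_adj, pathGraph_adj]; decide)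
        | exact iff_of_false (by assumption) (by rw [house, compl_adj, pathGraph_adj]; decide)

lemma no_codart (hc : _root_.Free G codart) (z p t1 t2 t3 : V)
    (a12 : G.Adj t1 t2) (a13 : G.Adj t1 t3) (a23 : G.Adj t2 t3) (ap3 : G.Adj p t3)
    (np1 : ¬ G.Adj p t1) (np2 : ¬ G.Adj p t2)
    (nz1 : ¬ G.Adj z t1) (nz2 : ¬ G.Adj z t2) (nz3 : ¬ G.Adj z t3) (nzp : ¬ G.Adj z p)
    (dzp : z ≠ p) (dz1 : z ≠ t1) (dz2 : z ≠ t2) (dz3 : z ≠ t3)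
    (dp1 : p ≠ t1) (dp2 : p ≠ t2) : False := by
  apply hc
  have d12 := a12.ne; have d13 := a13.ne; have d23 := a23.ne; have dp3 := ap3.ne
  have a21 := a12.symm; have a31 := a13.symm; have a32 := a23.symm; have a3p := ap3.symm
  have n1p : ¬ G.Adj t1 p := fun h => np1 h.symm
  have n2p : ¬ G.Adj t2 p := fun h => np2 h.symm
  have n1z : ¬ G.Adj t1 z := fun h => nz1 h.symm
  have n2z : ¬ G.Adj t2 z := fun h => nz2 h.symm
  have n3z : ¬ G.Adj t3 z := fun h => nz3 h.symm
  have npz : ¬ G.Adj p z := fun h => nzp h.symm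
  refine ⟨⟨⟨![z, p, t1, t2, t3], ?_⟩, ?_⟩⟩
  · intro i j h
    fin_cases i <;> fin_cases j <;> simp_all <;>
      first
        | rfl
        | exact absurd h.symm (by assumption)
  · intro i j
    show G.Adj _ _ ↔ _
    fin_cases i <;> fin_cases j <;>
      simp only [Matrix.cons_val_zero, Matrix.cons_val_one, Matrix.head_cons,
        Matrix.cons_val_two, Matrix.tail_cons, Matrix.cons_val_three, Matrix.cons_val_four,
        Matrix.cons_val_fin_one, Matrix.cons_val'] <;>
      first
        | exact iff_of_false (G.loopless.irrefl _) (by rw [codart, compl_adj, dart, fromRel_adj]; decide)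
        | exact iff_of_true (by assumption) (by rw [codart, compl_adj, dart, fromRel_adj]; decide)
        | exact iff_of_false (by assumption) (by rw [codart, compl_adj, dart, fromRel_adj]; decide)

end Helpers

open Fin.NatCast Fin.CommRing

structure STCtx {V : Type*} (G : SimpleGraph V) (ℓ : ℕ) [NeZero ℓ] where
  c : Fin ℓ → V
  hl : 7 ≤ ℓ
  hodd : Odd ℓ
  inj : Function.Injective c
  adj : ∀ i j : Fin ℓ, G.Adj (c i) (c j) ↔ (j = i + 1 ∨ i = j + 1)
  hh : _root_.Free G house
  hc : _root_.Free G codart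
  hp : IsPrime G

namespace STCtx
variable {V : Type*} {G : SimpleGraph V} {ℓ : ℕ} [NeZero ℓ] (X : STCtx G ℓ)

lemma neC (X : STCtx G ℓ) {a b : ℕ} (ha : a < ℓ) (hb : b < ℓ) (h : a ≠ b) :
    ((a : ℕ) : Fin ℓ) ≠ ((b : ℕ) : Fin ℓ) := by
  intro hab
  apply h
  have := congrArg Fin.val hab
  rwa [Fin.val_cast_of_lt ha, Fin.val_cast_of_lt hb] at this

/-- index shift inequality -/
lemma ine (X : STCtx G ℓ) (k : Fin ℓ) {a b : ℕ} (ha : a < ℓ) (hb : b < ℓ) (h : a ≠ b) :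
    k + ((a : ℕ) : Fin ℓ) ≠ k + ((b : ℕ) : Fin ℓ) := by
  intro hab
  exact X.neC ha hb h (add_left_cancel hab)

lemma ss (_X : STCtx G ℓ) (k : Fin ℓ) (a b : ℕ) :
    k + ((a : ℕ) : Fin ℓ) + ((b : ℕ) : Fin ℓ) = k + (((a + b : ℕ)) : Fin ℓ) := by
  rw [add_assoc, Nat.cast_add]

lemma s0 (_X : STCtx G ℓ) (k : Fin ℓ) : k + ((0 : ℕ) : Fin ℓ) = k := by
  simp

lemma s1 (_X : STCtx G ℓ) (k : Fin ℓ) : k + ((1 : ℕ) : Fin ℓ) = k + 1 := by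
  norm_num

/-- distinctness of shifted cycle vertices -/
lemma cne (k : Fin ℓ) {a b : ℕ} (ha : a ≤ 6) (hb : b ≤ 6) (h : a ≠ b) :
    X.c (k + ((a : ℕ) : Fin ℓ)) ≠ X.c (k + ((b : ℕ) : Fin ℓ)) := by
  have hl := X.hl
  exact fun hab => X.ine k (by omega) (by omega) h (X.inj hab)

/-- adjacency of shifted cycle vertices -/
lemma adjs (k : Fin ℓ) {a b : ℕ} (ha : a ≤ 5) (hb : b ≤ 5) :
    G.Adj (X.c (k + ((a : ℕ) : Fin ℓ))) (X.c (k + ((b : ℕ) : Fin ℓ))) ↔ (b = a + 1 ∨ a = b + 1) := by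
  have hl := X.hl
  have key : ∀ x y : ℕ, x < ℓ → y < ℓ → (((x:ℕ):Fin ℓ) = ((y:ℕ):Fin ℓ) ↔ x = y) := by
    intro x y hx hy
    constructor
    · intro h
      have := congrArg Fin.val h
      rwa [Fin.val_cast_of_lt hx, Fin.val_cast_of_lt hy] at this
    · rintro rfl; rfl
  rw [X.adj]
  have h1 : (k + ((b:ℕ):Fin ℓ) = k + ((a:ℕ):Fin ℓ) + 1) ↔ b = a + 1 := by
    rw [show ((k + ((a:ℕ):Fin ℓ) + 1) = k + (((a+1:ℕ)):Fin ℓ)) by push_cast; ring,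
      add_right_inj]
    exact key b (a+1) (by omega) (by omega)
  have h2 : (k + ((a:ℕ):Fin ℓ) = k + ((b:ℕ):Fin ℓ) + 1) ↔ a = b + 1 := by
    rw [show ((k + ((b:ℕ):Fin ℓ) + 1) = k + (((b+1:ℕ)):Fin ℓ)) by push_cast; ring,
      add_right_inj]
    exact key a (b+1) (by omega) (by omega)
  rw [h1, h2]

lemma adjs' (k : Fin ℓ) {a b : ℕ} (ha : a ≤ 5) (hb : b ≤ 5) (h : b = a + 1 ∨ a = b + 1) :
    G.Adj (X.c (k + ((a : ℕ) : Fin ℓ))) (X.c (k + ((b : ℕ) : Fin ℓ))) :=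
  (X.adjs k ha hb).mpr h

lemma fix (X : STCtx G ℓ) (k : Fin ℓ) {n : ℕ} (h1 : 0 < n) (h2 : n < ℓ) : k + ((n : ℕ) : Fin ℓ) ≠ k := by
  have := X.ine k (a:=n) (b:=0) h2 (by omega) (by omega)
  simpa [X.s0] using this

lemma fix' (X : STCtx G ℓ) (k : Fin ℓ) {n : ℕ} (h1 : 0 < n) (h2 : n < ℓ) : k ≠ k + ((n : ℕ) : Fin ℓ) :=
  (X.fix k h1 h2).symm

lemma sscast (X : STCtx G ℓ) (k : Fin ℓ) (a b n : ℕ) (h : a + b = n) :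
    k + ((a : ℕ) : Fin ℓ) + ((b : ℕ) : Fin ℓ) = k + ((n : ℕ) : Fin ℓ) := by
  rw [X.ss, h]

lemma nadjs (k : Fin ℓ) {a b : ℕ} (ha : a ≤ 5) (hb : b ≤ 5) (h : ¬(b = a + 1 ∨ a = b + 1)) :
    ¬ G.Adj (X.c (k + ((a : ℕ) : Fin ℓ))) (X.c (k + ((b : ℕ) : Fin ℓ))) := by
  rw [X.adjs k ha hb]; exact h

end STCtx

namespace STCtx
variable {V : Type*} {G : SimpleGraph V} {ℓ : ℕ} [NeZero ℓ] (X : STCtx G ℓ)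

/-- house pattern: v adjacent to c k, c (k+2), c (k+3) but not c (k+1) -/
lemma houseA (v : V) (hv : ∀ i, v ≠ X.c i) (k : Fin ℓ)
    (h0 : G.Adj v (X.c k)) (h1 : ¬ G.Adj v (X.c (k + ((1:ℕ) : Fin ℓ))))
    (h2 : G.Adj v (X.c (k + ((2:ℕ) : Fin ℓ)))) (h3 : G.Adj v (X.c (k + ((3:ℕ) : Fin ℓ)))) :
    False := by
  have hl := X.hl
  refine no_house X.hh (X.c (k + ((2:ℕ) : Fin ℓ))) (X.c k) (X.c (k + ((3:ℕ) : Fin ℓ)))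
    (X.c (k + ((1:ℕ) : Fin ℓ))) v ?_ ?_ ?_ ?_ ?_ ?_ ?_ ?_ ?_ ?_ ?_ ?_ ?_ ?_
  · simpa [X.s0 k] using X.cne k (a:=2) (b:=0) (by omega) (by omega) (by omega)
  · simpa [X.s0 k] using X.cne k (a:=0) (b:=3) (by omega) (by omega) (by omega)
  · exact X.cne k (a:=3) (b:=1) (by omega) (by omega) (by omega)
  · exact fun h => hv _ h.symm
  · simpa [X.s0 k] using X.nadjs k (a:=2) (b:=0) (by omega) (by omega) (by omega)
  · simpa [X.s0 k] using X.nadjs k (a:=0) (b:=3) (by omega) (by omega) (by omega)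
  · exact X.nadjs k (a:=3) (b:=1) (by omega) (by omega) (by omega)
  · exact fun h => h1 h.symm
  · exact X.adjs' k (a:=2) (b:=3) (by omega) (by omega) (by omega)
  · exact X.adjs' k (a:=2) (b:=1) (by omega) (by omega) (by omega)
  · exact h2.symm
  · simpa [X.s0 k] using X.adjs' k (a:=0) (b:=1) (by omega) (by omega) (by omega)
  · exact h0.symm
  · exact h3.symm

/-- codart pattern B : triangle v,c k,c(k+1), pendant c(k+2), isolated c m -/
lemma codartB (v : V) (hv : ∀ i, v ≠ X.c i) (k m : Fin ℓ)
    (h0 : G.Adj v (X.c k)) (h1 : G.Adj v (X.c (k + ((1:ℕ) : Fin ℓ))))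
    (h2 : ¬ G.Adj v (X.c (k + ((2:ℕ) : Fin ℓ)))) (hm : ¬ G.Adj v (X.c m))
    (hm0 : m ≠ k) (hm1 : m ≠ k + ((1:ℕ) : Fin ℓ)) (hm2 : m ≠ k + ((2:ℕ) : Fin ℓ))
    (hm3 : m ≠ k + ((3:ℕ) : Fin ℓ)) (hmk : m + ((1:ℕ) : Fin ℓ) ≠ k) : False := by
  have hl := X.hl
  refine no_codart X.hc (X.c m) (X.c (k + ((2:ℕ) : Fin ℓ))) v (X.c k)
    (X.c (k + ((1:ℕ) : Fin ℓ))) h0 h1 ?_ ?_ ?_ ?_ ?_ ?_ ?_ ?_ ?_ ?_ ?_ ?_ ?_ ?_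
  · simpa [X.s0 k] using X.adjs' k (a:=0) (b:=1) (by omega) (by omega) (by omega)
  · exact X.adjs' k (a:=2) (b:=1) (by omega) (by omega) (by omega)
  · exact fun h => h2 h.symm
  · simpa [X.s0 k] using X.nadjs k (a:=2) (b:=0) (by omega) (by omega) (by omega)
  · exact fun h => hm h.symm
  · intro h
    rcases (X.adj m k).mp h with h' | h'
    · exact hmk (by push_cast at h' ⊢; linear_combination -h')
    · exact hm1 (by push_cast at h' ⊢; linear_combination h')
  · intro h
    rcases (X.adj m (k + ((1:ℕ) : Fin ℓ))).mp h with h' | h'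
    · exact hm0 (by push_cast at h' ⊢; linear_combination -h')
    · exact hm2 (by push_cast at h' ⊢; linear_combination h')
  · intro h
    rcases (X.adj m (k + ((2:ℕ) : Fin ℓ))).mp h with h' | h'
    · exact hm1 (by push_cast at h' ⊢; linear_combination -h')
    · exact hm3 (by push_cast at h' ⊢; linear_combination h')
  · exact fun h => hm2 (X.inj h)
  · exact fun h => hv _ h.symm
  · exact fun h => hm0 (X.inj h)
  · exact fun h => hm1 (X.inj h)
  · exact fun h => hv _ h.symm
  · simpa [X.s0 k] using X.cne k (a:=2) (b:=0) (by omega) (by omega) (by omega)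

/-- codart pattern C : triangle v,c k,c(k+1), far pendant c m, isolated c n -/
lemma codartC (v : V) (hv : ∀ i, v ≠ X.c i) (k m n : Fin ℓ)
    (h0 : G.Adj v (X.c k)) (h1 : G.Adj v (X.c (k + ((1:ℕ) : Fin ℓ))))
    (hm : G.Adj v (X.c m)) (hn : ¬ G.Adj v (X.c n))
    (hm0 : m ≠ k) (hm1 : m ≠ k + ((1:ℕ) : Fin ℓ)) (hm2 : m ≠ k + ((2:ℕ) : Fin ℓ))
    (hmk : m + ((1:ℕ) : Fin ℓ) ≠ k)
    (hn0 : n ≠ k) (hn1 : n ≠ k + ((1:ℕ) : Fin ℓ)) (hn2 : n ≠ k + ((2:ℕ) : Fin ℓ))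
    (hnk : n + ((1:ℕ) : Fin ℓ) ≠ k)
    (hnm : n ≠ m) (hnm1 : n ≠ m + ((1:ℕ) : Fin ℓ)) (hnm2 : n + ((1:ℕ) : Fin ℓ) ≠ m) : False := by
  have hl := X.hl
  refine no_codart X.hc (X.c n) (X.c m) (X.c k) (X.c (k + ((1:ℕ) : Fin ℓ))) v
    ?_ ?_ ?_ ?_ ?_ ?_ ?_ ?_ ?_ ?_ ?_ ?_ ?_ ?_ ?_ ?_
  · simpa [X.s0 k] using X.adjs' k (a:=0) (b:=1) (by omega) (by omega) (by omega)
  · exact h0.symm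
  · exact h1.symm
  · exact hm.symm
  · intro h
    rcases (X.adj m k).mp h with h' | h'
    · exact hmk (by push_cast at h' ⊢; linear_combination -h')
    · exact hm1 (by push_cast at h' ⊢; linear_combination h')
  · intro h
    rcases (X.adj m (k + ((1:ℕ) : Fin ℓ))).mp h with h' | h'
    · exact hm0 (by push_cast at h' ⊢; linear_combination -h')
    · exact hm2 (by push_cast at h' ⊢; linear_combination h')
  · intro h
    rcases (X.adj n k).mp h with h' | h'
    · exact hnk (by push_cast at h' ⊢; linear_combination -h')
    · exact hn1 (by push_cast at h' ⊢; linear_combination h')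
  · intro h
    rcases (X.adj n (k + ((1:ℕ) : Fin ℓ))).mp h with h' | h'
    · exact hn0 (by push_cast at h' ⊢; linear_combination -h')
    · exact hn2 (by push_cast at h' ⊢; linear_combination h')
  · exact fun h => hn h.symm
  · intro h
    rcases (X.adj n m).mp h with h' | h'
    · exact hnm2 (by push_cast at h' ⊢; linear_combination -h')
    · exact hnm1 (by push_cast at h' ⊢; linear_combination h')
  · exact fun h => hnm (X.inj h)
  · exact fun h => hn0 (X.inj h)
  · exact fun h => hn1 (X.inj h)
  · exact fun h => hv _ h.symm
  · exact fun h => hm0 (X.inj h)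
  · exact fun h => hm1 (X.inj h)

lemma step (v : V) (hv : ∀ i, v ≠ X.c i) (a : Fin ℓ)
    (h0 : G.Adj v (X.c a)) (h1 : G.Adj v (X.c (a + ((1:ℕ) : Fin ℓ)))) :
    G.Adj v (X.c (a + ((2:ℕ) : Fin ℓ))) := by
  have hl := X.hl
  by_contra h2
  have Bcons : ∀ m : Fin ℓ, ¬ G.Adj v (X.c m) →
      m = a + ((2:ℕ) : Fin ℓ) ∨ m = a + ((3:ℕ) : Fin ℓ) ∨ m + ((1:ℕ) : Fin ℓ) = a := by
    intro m hm
    by_contra hcon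
    push_neg at hcon
    obtain ⟨c1, c2, c3⟩ := hcon
    have hm0 : m ≠ a := fun h => hm (h ▸ h0)
    have hm1 : m ≠ a + ((1:ℕ) : Fin ℓ) := fun h => hm (h ▸ h1)
    exact X.codartB v hv a m h0 h1 h2 hm hm0 hm1 c1 c2 c3
  have h4 : G.Adj v (X.c (a + ((4:ℕ) : Fin ℓ))) := by
    by_contra h4
    rcases Bcons _ h4 with h' | h' | h'
    · exact X.ine a (a:=4) (b:=2) (by omega) (by omega) (by omega) h'
    · exact X.ine a (a:=4) (b:=3) (by omega) (by omega) (by omega) h'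
    · rw [X.sscast a 4 1 5 (by omega)] at h'
      exact X.fix a (n:=5) (by omega) (by omega) h'
  by_cases h3 : G.Adj v (X.c (a + ((3:ℕ) : Fin ℓ)))
  · refine X.houseA v hv (a + ((1:ℕ) : Fin ℓ)) h1 ?_ ?_ ?_
    · rw [X.sscast a 1 1 2 (by omega)]; exact h2
    · rw [X.sscast a 1 2 3 (by omega)]; exact h3
    · rw [X.sscast a 1 3 4 (by omega)]; exact h4
  · have h5 : G.Adj v (X.c (a + ((5:ℕ) : Fin ℓ))) := by
      by_contra h5
      rcases Bcons _ h5 with h' | h' | h'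
      · exact X.ine a (a:=5) (b:=2) (by omega) (by omega) (by omega) h'
      · exact X.ine a (a:=5) (b:=3) (by omega) (by omega) (by omega) h'
      · rw [X.sscast a 5 1 6 (by omega)] at h'
        exact X.fix a (n:=6) (by omega) (by omega) h'
    refine X.codartC v hv (a + ((4:ℕ) : Fin ℓ)) a (a + ((2:ℕ) : Fin ℓ)) h4 ?_ h0 h2
      ?_ ?_ ?_ ?_ ?_ ?_ ?_ ?_ ?_ ?_ ?_
    · rw [X.sscast a 4 1 5 (by omega)]; exact h5
    · exact X.fix' a (n:=4) (by omega) (by omega)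
    · rw [X.sscast a 4 1 5 (by omega)]; exact X.fix' a (n:=5) (by omega) (by omega)
    · rw [X.sscast a 4 2 6 (by omega)]; exact X.fix' a (n:=6) (by omega) (by omega)
    · exact X.ine a (a:=1) (b:=4) (by omega) (by omega) (by omega)
    · exact X.ine a (a:=2) (b:=4) (by omega) (by omega) (by omega)
    · rw [X.sscast a 4 1 5 (by omega)]
      exact X.ine a (a:=2) (b:=5) (by omega) (by omega) (by omega)
    · rw [X.sscast a 4 2 6 (by omega)]
      exact X.ine a (a:=2) (b:=6) (by omega) (by omega) (by omega)
    · rw [X.sscast a 2 1 3 (by omega)]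
      exact X.ine a (a:=3) (b:=4) (by omega) (by omega) (by omega)
    · exact X.fix a (n:=2) (by omega) (by omega)
    · exact X.ine a (a:=2) (b:=1) (by omega) (by omega) (by omega)
    · rw [X.sscast a 2 1 3 (by omega)]
      exact X.fix a (n:=3) (by omega) (by omega)

/-- a vertex off the cycle adjacent to two consecutive cycle vertices is complete to it -/
lemma complete_of_consec (v : V) (hv : ∀ i, v ≠ X.c i) (a : Fin ℓ)
    (h0 : G.Adj v (X.c a)) (h1 : G.Adj v (X.c (a + ((1:ℕ) : Fin ℓ)))) :
    ∀ j, G.Adj v (X.c j) := by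
  have key : ∀ n : ℕ, G.Adj v (X.c (a + ((n:ℕ) : Fin ℓ))) ∧
      G.Adj v (X.c (a + (((n+1:ℕ)) : Fin ℓ))) := by
    intro n
    induction n with
    | zero => exact ⟨by simpa [X.s0] using h0, h1⟩
    | succ n ih =>
      refine ⟨ih.2, ?_⟩
      have := X.step v hv (a + ((n:ℕ) : Fin ℓ)) ih.1
        (by rw [X.sscast a n 1 (n+1) rfl]; exact ih.2)
      rw [X.sscast a n 2 (n+2) rfl] at this
      rwa [show ((n:ℕ)+1+1) = (n+2:ℕ) from by omega]
  intro j
  have := (key ((j - a).val)).1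
  rw [Fin.cast_val_eq_self] at this
  rwa [add_comm, sub_add_cancel] at this

end STCtx

namespace STCtx
variable {V : Type*} {G : SimpleGraph V} {ℓ : ℕ} [NeZero ℓ] (X : STCtx G ℓ)

lemma parity (v : V) (hst : ∀ k, ¬(G.Adj v (X.c k) ∧ G.Adj v (X.c (k + ((1:ℕ) : Fin ℓ))))) :
    ∃ i, ¬ G.Adj v (X.c i) ∧ ¬ G.Adj v (X.c (i + ((1:ℕ) : Fin ℓ))) := by
  by_contra hcon
  push_neg at hcon
  have flip : ∀ i, G.Adj v (X.c (i + ((1:ℕ) : Fin ℓ))) ↔ ¬ G.Adj v (X.c i) :=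
    fun i => ⟨fun ha hb => hst i ⟨hb, ha⟩, hcon i⟩
  have key : ∀ n : ℕ, (G.Adj v (X.c ((0 : Fin ℓ) + ((n:ℕ) : Fin ℓ))) ↔
      (Even n ↔ G.Adj v (X.c ((0 : Fin ℓ) + ((0:ℕ) : Fin ℓ))))) := by
    intro n
    induction n with
    | zero => simp
    | succ n ih =>
      rw [← X.sscast 0 n 1 (n+1) rfl, flip, ih, Nat.even_add_one]
      tauto
  have hodd := X.hodd
  have := key ℓ
  rw [Fin.natCast_self] at this
  rw [← Nat.not_even_iff_odd] at hodd
  simp only [X.s0] at this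
  tauto

/-- no vertex off the cycle is complete to the cycle (uses primality) -/
lemma no_complete (x : V) (hx : ∀ i, x ≠ X.c i) (hcom : ∀ j, G.Adj x (X.c j)) : False := by
  have hl := X.hl
  set X0 : Set V := {w | (∀ i, w ≠ X.c i) ∧ ∀ j, G.Adj w (X.c j)} with hX0
  have hom : IsHomogeneousSet G X0ᶜ := by
    intro v hv'
    rw [Set.notMem_compl_iff] at hv'
    obtain ⟨hvr, hvc⟩ := hv'
    left
    intro w hw
    by_cases hwr : ∃ i, w = X.c i
    · obtain ⟨i, rfl⟩ := hwr; exact hvc i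
    push_neg at hwr
    have hwc : ¬ ∀ j, G.Adj w (X.c j) := fun hc => hw ⟨hwr, hc⟩
    have hstw : ∀ k, ¬(G.Adj w (X.c k) ∧ G.Adj w (X.c (k + ((1:ℕ) : Fin ℓ)))) :=
      fun k ⟨u1, u2⟩ => hwc (X.complete_of_consec w hwr k u1 u2)
    obtain ⟨i, hz0, hz1⟩ := X.parity w hstw
    obtain ⟨mo, hmo, hwm⟩ : ∃ mo : ℕ, (mo = 3 ∨ mo = 4) ∧
        ¬ G.Adj w (X.c (i + ((mo:ℕ) : Fin ℓ))) := by
      by_cases hm3 : G.Adj w (X.c (i + ((3:ℕ) : Fin ℓ)))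
      · refine ⟨4, Or.inr rfl, fun h4 => ?_⟩
        exact hstw (i + ((3:ℕ) : Fin ℓ)) ⟨hm3, by rw [X.sscast i 3 1 4 rfl]; exact h4⟩
      · exact ⟨3, Or.inl rfl, hm3⟩
    by_contra hvw
    refine no_codart X.hc w (X.c (i + ((mo:ℕ) : Fin ℓ))) (X.c i) (X.c (i + ((1:ℕ) : Fin ℓ))) v
      ?_ ?_ ?_ ?_ ?_ ?_ ?_ ?_ ?_ ?_ ?_ ?_ ?_ ?_ ?_ ?_
    · simpa [X.s0 i] using X.adjs' i (a:=0) (b:=1) (by omega) (by omega) (by omega)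
    · exact (hvc i).symm
    · exact (hvc _).symm
    · exact (hvc _).symm
    · simpa [X.s0 i] using X.nadjs i (a:=mo) (b:=0) (by omega) (by omega) (by omega)
    · exact X.nadjs i (a:=mo) (b:=1) (by omega) (by omega) (by omega)
    · exact hz0
    · exact hz1
    · exact fun h => hvw h.symm
    · exact hwm
    · exact hwr _
    · exact hwr _
    · exact hwr _
    · exact fun hEq => hw (hEq ▸ ⟨hvr, hvc⟩)
    · simpa [X.s0 i] using X.cne i (a:=mo) (b:=0) (by omega) (by omega) (by omega)
    · exact X.cne i (a:=mo) (b:=1) (by omega) (by omega) (by omega)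
  rcases X.hp _ hom with hemp | ⟨u, hu⟩ | huniv
  · have : X.c 0 ∈ X0ᶜ := by
      intro hmem
      exact hmem.1 0 rfl
    rw [hemp] at this
    exact this
  · have h0 : X.c ((0 : Fin ℓ) + ((0:ℕ) : Fin ℓ)) ∈ X0ᶜ := fun hmem => hmem.1 _ rfl
    have h1 : X.c ((0 : Fin ℓ) + ((1:ℕ) : Fin ℓ)) ∈ X0ᶜ := fun hmem => hmem.1 _ rfl
    rw [hu] at h0 h1
    have : X.c ((0 : Fin ℓ) + ((0:ℕ) : Fin ℓ)) = X.c ((0 : Fin ℓ) + ((1:ℕ) : Fin ℓ)) := by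
      rw [h0, h1]
    exact X.cne (0 : Fin ℓ) (a:=0) (b:=1) (by omega) (by omega) (by omega) this
  · have : x ∈ X0ᶜ := huniv ▸ Set.mem_univ x
    exact this ⟨hx, hcom⟩

/-- stability: off-cycle vertices have no two consecutive neighbours on the cycle -/
lemma stab (w : V) (hw : ∀ i, w ≠ X.c i) :
    ∀ k, ¬(G.Adj w (X.c k) ∧ G.Adj w (X.c (k + ((1:ℕ) : Fin ℓ)))) :=
  fun k ⟨u1, u2⟩ => X.no_complete w hw (X.complete_of_consec w hw k u1 u2)

lemma mixed (x y : V) (hx : ∀ i, x ≠ X.c i) (j k : Fin ℓ) (hyj : y = X.c j)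
    (hxy : G.Adj x y) (hxk : G.Adj x (X.c k)) (hyk : G.Adj y (X.c k)) : False := by
  subst hyj
  rcases (X.adj j k).mp hyk with h' | h'
  · exact X.stab x hx j ⟨hxy,
      by rw [show j + ((1:ℕ) : Fin ℓ) = k from by push_cast; linear_combination -h']; exact hxk⟩
  · exact X.stab x hx k ⟨hxk,
      by rw [show k + ((1:ℕ) : Fin ℓ) = j from by push_cast; linear_combination -h']; exact hxy⟩

end STCtx

namespace STCtx
variable {V : Type*} {G : SimpleGraph V} {ℓ : ℕ} [NeZero ℓ] (X : STCtx G ℓ)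

/-- helper for stability in shifted form -/
lemma stab2 (x : V) (hx : ∀ i, x ≠ X.c i) (b : Fin ℓ) {a a' : ℕ} (h : a + 1 = a')
    (h1 : G.Adj x (X.c (b + ((a:ℕ) : Fin ℓ)))) :
    ¬ G.Adj x (X.c (b + ((a':ℕ) : Fin ℓ))) := by
  intro h2
  exact X.stab x hx (b + ((a:ℕ) : Fin ℓ)) ⟨h1, by rw [X.sscast b a 1 a' h]; exact h2⟩

lemma L3core (x y : V) (hx : ∀ i, x ≠ X.c i) (hy : ∀ i, y ≠ X.c i) (b : Fin ℓ)
    (hxy : G.Adj x y)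
    (hx1 : G.Adj x (X.c (b + ((1:ℕ) : Fin ℓ)))) (hy1 : G.Adj y (X.c (b + ((1:ℕ) : Fin ℓ))))
    (hA : G.Adj x (X.c (b + ((3:ℕ) : Fin ℓ)))) : False := by
  have hl := X.hl
  have hnx2 : ¬ G.Adj x (X.c (b + ((2:ℕ) : Fin ℓ))) := X.stab2 x hx b rfl hx1
  have hny2 : ¬ G.Adj y (X.c (b + ((2:ℕ) : Fin ℓ))) := X.stab2 y hy b rfl hy1
  have hnx4 : ¬ G.Adj x (X.c (b + ((4:ℕ) : Fin ℓ))) := X.stab2 x hx b rfl hA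
  have cov2 : G.Adj x (X.c (b + ((4:ℕ) : Fin ℓ))) ∨ G.Adj y (X.c (b + ((4:ℕ) : Fin ℓ))) := by
    by_contra hcon
    push_neg at hcon
    obtain ⟨u1, u2⟩ := hcon
    refine no_codart X.hc (X.c (b + ((4:ℕ) : Fin ℓ))) (X.c (b + ((2:ℕ) : Fin ℓ))) x y
      (X.c (b + ((1:ℕ) : Fin ℓ))) hxy hx1 hy1 ?_ ?_ ?_ ?_ ?_ ?_ ?_ ?_ ?_ ?_ ?_ ?_ ?_
    · exact X.adjs' (k:=b) (a:=2) (b:=1) (by omega) (by omega) (by omega)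
    · exact fun h => hnx2 h.symm
    · exact fun h => hny2 h.symm
    · exact fun h => u1 h.symm
    · exact fun h => u2 h.symm
    · exact X.nadjs (k:=b) (a:=4) (b:=1) (by omega) (by omega) (by omega)
    · exact X.nadjs (k:=b) (a:=4) (b:=2) (by omega) (by omega) (by omega)
    · exact X.cne (k:=b) (a:=4) (b:=2) (by omega) (by omega) (by omega)
    · exact fun h => hx _ h.symm
    · exact fun h => hy _ h.symm
    · exact X.cne (k:=b) (a:=4) (b:=1) (by omega) (by omega) (by omega)
    · exact fun h => hx _ h.symm
    · exact fun h => hy _ h.symm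
  have hy4 : G.Adj y (X.c (b + ((4:ℕ) : Fin ℓ))) := by
    rcases cov2 with h | h
    · exact absurd h hnx4
    · exact h
  have hny3 : ¬ G.Adj y (X.c (b + ((3:ℕ) : Fin ℓ))) := by
    intro h
    exact X.stab2 y hy b rfl h hy4
  exact no_house X.hh x (X.c (b + ((4:ℕ) : Fin ℓ))) (X.c (b + ((1:ℕ) : Fin ℓ)))
    (X.c (b + ((3:ℕ) : Fin ℓ))) y
    (fun h => hx _ h)
    (X.cne (k:=b) (a:=4) (b:=1) (by omega) (by omega) (by omega))
    (X.cne (k:=b) (a:=1) (b:=3) (by omega) (by omega) (by omega))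
    (fun h => hy _ h.symm)
    hnx4
    (X.nadjs (k:=b) (a:=4) (b:=1) (by omega) (by omega) (by omega))
    (X.nadjs (k:=b) (a:=1) (b:=3) (by omega) (by omega) (by omega))
    (fun h => hny3 h.symm)
    hx1 hA hxy
    (X.adjs' (k:=b) (a:=4) (b:=3) (by omega) (by omega) (by omega))
    hy4.symm hy1.symm

/-- no edge of G has a common neighbour on the cycle -/
lemma no_common (x y : V) (k : Fin ℓ) (hxy : G.Adj x y)
    (hxk : G.Adj x (X.c k)) (hyk : G.Adj y (X.c k)) : False := by
  have hl := X.hl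
  by_cases hxr : ∃ j, x = X.c j
  · obtain ⟨j, rfl⟩ := hxr
    by_cases hyr : ∃ m, y = X.c m
    · obtain ⟨m, rfl⟩ := hyr
      rcases (X.adj j k).mp hxk with h2 | h2 <;> rcases (X.adj m k).mp hyk with h3 | h3
      · -- k = j+1, k = m+1
        exact hxy.ne (congrArg X.c (add_right_cancel (h2 ▸ h3 : j + 1 = m + 1)).symm ▸ rfl)
      · -- k = j+1, m = k+1
        rw [show m = j + ((2:ℕ) : Fin ℓ) from by push_cast; linear_combination h2 + h3] at hxy
        exact X.nadjs (k:=j) (a:=0) (b:=2) (by omega) (by omega) (by omega)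
          (by simpa [X.s0] using hxy)
      · -- j = k+1, k = m+1
        rw [show j = m + ((2:ℕ) : Fin ℓ) from by push_cast; linear_combination h2 + h3] at hxy
        exact X.nadjs (k:=m) (a:=2) (b:=0) (by omega) (by omega) (by omega)
          (by simpa [X.s0] using hxy)
      · -- j = k+1, m = k+1
        exact hxy.ne (congrArg X.c (h2.trans h3.symm) ▸ rfl)
    · push_neg at hyr
      exact X.mixed y (X.c j) hyr j k rfl hxy.symm hyk hxk
  · push_neg at hxr
    by_cases hyr : ∃ m, y = X.c m
    · obtain ⟨m, rfl⟩ := hyr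
      exact X.mixed x (X.c m) hxr m k rfl hxy hxk hyk
    · push_neg at hyr
      set b := k - (1 : Fin ℓ) with hbdef
      have hb : b + ((1:ℕ) : Fin ℓ) = k := by push_cast; exact sub_add_cancel k 1
      rw [← hb] at hxk hyk
      have cov1 : G.Adj x (X.c (b + ((3:ℕ) : Fin ℓ))) ∨ G.Adj y (X.c (b + ((3:ℕ) : Fin ℓ))) := by
        by_contra hcon
        push_neg at hcon
        obtain ⟨u1, u2⟩ := hcon
        refine no_codart X.hc (X.c (b + ((3:ℕ) : Fin ℓ))) (X.c (b + ((0:ℕ) : Fin ℓ))) x y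
          (X.c (b + ((1:ℕ) : Fin ℓ))) hxy hxk hyk ?_ ?_ ?_ ?_ ?_ ?_ ?_ ?_ ?_ ?_ ?_ ?_ ?_
        · exact X.adjs' (k:=b) (a:=0) (b:=1) (by omega) (by omega) (by omega)
        · intro h
          exact X.stab x hxr (b + ((0:ℕ) : Fin ℓ))
            ⟨h.symm, by rw [X.sscast b 0 1 1 rfl]; exact hxk⟩
        · intro h
          exact X.stab y hyr (b + ((0:ℕ) : Fin ℓ))
            ⟨h.symm, by rw [X.sscast b 0 1 1 rfl]; exact hyk⟩
        · exact fun h => u1 h.symm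
        · exact fun h => u2 h.symm
        · exact X.nadjs (k:=b) (a:=3) (b:=1) (by omega) (by omega) (by omega)
        · exact X.nadjs (k:=b) (a:=3) (b:=0) (by omega) (by omega) (by omega)
        · exact X.cne (k:=b) (a:=3) (b:=0) (by omega) (by omega) (by omega)
        · exact fun h => hxr _ h.symm
        · exact fun h => hyr _ h.symm
        · exact X.cne (k:=b) (a:=3) (b:=1) (by omega) (by omega) (by omega)
        · exact fun h => hxr _ h.symm
        · exact fun h => hyr _ h.symm
      rcases cov1 with h | h
      · exact X.L3core x y hxr hyr b hxy hxk hyk h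
      · exact X.L3core y x hyr hxr b hxy.symm hyk hxk h

/-- no triangle has a vertex on the cycle -/
lemma no_tri_on_C (x y z : V) (j : Fin ℓ) (hxy : G.Adj x y) (hxz : G.Adj x z)
    (hyz : G.Adj y z) (hx : x = X.c j) : False := by
  subst hx
  exact X.no_common y z j hyz hxy.symm hxz.symm

lemma L4b_core (a b t : V) (k : Fin ℓ)
    (hab : G.Adj a b) (hat : G.Adj a t) (hbt : G.Adj b t)
    (ha : ∀ i, a ≠ X.c i) (hb : ∀ i, b ≠ X.c i) (ht : ∀ i, t ≠ X.c i)
    (ha2 : G.Adj a (X.c (k + ((2:ℕ) : Fin ℓ)))) (hb3 : G.Adj b (X.c (k + ((3:ℕ) : Fin ℓ)))) :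
    False := by
  have hl := X.hl
  have hnb2 : ¬ G.Adj b (X.c (k + ((2:ℕ) : Fin ℓ))) := fun h => X.no_common a b _ hab ha2 h
  have hnt2 : ¬ G.Adj t (X.c (k + ((2:ℕ) : Fin ℓ))) := fun h => X.no_common a t _ hat ha2 h
  have hna3 : ¬ G.Adj a (X.c (k + ((3:ℕ) : Fin ℓ))) := fun h => X.no_common a b _ hab h hb3
  have hnt3 : ¬ G.Adj t (X.c (k + ((3:ℕ) : Fin ℓ))) := fun h => X.no_common b t _ hbt hb3 h
  exact no_house X.hh a (X.c (k + ((3:ℕ) : Fin ℓ))) t (X.c (k + ((2:ℕ) : Fin ℓ))) b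
    (fun h => ha _ h)
    (fun h => ht _ h.symm)
    (fun h => ht _ h)
    (fun h => hb _ h.symm)
    hna3
    (fun h => hnt3 h.symm)
    hnt2
    (fun h => hnb2 h.symm)
    hat ha2 hab
    (X.adjs' (k:=k) (a:=3) (b:=2) (by omega) (by omega) (by omega))
    hb3.symm hbt.symm

/-- triangles are anticomplete to the cycle -/
lemma tri_anti (x y z : V) (hxy : G.Adj x y) (hxz : G.Adj x z) (hyz : G.Adj y z)
    (k : Fin ℓ) (hxk : G.Adj x (X.c k)) : False := by
  have hl := X.hl
  have hx : ∀ i, x ≠ X.c i := fun i h => X.no_tri_on_C x y z i hxy hxz hyz h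
  have hy : ∀ i, y ≠ X.c i := fun i h => X.no_tri_on_C y x z i hxy.symm hyz hxz h
  have hz : ∀ i, z ≠ X.c i := fun i h => X.no_tri_on_C z x y i hxz.symm hyz.symm hxy h
  have cover : ∀ m : Fin ℓ, m ≠ k → m ≠ k + ((1:ℕ) : Fin ℓ) → m + ((1:ℕ) : Fin ℓ) ≠ k →
      (G.Adj x (X.c m) ∨ G.Adj y (X.c m) ∨ G.Adj z (X.c m)) := by
    intro m hm0 hm1 hmk
    by_contra hcon
    push_neg at hcon
    obtain ⟨u1, u2, u3⟩ := hcon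
    refine no_codart X.hc (X.c m) (X.c k) y z x hyz hxy.symm hxz.symm hxk.symm
      (fun h => X.no_common x y k hxy hxk h.symm)
      (fun h => X.no_common x z k hxz hxk h.symm)
      (fun h => u2 h.symm) (fun h => u3 h.symm) (fun h => u1 h.symm)
      ?_ (fun h => hm0 (X.inj h)) (fun h => hy _ h.symm) (fun h => hz _ h.symm)
      (fun h => hx _ h.symm) (fun h => hy _ h.symm) (fun h => hz _ h.symm)
    intro h
    rcases (X.adj m k).mp h with h' | h'
    · exact hmk (by push_cast at h' ⊢; linear_combination -h')
    · exact hm1 (by push_cast at h' ⊢; linear_combination h')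
  have o2 := cover (k + ((2:ℕ) : Fin ℓ))
    (X.fix k (n:=2) (by omega) (by omega))
    (X.ine k (a:=2) (b:=1) (by omega) (by omega) (by omega))
    (by rw [X.sscast k 2 1 3 rfl]; exact X.fix k (n:=3) (by omega) (by omega))
  have o3 := cover (k + ((3:ℕ) : Fin ℓ))
    (X.fix k (n:=3) (by omega) (by omega))
    (X.ine k (a:=3) (b:=1) (by omega) (by omega) (by omega))
    (by rw [X.sscast k 3 1 4 rfl]; exact X.fix k (n:=4) (by omega) (by omega))
  rcases o2 with h2 | h2 | h2 <;> rcases o3 with h3 | h3 | h3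
  · exact X.stab2 x hx k rfl h2 h3
  · exact X.L4b_core x y z k hxy hxz hyz hx hy hz h2 h3
  · exact X.L4b_core x z y k hxz hxy hyz.symm hx hz hy h2 h3
  · exact X.L4b_core y x z k hxy.symm hyz hxz hy hx hz h2 h3
  · exact X.stab2 y hy k rfl h2 h3
  · exact X.L4b_core y z x k hyz hxy.symm hxz.symm hy hz hx h2 h3
  · exact X.L4b_core z x y k hxz.symm hyz.symm hxy hz hx hy h2 h3
  · exact X.L4b_core z y x k hyz.symm hxz.symm hxy.symm hz hy hx h2 h3
  · exact X.stab2 z hz k rfl h2 h3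

include X

/-- no vertex is adjacent to exactly one vertex of a triangle -/
lemma no_private (x y z w : V) (hxy : G.Adj x y) (hxz : G.Adj x z) (hyz : G.Adj y z)
    (hwx : G.Adj w x) (hnwy : ¬ G.Adj w y) (hnwz : ¬ G.Adj w z)
    (hwy : w ≠ y) (hwz : w ≠ z) : False := by
  have hx : ∀ i, x ≠ X.c i := fun i h => X.no_tri_on_C x y z i hxy hxz hyz h
  have hy : ∀ i, y ≠ X.c i := fun i h => X.no_tri_on_C y x z i hxy.symm hyz hxz h
  have hz : ∀ i, z ≠ X.c i := fun i h => X.no_tri_on_C z x y i hxz.symm hyz.symm hxy h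
  have hwr : ∀ i, w ≠ X.c i := fun i h =>
    X.tri_anti x y z hxy hxz hyz i ((h ▸ hwx).symm)
  obtain ⟨m, hm⟩ : ∃ m, ¬ G.Adj w (X.c m) := by
    by_contra h
    push_neg at h
    exact X.no_complete w hwr h
  exact no_codart X.hc (X.c m) w y z x hyz hxy.symm hxz.symm hwx hnwy hnwz
    (fun h => X.tri_anti y x z hxy.symm hyz hxz m h.symm)
    (fun h => X.tri_anti z x y hxz.symm hyz.symm hxy m h.symm)
    (fun h => X.tri_anti x y z hxy hxz hyz m h.symm)
    (fun h => hm h.symm)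
    (fun h => hwr m h.symm)
    (fun h => hy m h.symm)
    (fun h => hz m h.symm)
    (fun h => hx m h.symm)
    hwy hwz

end STCtx

/-- A prime (house, co-dart)-free graph containing an induced odd cycle of length
at least 7 is triangle-free. -/
theorem stmt0 {V : Type*} [Fintype V] (G : SimpleGraph V)
    (hprime : IsPrime G) (hhouse : _root_.Free G house) (hcodart : _root_.Free G codart)
    (ℓ : ℕ) (hℓ : 7 ≤ ℓ) (hodd : Odd ℓ)
    (hhole : Nonempty (cycleGraph ℓ ↪g G)) :
    G.CliqueFree 3 := by
  classical
  obtain ⟨n, rfl⟩ : ∃ n, ℓ = n + 2 := ⟨ℓ - 2, by omega⟩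
  haveI : NeZero (n + 2) := ⟨by omega⟩
  obtain ⟨e⟩ := hhole
  have X : STCtx G (n + 2) :=
    { c := fun i => e i
      hl := hℓ
      hodd := hodd
      inj := e.injective
      adj := by
        intro i j
        rw [show G.Adj (e i) (e j) ↔ (cycleGraph (n+2)).Adj i j from e.map_rel_iff]
        rw [cycleGraph_adj]
        constructor
        · rintro (h | h)
          · right
            rw [sub_eq_iff_eq_add] at h
            rw [h]; exact add_comm 1 j
          · left
            rw [sub_eq_iff_eq_add] at h
            rw [h]; exact add_comm 1 i
        · rintro (h | h)
          · right
            rw [h]; ring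
          · left
            rw [h]; ring
      hh := hhouse
      hc := hcodart
      hp := hprime }
  intro s hs
  rw [SimpleGraph.is3Clique_iff] at hs
  obtain ⟨x, y, z, hxy, hxz, hyz, rfl⟩ := hs
  -- the triangle-edge graph
  let T : SimpleGraph V :=
    { Adj := fun u v => G.Adj u v ∧ ∃ t, G.Adj u t ∧ G.Adj v t
      symm := ⟨fun u v ⟨h, t, h1, h2⟩ => ⟨h.symm, t, h2, h1⟩⟩
      loopless := ⟨fun u ⟨h, _⟩ => G.loopless.irrefl u h⟩ }
  set S : Set V := {u | T.Reachable x u} with hS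
  have key : ∀ w, w ∉ S → ∀ u v', T.Reachable x u → T.Adj u v' →
      (G.Adj w u ↔ G.Adj w v') := by
    intro w hw u v' hru huv'
    obtain ⟨huv, t, hut, hvt⟩ := huv'
    have hv : v' ∈ S := hru.trans (SimpleGraph.Adj.reachable ⟨huv, t, hut, hvt⟩)
    have ht : t ∈ S := hru.trans (SimpleGraph.Adj.reachable ⟨hut, v', huv, hvt.symm⟩)
    constructor
    · intro hwu
      by_contra hwv
      by_cases hwt : G.Adj w t
      · exact hw (hru.trans (SimpleGraph.Adj.reachable ⟨hwu.symm, t, hut, hwt⟩))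
      · exact X.no_private u v' t w huv hut hvt hwu hwv hwt
          (fun h => hw (h ▸ hv)) (fun h => hw (h ▸ ht))
    · intro hwv
      by_contra hwu
      by_cases hwt : G.Adj w t
      · exact hw (hv.trans (SimpleGraph.Adj.reachable ⟨hwv.symm, t, hvt, hwt⟩))
      · exact X.no_private v' u t w huv.symm hvt hut hwv hwu hwt
          (fun h => hw (h ▸ hru)) (fun h => hw (h ▸ ht))
  have walkIff : ∀ w, w ∉ S → ∀ (u v' : V) (p : T.Walk u v'), T.Reachable x u →
      (G.Adj w u ↔ G.Adj w v') := by
    intro w hw u v' p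
    induction p with
    | nil => exact fun _ => Iff.rfl
    | cons h q ih =>
      intro hra
      exact (key w hw _ _ hra h).trans (ih (hra.trans h.reachable))
  have hom : IsHomogeneousSet G S := by
    intro w hw
    by_cases hwx : G.Adj w x
    · left
      intro s hs
      obtain ⟨p⟩ := (hs : T.Reachable x s)
      exact (walkIff w hw x s p (SimpleGraph.Reachable.refl x)).mp hwx
    · right
      intro s hs ha
      obtain ⟨p⟩ := (hs : T.Reachable x s)
      exact hwx ((walkIff w hw x s p (SimpleGraph.Reachable.refl x)).mpr ha)
  have hxS : x ∈ S := SimpleGraph.Reachable.refl x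
  have hyS : y ∈ S := SimpleGraph.Adj.reachable ⟨hxy, z, hxz, hyz⟩
  have hc0 : X.c 0 ∉ S := by
    intro hmem
    obtain ⟨p⟩ := (hmem : T.Reachable x (X.c 0)).symm
    cases p with
    | nil => exact X.no_tri_on_C (X.c 0) y z 0 hxy hxz hyz rfl
    | cons h q =>
      obtain ⟨hadj, t, h1, h2⟩ := h
      exact X.no_tri_on_C (X.c 0) _ t 0 hadj h1 h2 rfl
  rcases hprime S hom with hemp | ⟨u, hu⟩ | huniv
  · rw [hemp] at hxS
    exact hxS
  · rw [hu] at hxS hyS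
    exact hxy.ne (hxS.trans hyS.symm)
  · exact hc0 (huniv ▸ Set.mem_univ _)
end

section
/- Let G be a prime (house, co-dart)-free graph containing an induced odd cycle C of length ℓ ≥ 7, realized by nonempty pairwise disjoint vertex sets A_1,...,A_ℓ where A_i is complete to A_{i+1} (indices mod ℓ) with no other edges between distinct sets, chosen so that A = A_1 ∪ ... ∪ A_ℓ is inclusionwise maximal. Then each A_i is a stable (independent) set. -/
open SimpleGraph

lemma zmod_add_ne' {ℓ : ℕ} (hℓ : 7 ≤ ℓ) (i : ZMod ℓ) (a b : ℕ) (hab : a < b) (hb : b < 7) :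
    i + (a : ZMod ℓ) ≠ i + b := by
  haveI : NeZero ℓ := ⟨by omega⟩
  intro h
  have h2 : (a : ZMod ℓ) = b := add_left_cancel h
  have h3 : ((b - a : ℕ) : ZMod ℓ) = 0 := by
    push_cast [Nat.cast_sub hab.le]
    rw [← h2]; simp
  rw [ZMod.natCast_eq_zero_iff] at h3
  have := Nat.le_of_dvd (by omega) h3
  omega

/-- In a prime (house, co-dart)-free graph with a maximal blowup realization of an odd
cycle of length `ℓ ≥ 7`, each part `A i` is a stable set. -/
theorem stmt1 {V : Type*} [Fintype V] (G : SimpleGraph V)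
    (hprime : IsPrime G) (hhouse : _root_.Free G house) (hcodart : _root_.Free G codart)
    (ℓ : ℕ) (hℓ : 7 ≤ ℓ) (hodd : Odd ℓ)
    (A : ZMod ℓ → Set V) (hA : CycleBlowup G A)
    (hmax : ∀ A' : ZMod ℓ → Set V, CycleBlowup G A' →
      (⋃ i, A i) ⊆ (⋃ i, A' i) → (⋃ i, A i) = (⋃ i, A' i)) :
    ∀ i, (A i).Pairwise (fun x y => ¬ G.Adj x y) := by
  intro i x hx y hy hne hadj
  obtain ⟨hnonem, hdisj, hcomp, hanti⟩ := hA
  obtain ⟨b, hb⟩ := hnonem (i + 1)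
  obtain ⟨c, hc⟩ := hnonem (i + 2)
  obtain ⟨d, hd⟩ := hnonem (i + 4)
  have key : ∀ a b : ℕ, a < b → b < 7 → i + (a : ZMod ℓ) ≠ i + b :=
    fun a b h1 h2 => zmod_add_ne' hℓ i a b h1 h2
  have e01 : i ≠ i + 1 := by simpa using key 0 1 (by norm_num) (by norm_num)
  have e02 : i ≠ i + 2 := by simpa using key 0 2 (by norm_num) (by norm_num)
  have e03 : i ≠ i + 3 := by simpa using key 0 3 (by norm_num) (by norm_num)
  have e04 : i ≠ i + 4 := by simpa using key 0 4 (by norm_num) (by norm_num)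
  have e05 : i ≠ i + 5 := by simpa using key 0 5 (by norm_num) (by norm_num)
  have e12 : i + 1 ≠ i + 2 := by simpa using key 1 2 (by norm_num) (by norm_num)
  have e14 : i + 1 ≠ i + 4 := by simpa using key 1 4 (by norm_num) (by norm_num)
  have e15 : i + 1 ≠ i + 5 := by simpa using key 1 5 (by norm_num) (by norm_num)
  have e24 : i + 2 ≠ i + 4 := by simpa using key 2 4 (by norm_num) (by norm_num)
  have e25 : i + 2 ≠ i + 5 := by simpa using key 2 5 (by norm_num) (by norm_num)
  have e34 : i + 3 ≠ i + 4 := by simpa using key 3 4 (by norm_num) (by norm_num)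
  have h45 : (i + 4) + 1 = i + 5 := by ring
  have h23 : (i + 2) + 1 = i + 3 := by ring
  have h12 : (i + 1) + 1 = i + 2 := by ring
  have dne : ∀ j k : ZMod ℓ, j ≠ k → ∀ u ∈ A j, ∀ v ∈ A k, u ≠ v :=
    fun j k hjk u hu v hv huv => Set.disjoint_left.mp (hdisj j k hjk) hu (huv ▸ hv)
  have nxb : x ≠ b := dne i (i+1) e01 x hx b hb
  have nyb : y ≠ b := dne i (i+1) e01 y hy b hb
  have nxc : x ≠ c := dne i (i+2) e02 x hx c hc
  have nyc : y ≠ c := dne i (i+2) e02 y hy c hc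
  have nxd : x ≠ d := dne i (i+4) e04 x hx d hd
  have nyd : y ≠ d := dne i (i+4) e04 y hy d hd
  have nbc : b ≠ c := dne (i+1) (i+2) e12 b hb c hc
  have nbd : b ≠ d := dne (i+1) (i+4) e14 b hb d hd
  have ncd : c ≠ d := dne (i+2) (i+4) e24 c hc d hd
  have hxb : G.Adj x b := hcomp i x hx b hb
  have hyb : G.Adj y b := hcomp i y hy b hb
  have hbc : G.Adj b c := hcomp (i+1) b hb c (h12 ▸ hc)
  have hxc : ¬ G.Adj x c := hanti i (i+2) e02 e12.symm (by rw [h23]; exact e03) x hx c hc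
  have hyc : ¬ G.Adj y c := hanti i (i+2) e02 e12.symm (by rw [h23]; exact e03) y hy c hc
  have hxd : ¬ G.Adj x d := hanti i (i+4) e04 e14.symm (by rw [h45]; exact e05) x hx d hd
  have hyd : ¬ G.Adj y d := hanti i (i+4) e04 e14.symm (by rw [h45]; exact e05) y hy d hd
  have hbd : ¬ G.Adj b d := hanti (i+1) (i+4) e14 (by rw [h12]; exact e24.symm) (by rw [h45]; exact e15) b hb d hd
  have hcd : ¬ G.Adj c d := hanti (i+2) (i+4) e24 (by rw [h23]; exact e34.symm) (by rw [h45]; exact e25) c hc d hd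
  have hcx : ¬ G.Adj c x := fun h => hxc h.symm
  have hcy : ¬ G.Adj c y := fun h => hyc h.symm
  have hdx : ¬ G.Adj d x := fun h => hxd h.symm
  have hdy : ¬ G.Adj d y := fun h => hyd h.symm
  have hdb : ¬ G.Adj d b := fun h => hbd h.symm
  have hdc : ¬ G.Adj d c := fun h => hcd h.symm
  clear hprime hhouse hmax hodd key e01 e02 e03 e04 e05 e12 e14 e15 e24 e25 e34 h45 h23 h12 dne hdisj hcomp hanti hnonem hx hy hb hc hd hℓ
  refine hcodart ⟨⟨⟨![d, c, x, y, b], ?_⟩, ?_⟩⟩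
  · intro u v huv
    fin_cases u <;> fin_cases v <;>
      simp_all [ncd.symm, nxd.symm, nyd.symm, nbd.symm, nxc.symm, nyc.symm, nbc.symm,
        hne.symm, nxb, nyb]
  · intro u v
    show G.Adj (![d, c, x, y, b] u) (![d, c, x, y, b] v) ↔ _
    fin_cases u <;> fin_cases v <;>
      simp_all [codart, dart, hadj.symm, hxb.symm, hyb.symm, hbc.symm] <;> decide
end

section
/- Let G be a prime (house, bull)-free graph that contains an induced P5 or C5, realized by nonempty pairwise disjoint sets A_1,...,A_5 with A_i complete to A_{i+1} for i=1,...,4, A_i anticomplete to A_{i+2} (mod 5), and A_5 either complete or anticomplete to A_1, chosen with A = A_1∪...∪A_5 inclusionwise maximal. Then for any vertex v outside A that is not complete to A, and any i, v is anticomplete to at least one of A_i and A_{i+1} (indices mod 5 over the adjacent pairs). -/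
open SimpleGraph

/-- A realization of an induced `P5` or `C5` by nonempty pairwise disjoint sets
`A 0, ..., A 4`: consecutive sets complete, sets at distance two (mod 5) anticomplete,
and `A 4` either complete or anticomplete to `A 0`. -/
def PathOrCycleBlowup5 {V : Type*} (G : SimpleGraph V) (A : Fin 5 → Set V) : Prop :=
  (∀ i, (A i).Nonempty) ∧
  (∀ i j, i ≠ j → Disjoint (A i) (A j)) ∧
  (∀ i : Fin 5, i ≠ 4 → ∀ x ∈ A i, ∀ y ∈ A (i + 1), G.Adj x y) ∧
  (∀ i : Fin 5, ∀ x ∈ A i, ∀ y ∈ A (i + 2), ¬ G.Adj x y) ∧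
  ((∀ x ∈ A 4, ∀ y ∈ A 0, G.Adj x y) ∨ (∀ x ∈ A 4, ∀ y ∈ A 0, ¬ G.Adj x y))


/-! ### Auxiliary machinery -/

section Aux

variable {V : Type*} {G : SimpleGraph V}

private def pick {V : Type*} (a b c d e : V) : Fin 5 → V
  | 0 => a | 1 => b | 2 => c | 3 => d | 4 => e

instance : DecidableRel bull.Adj := fun i j =>
  decidable_of_iff' _ (SimpleGraph.fromRel_adj _ i j)

instance : DecidableRel (SimpleGraph.pathGraph 5).Adj := fun _ _ =>
  decidable_of_iff' _ SimpleGraph.pathGraph_adj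

instance : DecidableRel house.Adj := fun i j =>
  decidable_of_iff' _ (SimpleGraph.compl_adj (SimpleGraph.pathGraph 5) i j)

lemma bull_ctr (hbull : _root_.Free G bull) (a b c d e : V)
    (hae : a ≠ e) (hbd : b ≠ d) (hcd : c ≠ d) (hce : c ≠ e) (hde : d ≠ e)
    (e01 : G.Adj a b) (e12 : G.Adj b c) (e02 : G.Adj a c) (e03 : G.Adj a d)
    (e14 : G.Adj b e)
    (n04 : ¬ G.Adj a e) (n13 : ¬ G.Adj b d) (n23 : ¬ G.Adj c d) (n24 : ¬ G.Adj c e)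
    (n34 : ¬ G.Adj d e) : False := by
  have hab := e01.ne; have hbc := e12.ne; have hac := e02.ne
  have had := e03.ne; have hbe := e14.ne
  apply hbull
  refine ⟨⟨⟨pick a b c d e, ?_⟩, ?_⟩⟩
  · intro i j hij
    fin_cases i <;> fin_cases j <;>
      first
        | rfl
        | exact absurd hij hab | exact absurd hij hab.symm
        | exact absurd hij hac | exact absurd hij hac.symm
        | exact absurd hij had | exact absurd hij had.symm
        | exact absurd hij hae | exact absurd hij hae.symm
        | exact absurd hij hbc | exact absurd hij hbc.symm
        | exact absurd hij hbd | exact absurd hij hbd.symm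
        | exact absurd hij hbe | exact absurd hij hbe.symm
        | exact absurd hij hcd | exact absurd hij hcd.symm
        | exact absurd hij hce | exact absurd hij hce.symm
        | exact absurd hij hde | exact absurd hij hde.symm
  · intro i j
    fin_cases i <;> fin_cases j <;>
      first
        | exact iff_of_false (G.loopless.irrefl _) (by decide)
        | exact iff_of_true e01 (by decide) | exact iff_of_true e01.symm (by decide)
        | exact iff_of_true e12 (by decide) | exact iff_of_true e12.symm (by decide)
        | exact iff_of_true e02 (by decide) | exact iff_of_true e02.symm (by decide)
        | exact iff_of_true e03 (by decide) | exact iff_of_true e03.symm (by decide)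
        | exact iff_of_true e14 (by decide) | exact iff_of_true e14.symm (by decide)
        | exact iff_of_false n04 (by decide) | exact iff_of_false (fun h => n04 h.symm) (by decide)
        | exact iff_of_false n13 (by decide) | exact iff_of_false (fun h => n13 h.symm) (by decide)
        | exact iff_of_false n23 (by decide) | exact iff_of_false (fun h => n23 h.symm) (by decide)
        | exact iff_of_false n24 (by decide) | exact iff_of_false (fun h => n24 h.symm) (by decide)
        | exact iff_of_false n34 (by decide) | exact iff_of_false (fun h => n34 h.symm) (by decide)

lemma house_ctr (hhouse : _root_.Free G house) (a b c d e : V)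
    (hab : a ≠ b) (hbc : b ≠ c) (hcd : c ≠ d) (hde : d ≠ e)
    (e02 : G.Adj a c) (e03 : G.Adj a d) (e04 : G.Adj a e) (e13 : G.Adj b d)
    (e14 : G.Adj b e) (e24 : G.Adj c e)
    (n01 : ¬ G.Adj a b) (n12 : ¬ G.Adj b c) (n23 : ¬ G.Adj c d)
    (n34 : ¬ G.Adj d e) : False := by
  have hac := e02.ne; have had := e03.ne; have hae := e04.ne
  have hbd := e13.ne; have hbe := e14.ne; have hce := e24.ne
  apply hhouse
  refine ⟨⟨⟨pick a b c d e, ?_⟩, ?_⟩⟩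
  · intro i j hij
    fin_cases i <;> fin_cases j <;>
      first
        | rfl
        | exact absurd hij hab | exact absurd hij hab.symm
        | exact absurd hij hac | exact absurd hij hac.symm
        | exact absurd hij had | exact absurd hij had.symm
        | exact absurd hij hae | exact absurd hij hae.symm
        | exact absurd hij hbc | exact absurd hij hbc.symm
        | exact absurd hij hbd | exact absurd hij hbd.symm
        | exact absurd hij hbe | exact absurd hij hbe.symm
        | exact absurd hij hcd | exact absurd hij hcd.symm
        | exact absurd hij hce | exact absurd hij hce.symm
        | exact absurd hij hde | exact absurd hij hde.symm
  · intro i j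
    fin_cases i <;> fin_cases j <;>
      first
        | exact iff_of_false (G.loopless.irrefl _) (by decide)
        | exact iff_of_true e02 (by decide) | exact iff_of_true e02.symm (by decide)
        | exact iff_of_true e03 (by decide) | exact iff_of_true e03.symm (by decide)
        | exact iff_of_true e04 (by decide) | exact iff_of_true e04.symm (by decide)
        | exact iff_of_true e13 (by decide) | exact iff_of_true e13.symm (by decide)
        | exact iff_of_true e14 (by decide) | exact iff_of_true e14.symm (by decide)
        | exact iff_of_true e24 (by decide) | exact iff_of_true e24.symm (by decide)
        | exact iff_of_false n01 (by decide) | exact iff_of_false (fun h => n01 h.symm) (by decide)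
        | exact iff_of_false n12 (by decide) | exact iff_of_false (fun h => n12 h.symm) (by decide)
        | exact iff_of_false n23 (by decide) | exact iff_of_false (fun h => n23 h.symm) (by decide)
        | exact iff_of_false n34 (by decide) | exact iff_of_false (fun h => n34 h.symm) (by decide)

lemma dne {S T : Set V} (h : Disjoint S T) {x y : V} (hx : x ∈ S) (hy : y ∈ T) :
    x ≠ y := by
  intro e; subst e; exact Set.disjoint_left.mp h hx hy

lemma not_comp {v : V} {S : Set V} (h : ¬ ∀ y ∈ S, G.Adj v y) :
    ∃ y ∈ S, ¬ G.Adj v y := by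
  push_neg at h; exact h

end Aux


section Insert

variable {V : Type*} {G : SimpleGraph V} {A : Fin 5 → Set V} {v : V}

lemma insert_contra_cyc (hA : PathOrCycleBlowup5 G A)
    (hmax : ∀ A' : Fin 5 → Set V, PathOrCycleBlowup5 G A' →
      (⋃ i, A i) ⊆ (⋃ i, A' i) → (⋃ i, A i) = (⋃ i, A' i))
    (hv : v ∉ ⋃ i, A i) (h40 : ∀ x ∈ A 4, ∀ y ∈ A 0, G.Adj x y) (j : Fin 5)
    (k1 : ∀ y ∈ A (j + 4), G.Adj v y) (k2 : ∀ y ∈ A (j + 1), G.Adj v y)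
    (k3 : ∀ y ∈ A (j + 2), ¬ G.Adj v y) (k4 : ∀ y ∈ A (j + 3), ¬ G.Adj v y) :
    False := by
  obtain ⟨hne, hdisj, hcomp, hanti, -⟩ := hA
  have hvA : ∀ i, v ∉ A i := fun i h => hv (Set.mem_iUnion.2 ⟨i, h⟩)
  set A' : Fin 5 → Set V := Function.update A j (insert v (A j)) with hA'def
  have hAj : A' j = insert v (A j) := Function.update_self _ _ _
  have hAk : ∀ k, k ≠ j → A' k = A k := fun k hk => Function.update_of_ne hk _ _
  have e1 : ∀ m : Fin 5, m + 1 ≠ m := by decide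
  have e2 : ∀ m : Fin 5, m + 2 ≠ m := by decide
  have f1 : ∀ i k : Fin 5, i + 1 = k → i = k + 4 := by decide
  have f2 : ∀ i k : Fin 5, i + 2 = k → i = k + 3 := by decide
  have hblow : PathOrCycleBlowup5 G A' := by
    refine ⟨?_, ?_, ?_, ?_, Or.inl ?_⟩
    · intro i
      rcases eq_or_ne i j with rfl | h
      · rw [hAj]; exact Set.insert_nonempty _ _
      · rw [hAk i h]; exact hne i
    · intro i k hik
      rcases eq_or_ne i j with rfl | hi
      · rw [hAj, hAk k (fun h => hik h.symm)]
        refine Set.disjoint_left.mpr ?_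
        intro a ha hak
        rcases Set.mem_insert_iff.1 ha with rfl | h
        · exact hvA k hak
        · exact Set.disjoint_left.mp (hdisj i k hik) h hak
      · rcases eq_or_ne k j with rfl | hk
        · rw [hAj, hAk i hi]
          refine Set.disjoint_right.mpr ?_
          intro a ha hai
          rcases Set.mem_insert_iff.1 ha with rfl | h
          · exact hvA i hai
          · exact Set.disjoint_right.mp (hdisj i k hik) h hai
        · rw [hAk i hi, hAk k hk]; exact hdisj i k hik
    · intro i hi x hx y hy
      rcases eq_or_ne i j with rfl | hij
      · rw [hAj] at hx; rw [hAk _ (e1 i)] at hy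
        rcases hx with rfl | hx
        · exact k2 y hy
        · exact hcomp i hi x hx y hy
      · rw [hAk i hij] at hx
        rcases eq_or_ne (i + 1) j with he | hne'
        · rw [he, hAj] at hy
          rcases hy with rfl | hy
          · exact (k1 x (by rw [← f1 i j he]; exact hx)).symm
          · exact hcomp i hi x hx y (he.symm ▸ hy)
        · rw [hAk _ hne'] at hy; exact hcomp i hi x hx y hy
    · intro i x hx y hy
      rcases eq_or_ne i j with rfl | hij
      · rw [hAj] at hx; rw [hAk _ (e2 i)] at hy
        rcases hx with rfl | hx
        · exact k3 y hy
        · exact hanti i x hx y hy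
      · rw [hAk i hij] at hx
        rcases eq_or_ne (i + 2) j with he | hne'
        · rw [he, hAj] at hy
          rcases hy with rfl | hy
          · exact fun hadj => k4 x (by rw [← f2 i j he]; exact hx) hadj.symm
          · exact hanti i x hx y (he.symm ▸ hy)
        · rw [hAk _ hne'] at hy; exact hanti i x hx y hy
    · intro x hx y hy
      rcases eq_or_ne (4 : Fin 5) j with h4 | h4
      · rw [h4, hAj] at hx
        rw [hAk 0 (by rw [← h4]; decide)] at hy
        rcases hx with rfl | hx
        · exact k2 y (by rw [show j + 1 = 0 by rw [← h4]; decide]; exact hy)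
        · exact h40 x (h4.symm ▸ hx) y hy
      · rw [hAk 4 h4] at hx
        rcases eq_or_ne (0 : Fin 5) j with h0 | h0
        · rw [h0, hAj] at hy
          rcases hy with rfl | hy
          · exact (k1 x (by rw [show j + 4 = 4 by rw [← h0]; decide]; exact hx)).symm
          · exact h40 x hx y (h0.symm ▸ hy)
        · rw [hAk 0 h0] at hy; exact h40 x hx y hy
  have hsub : (⋃ i, A i) ⊆ ⋃ i, A' i := by
    refine Set.iUnion_mono fun i => ?_
    rcases eq_or_ne i j with rfl | h
    · rw [hAj]; exact Set.subset_insert _ _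
    · rw [hAk i h]
  have heq := hmax A' hblow hsub
  have hvmem : v ∈ ⋃ i, A' i := Set.mem_iUnion.2 ⟨j, by rw [hAj]; exact Set.mem_insert _ _⟩
  rw [← heq] at hvmem
  exact hv hvmem

lemma insert_contra_path (hA : PathOrCycleBlowup5 G A)
    (hmax : ∀ A' : Fin 5 → Set V, PathOrCycleBlowup5 G A' →
      (⋃ i, A i) ⊆ (⋃ i, A' i) → (⋃ i, A i) = (⋃ i, A' i))
    (hv : v ∉ ⋃ i, A i) (h40 : ∀ x ∈ A 4, ∀ y ∈ A 0, ¬ G.Adj x y) (j : Fin 5)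
    (k1 : j ≠ 4 → ∀ y ∈ A (j + 1), G.Adj v y) (k2 : j ≠ 0 → ∀ y ∈ A (j + 4), G.Adj v y)
    (k3 : ∀ y ∈ A (j + 2), ¬ G.Adj v y) (k4 : ∀ y ∈ A (j + 3), ¬ G.Adj v y)
    (k5 : j = 4 → ∀ y ∈ A 0, ¬ G.Adj v y) (k6 : j = 0 → ∀ y ∈ A 4, ¬ G.Adj v y) :
    False := by
  obtain ⟨hne, hdisj, hcomp, hanti, -⟩ := hA
  have hvA : ∀ i, v ∉ A i := fun i h => hv (Set.mem_iUnion.2 ⟨i, h⟩)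
  set A' : Fin 5 → Set V := Function.update A j (insert v (A j)) with hA'def
  have hAj : A' j = insert v (A j) := Function.update_self _ _ _
  have hAk : ∀ k, k ≠ j → A' k = A k := fun k hk => Function.update_of_ne hk _ _
  have e1 : ∀ m : Fin 5, m + 1 ≠ m := by decide
  have e2 : ∀ m : Fin 5, m + 2 ≠ m := by decide
  have f1 : ∀ i k : Fin 5, i + 1 = k → i = k + 4 := by decide
  have f2 : ∀ i k : Fin 5, i + 2 = k → i = k + 3 := by decide
  have f3 : ∀ i k : Fin 5, i + 1 = k → i ≠ 4 → k ≠ 0 := by decide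
  have hblow : PathOrCycleBlowup5 G A' := by
    refine ⟨?_, ?_, ?_, ?_, Or.inr ?_⟩
    · intro i
      rcases eq_or_ne i j with rfl | h
      · rw [hAj]; exact Set.insert_nonempty _ _
      · rw [hAk i h]; exact hne i
    · intro i k hik
      rcases eq_or_ne i j with rfl | hi
      · rw [hAj, hAk k (fun h => hik h.symm)]
        refine Set.disjoint_left.mpr ?_
        intro a ha hak
        rcases Set.mem_insert_iff.1 ha with rfl | h
        · exact hvA k hak
        · exact Set.disjoint_left.mp (hdisj i k hik) h hak
      · rcases eq_or_ne k j with rfl | hk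
        · rw [hAj, hAk i hi]
          refine Set.disjoint_right.mpr ?_
          intro a ha hai
          rcases Set.mem_insert_iff.1 ha with rfl | h
          · exact hvA i hai
          · exact Set.disjoint_right.mp (hdisj i k hik) h hai
        · rw [hAk i hi, hAk k hk]; exact hdisj i k hik
    · intro i hi x hx y hy
      rcases eq_or_ne i j with rfl | hij
      · rw [hAj] at hx; rw [hAk _ (e1 i)] at hy
        rcases hx with rfl | hx
        · exact k1 hi y hy
        · exact hcomp i hi x hx y hy
      · rw [hAk i hij] at hx
        rcases eq_or_ne (i + 1) j with he | hne'
        · rw [he, hAj] at hy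
          rcases hy with rfl | hy
          · exact (k2 (f3 i j he hi) x (by rw [← f1 i j he]; exact hx)).symm
          · exact hcomp i hi x hx y (he.symm ▸ hy)
        · rw [hAk _ hne'] at hy; exact hcomp i hi x hx y hy
    · intro i x hx y hy
      rcases eq_or_ne i j with rfl | hij
      · rw [hAj] at hx; rw [hAk _ (e2 i)] at hy
        rcases hx with rfl | hx
        · exact k3 y hy
        · exact hanti i x hx y hy
      · rw [hAk i hij] at hx
        rcases eq_or_ne (i + 2) j with he | hne'
        · rw [he, hAj] at hy
          rcases hy with rfl | hy
          · exact fun hadj => k4 x (by rw [← f2 i j he]; exact hx) hadj.symm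
          · exact hanti i x hx y (he.symm ▸ hy)
        · rw [hAk _ hne'] at hy; exact hanti i x hx y hy
    · intro x hx y hy
      rcases eq_or_ne (4 : Fin 5) j with h4 | h4
      · rw [h4, hAj] at hx
        rw [hAk 0 (by rw [← h4]; decide)] at hy
        rcases hx with rfl | hx
        · exact k5 h4.symm y hy
        · exact h40 x (h4.symm ▸ hx) y hy
      · rw [hAk 4 h4] at hx
        rcases eq_or_ne (0 : Fin 5) j with h0 | h0
        · rw [h0, hAj] at hy
          rcases hy with rfl | hy
          · exact fun hadj => k6 h0.symm x hx hadj.symm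
          · exact h40 x hx y (h0.symm ▸ hy)
        · rw [hAk 0 h0] at hy; exact h40 x hx y hy
  have hsub : (⋃ i, A i) ⊆ ⋃ i, A' i := by
    refine Set.iUnion_mono fun i => ?_
    rcases eq_or_ne i j with rfl | h
    · rw [hAj]; exact Set.subset_insert _ _
    · rw [hAk i h]
  have heq := hmax A' hblow hsub
  have hvmem : v ∈ ⋃ i, A' i := Set.mem_iUnion.2 ⟨j, by rw [hAj]; exact Set.mem_insert _ _⟩
  rw [← heq] at hvmem
  exact hv hvmem

end Insert


section CycleCase

variable {V : Type*} {G : SimpleGraph V}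

lemma symAll {S T : Set V} (h : ∀ x ∈ S, ∀ y ∈ T, G.Adj x y) :
    ∀ x ∈ T, ∀ y ∈ S, G.Adj x y := fun x hx y hy => (h y hy x hx).symm

lemma symNo {S T : Set V} (h : ∀ x ∈ S, ∀ y ∈ T, ¬ G.Adj x y) :
    ∀ x ∈ T, ∀ y ∈ S, ¬ G.Adj x y := fun x hx y hy hadj => h y hy x hx hadj.symm

lemma cycS2 (hbull : _root_.Free G bull) (hhouse : _root_.Free G house)
    {B0 B1 B2 B3 B4 : Set V} {v : V}
    (hn0 : B0.Nonempty) (hn1 : B1.Nonempty) (hn2 : B2.Nonempty) (hn3 : B3.Nonempty)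
    (hn4 : B4.Nonempty)
    (d01 : Disjoint B0 B1) (d02 : Disjoint B0 B2) (d03 : Disjoint B0 B3)
    (d04 : Disjoint B0 B4) (d12 : Disjoint B1 B2) (d13 : Disjoint B1 B3)
    (d14 : Disjoint B1 B4) (d23 : Disjoint B2 B3) (d24 : Disjoint B2 B4)
    (d34 : Disjoint B3 B4)
    (c01 : ∀ x ∈ B0, ∀ y ∈ B1, G.Adj x y) (c12 : ∀ x ∈ B1, ∀ y ∈ B2, G.Adj x y)
    (c23 : ∀ x ∈ B2, ∀ y ∈ B3, G.Adj x y) (c34 : ∀ x ∈ B3, ∀ y ∈ B4, G.Adj x y)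
    (c40 : ∀ x ∈ B4, ∀ y ∈ B0, G.Adj x y)
    (a02 : ∀ x ∈ B0, ∀ y ∈ B2, ¬ G.Adj x y) (a13 : ∀ x ∈ B1, ∀ y ∈ B3, ¬ G.Adj x y)
    (a24 : ∀ x ∈ B2, ∀ y ∈ B4, ¬ G.Adj x y) (a30 : ∀ x ∈ B3, ∀ y ∈ B0, ¬ G.Adj x y)
    (a41 : ∀ x ∈ B4, ∀ y ∈ B1, ¬ G.Adj x y)
    (hv0 : v ∉ B0) (hv1 : v ∉ B1) (hv2 : v ∉ B2) (hv3 : v ∉ B3) (hv4 : v ∉ B4)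
    (hins2 : (∀ y ∈ B1, G.Adj v y) → (∀ y ∈ B3, G.Adj v y) →
      (∀ y ∈ B0, ¬ G.Adj v y) → (∀ y ∈ B4, ¬ G.Adj v y) → False)
    {x1 x2 : V} (hx1 : x1 ∈ B1) (hx2 : x2 ∈ B2) (hvx1 : G.Adj v x1) (hvx2 : G.Adj v x2)
    (hB3 : ∀ y ∈ B3, G.Adj v y) : ∀ y ∈ B4, G.Adj v y := by
  intro t ht
  by_contra htn
  obtain ⟨w, hw⟩ := id hn3
  have hA0 : ∀ u ∈ B0, ¬ G.Adj v u := by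
    intro u hu hadj
    exact house_ctr hhouse u w x1 t v
      (dne d03 hu hw) ((dne d13 hx1 hw).symm) (dne d14 hx1 ht) (fun h => hv4 (h ▸ ht))
      (c01 u hu x1 hx1) ((c40 t ht u hu).symm) hadj.symm
      (c34 w hw t ht) ((hB3 w hw).symm) hvx1.symm
      (fun h => a30 w hw u hu h.symm) (fun h => a13 x1 hx1 w hw h.symm)
      (fun h => a41 t ht x1 hx1 h.symm) (fun h => htn h.symm)
  have hC1 : ∀ y ∈ B1, G.Adj v y := by
    intro x1' hx1'
    by_contra hx1'n
    exact bull_ctr hbull x2 w v x1' t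
      (dne d24 hx2 ht) ((dne d13 hx1' hw).symm) (fun h => hv1 (h ▸ hx1'))
      (fun h => hv4 (h ▸ ht)) (dne d14 hx1' ht)
      (c23 x2 hx2 w hw) ((hB3 w hw).symm) hvx2.symm ((c12 x1' hx1' x2 hx2).symm)
      (c34 w hw t ht)
      (a24 x2 hx2 t ht) (fun h => a13 x1' hx1' w hw h.symm) hx1'n htn
      (fun h => a41 t ht x1' hx1' h.symm)
  have hA4 : ∀ y ∈ B4, ¬ G.Adj v y := by
    intro t' ht' hadj
    obtain ⟨u, hu⟩ := id hn0
    exact house_ctr hhouse t' x1 w u v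
      ((dne d14 hx1 ht').symm) (dne d13 hx1 hw) ((dne d03 hu hw).symm)
      (fun h => hv0 (h ▸ hu))
      ((c34 w hw t' ht').symm) (c40 t' ht' u hu) hadj.symm
      ((c01 u hu x1 hx1).symm) hvx1.symm ((hB3 w hw).symm)
      (a41 t' ht' x1 hx1) (a13 x1 hx1 w hw) (a30 w hw u hu)
      (fun h => hA0 u hu h.symm)
  exact hins2 hC1 hB3 hA0 hA4

lemma cycCore (hbull : _root_.Free G bull) (hhouse : _root_.Free G house)
    {B0 B1 B2 B3 B4 : Set V} {v : V}
    (hn0 : B0.Nonempty) (hn1 : B1.Nonempty) (hn2 : B2.Nonempty) (hn3 : B3.Nonempty)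
    (hn4 : B4.Nonempty)
    (d01 : Disjoint B0 B1) (d02 : Disjoint B0 B2) (d03 : Disjoint B0 B3)
    (d04 : Disjoint B0 B4) (d12 : Disjoint B1 B2) (d13 : Disjoint B1 B3)
    (d14 : Disjoint B1 B4) (d23 : Disjoint B2 B3) (d24 : Disjoint B2 B4)
    (d34 : Disjoint B3 B4)
    (c01 : ∀ x ∈ B0, ∀ y ∈ B1, G.Adj x y) (c12 : ∀ x ∈ B1, ∀ y ∈ B2, G.Adj x y)
    (c23 : ∀ x ∈ B2, ∀ y ∈ B3, G.Adj x y) (c34 : ∀ x ∈ B3, ∀ y ∈ B4, G.Adj x y)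
    (c40 : ∀ x ∈ B4, ∀ y ∈ B0, G.Adj x y)
    (a02 : ∀ x ∈ B0, ∀ y ∈ B2, ¬ G.Adj x y) (a13 : ∀ x ∈ B1, ∀ y ∈ B3, ¬ G.Adj x y)
    (a24 : ∀ x ∈ B2, ∀ y ∈ B4, ¬ G.Adj x y) (a30 : ∀ x ∈ B3, ∀ y ∈ B0, ¬ G.Adj x y)
    (a41 : ∀ x ∈ B4, ∀ y ∈ B1, ¬ G.Adj x y)
    (hv0 : v ∉ B0) (hv1 : v ∉ B1) (hv2 : v ∉ B2) (hv3 : v ∉ B3) (hv4 : v ∉ B4)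
    (hnc : ¬ ((∀ y ∈ B0, G.Adj v y) ∧ (∀ y ∈ B1, G.Adj v y) ∧ (∀ y ∈ B2, G.Adj v y) ∧
      (∀ y ∈ B3, G.Adj v y) ∧ (∀ y ∈ B4, G.Adj v y)))
    (hins2 : (∀ y ∈ B1, G.Adj v y) → (∀ y ∈ B3, G.Adj v y) →
      (∀ y ∈ B0, ¬ G.Adj v y) → (∀ y ∈ B4, ¬ G.Adj v y) → False)
    (hins3 : (∀ y ∈ B2, G.Adj v y) → (∀ y ∈ B4, G.Adj v y) →
      (∀ y ∈ B1, ¬ G.Adj v y) → (∀ y ∈ B0, ¬ G.Adj v y) → False)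
    (hins4 : (∀ y ∈ B3, G.Adj v y) → (∀ y ∈ B0, G.Adj v y) →
      (∀ y ∈ B2, ¬ G.Adj v y) → (∀ y ∈ B1, ¬ G.Adj v y) → False)
    {x1 x2 : V} (hx1 : x1 ∈ B1) (hx2 : x2 ∈ B2) (hvx1 : G.Adj v x1) (hvx2 : G.Adj v x2)
    (hB3 : ∀ y ∈ B3, G.Adj v y) : False := by
  have hB4 : ∀ y ∈ B4, G.Adj v y :=
    cycS2 hbull hhouse hn0 hn1 hn2 hn3 hn4 d01 d02 d03 d04 d12 d13 d14 d23 d24 d34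
      c01 c12 c23 c34 c40 a02 a13 a24 a30 a41 hv0 hv1 hv2 hv3 hv4 hins2
      hx1 hx2 hvx1 hvx2 hB3
  obtain ⟨w, hw⟩ := id hn3
  obtain ⟨t, ht⟩ := id hn4
  by_cases hB2 : ∀ y ∈ B2, G.Adj v y
  · have hB0 : ∀ y ∈ B0, G.Adj v y :=
      cycS2 hbull hhouse hn1 hn2 hn3 hn4 hn0
        d12 d13 d14 d01.symm d23 d24 d02.symm d34 d03.symm d04.symm
        c12 c23 c34 c40 c01 a13 a24 a30 a41 a02
        hv1 hv2 hv3 hv4 hv0 hins3 hx2 hw hvx2 (hB3 w hw) hB4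
    have hB1 : ∀ y ∈ B1, G.Adj v y :=
      cycS2 hbull hhouse hn2 hn3 hn4 hn0 hn1
        d23 d24 d02.symm d12.symm d34 d03.symm d13.symm d04.symm d14.symm d01
        c23 c34 c40 c01 c12 a24 a30 a41 a02 a13
        hv2 hv3 hv4 hv0 hv1 hins4 hw ht (hB3 w hw) (hB4 t ht) hB0
    exact hnc ⟨hB0, hB1, hB2, hB3, hB4⟩
  · obtain ⟨x2', hx2', hx2'n⟩ := not_comp hB2
    have hB0 : ∀ u ∈ B0, G.Adj v u := by
      intro u hu
      by_contra hun
      exact bull_ctr hbull w t v x2' u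
        ((dne d03 hu hw).symm) ((dne d24 hx2' ht).symm) (fun h => hv2 (h ▸ hx2'))
        (fun h => hv0 (h ▸ hu)) ((dne d02 hu hx2').symm)
        (c34 w hw t ht) ((hB4 t ht).symm) ((hB3 w hw).symm) ((c23 x2' hx2' w hw).symm)
        (c40 t ht u hu)
        (a30 w hw u hu) (fun h => a24 x2' hx2' t ht h.symm) hx2'n hun
        (fun h => a02 u hu x2' hx2' h.symm)
    obtain ⟨u, hu⟩ := id hn0
    exact house_ctr hhouse x1 w u x2' v
      (dne d13 hx1 hw) ((dne d03 hu hw).symm) (dne d02 hu hx2')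
      (fun h => hv2 (h ▸ hx2'))
      ((c01 u hu x1 hx1).symm) (c12 x1 hx1 x2' hx2') hvx1.symm
      ((c23 x2' hx2' w hw).symm) ((hB3 w hw).symm) ((hB0 u hu).symm)
      (a13 x1 hx1 w hw) (a30 w hw u hu) (a02 u hu x2' hx2')
      (fun h => hx2'n h.symm)

lemma pairCyc (hbull : _root_.Free G bull) (hhouse : _root_.Free G house)
    {B0 B1 B2 B3 B4 : Set V} {v : V}
    (hn0 : B0.Nonempty) (hn1 : B1.Nonempty) (hn2 : B2.Nonempty) (hn3 : B3.Nonempty)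
    (hn4 : B4.Nonempty)
    (d01 : Disjoint B0 B1) (d02 : Disjoint B0 B2) (d03 : Disjoint B0 B3)
    (d04 : Disjoint B0 B4) (d12 : Disjoint B1 B2) (d13 : Disjoint B1 B3)
    (d14 : Disjoint B1 B4) (d23 : Disjoint B2 B3) (d24 : Disjoint B2 B4)
    (d34 : Disjoint B3 B4)
    (c01 : ∀ x ∈ B0, ∀ y ∈ B1, G.Adj x y) (c12 : ∀ x ∈ B1, ∀ y ∈ B2, G.Adj x y)
    (c23 : ∀ x ∈ B2, ∀ y ∈ B3, G.Adj x y) (c34 : ∀ x ∈ B3, ∀ y ∈ B4, G.Adj x y)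
    (c40 : ∀ x ∈ B4, ∀ y ∈ B0, G.Adj x y)
    (a02 : ∀ x ∈ B0, ∀ y ∈ B2, ¬ G.Adj x y) (a13 : ∀ x ∈ B1, ∀ y ∈ B3, ¬ G.Adj x y)
    (a24 : ∀ x ∈ B2, ∀ y ∈ B4, ¬ G.Adj x y) (a30 : ∀ x ∈ B3, ∀ y ∈ B0, ¬ G.Adj x y)
    (a41 : ∀ x ∈ B4, ∀ y ∈ B1, ¬ G.Adj x y)
    (hv0 : v ∉ B0) (hv1 : v ∉ B1) (hv2 : v ∉ B2) (hv3 : v ∉ B3) (hv4 : v ∉ B4)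
    (hnc : ¬ ((∀ y ∈ B0, G.Adj v y) ∧ (∀ y ∈ B1, G.Adj v y) ∧ (∀ y ∈ B2, G.Adj v y) ∧
      (∀ y ∈ B3, G.Adj v y) ∧ (∀ y ∈ B4, G.Adj v y)))
    (hins0 : (∀ y ∈ B4, G.Adj v y) → (∀ y ∈ B1, G.Adj v y) →
      (∀ y ∈ B2, ¬ G.Adj v y) → (∀ y ∈ B3, ¬ G.Adj v y) → False)
    (hins1 : (∀ y ∈ B0, G.Adj v y) → (∀ y ∈ B2, G.Adj v y) →
      (∀ y ∈ B3, ¬ G.Adj v y) → (∀ y ∈ B4, ¬ G.Adj v y) → False)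
    (hins2 : (∀ y ∈ B1, G.Adj v y) → (∀ y ∈ B3, G.Adj v y) →
      (∀ y ∈ B4, ¬ G.Adj v y) → (∀ y ∈ B0, ¬ G.Adj v y) → False)
    (hins3 : (∀ y ∈ B2, G.Adj v y) → (∀ y ∈ B4, G.Adj v y) →
      (∀ y ∈ B0, ¬ G.Adj v y) → (∀ y ∈ B1, ¬ G.Adj v y) → False)
    (hins4 : (∀ y ∈ B3, G.Adj v y) → (∀ y ∈ B0, G.Adj v y) →
      (∀ y ∈ B1, ¬ G.Adj v y) → (∀ y ∈ B2, ¬ G.Adj v y) → False)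
    {x1 x2 : V} (hx1 : x1 ∈ B1) (hx2 : x2 ∈ B2) (hvx1 : G.Adj v x1) (hvx2 : G.Adj v x2) :
    False := by
  by_cases hB3 : ∀ y ∈ B3, G.Adj v y
  · exact cycCore hbull hhouse hn0 hn1 hn2 hn3 hn4 d01 d02 d03 d04 d12 d13 d14 d23 d24 d34
      c01 c12 c23 c34 c40 a02 a13 a24 a30 a41 hv0 hv1 hv2 hv3 hv4 hnc
      (fun p q r s => hins2 p q s r)
      (fun p q r s => hins3 p q s r)
      (fun p q r s => hins4 p q s r)
      hx1 hx2 hvx1 hvx2 hB3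
  · obtain ⟨w', hw', hw'n⟩ := not_comp hB3
    have hB0 : ∀ u ∈ B0, G.Adj v u := by
      intro u hu
      by_contra hun
      exact bull_ctr hbull x1 x2 v u w'
        (dne d13 hx1 hw') ((dne d02 hu hx2).symm) (fun h => hv0 (h ▸ hu))
        (fun h => hv3 (h ▸ hw')) (dne d03 hu hw')
        (c12 x1 hx1 x2 hx2) hvx2.symm hvx1.symm ((c01 u hu x1 hx1).symm)
        (c23 x2 hx2 w' hw')
        (a13 x1 hx1 w' hw') (fun h => a02 u hu x2 hx2 h.symm) hun hw'n
        (fun h => a30 w' hw' u hu h.symm)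
    exact cycCore hbull hhouse hn3 hn2 hn1 hn0 hn4
      d23.symm d13.symm d03.symm d34 d12.symm d02.symm d24 d01.symm d14 d04
      (symAll c23) (symAll c12) (symAll c01) (symAll c40) (symAll c34)
      (symNo a13) (symNo a02) (symNo a41) (symNo a30) (symNo a24)
      hv3 hv2 hv1 hv0 hv4
      (fun h => hnc ⟨h.2.2.2.1, h.2.2.1, h.2.1, h.1, h.2.2.2.2⟩)
      (fun p q r s => hins1 q p r s)
      (fun p q r s => hins0 q p r s)
      (fun p q r s => hins4 q p r s)
      hx2 hx1 hvx2 hvx1 hB0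

end CycleCase


section PathCase

variable {V : Type*} {G : SimpleGraph V}

lemma pathMid (hbull : _root_.Free G bull) (hhouse : _root_.Free G house)
    {B0 B1 B2 B3 B4 : Set V} {v : V}
    (hn0 : B0.Nonempty) (hn1 : B1.Nonempty) (hn2 : B2.Nonempty) (hn3 : B3.Nonempty)
    (hn4 : B4.Nonempty)
    (d01 : Disjoint B0 B1) (d02 : Disjoint B0 B2) (d03 : Disjoint B0 B3)
    (d04 : Disjoint B0 B4) (d12 : Disjoint B1 B2) (d13 : Disjoint B1 B3)
    (d14 : Disjoint B1 B4) (d23 : Disjoint B2 B3) (d24 : Disjoint B2 B4)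
    (d34 : Disjoint B3 B4)
    (c01 : ∀ x ∈ B0, ∀ y ∈ B1, G.Adj x y) (c12 : ∀ x ∈ B1, ∀ y ∈ B2, G.Adj x y)
    (c23 : ∀ x ∈ B2, ∀ y ∈ B3, G.Adj x y) (c34 : ∀ x ∈ B3, ∀ y ∈ B4, G.Adj x y)
    (a02 : ∀ x ∈ B0, ∀ y ∈ B2, ¬ G.Adj x y) (a13 : ∀ x ∈ B1, ∀ y ∈ B3, ¬ G.Adj x y)
    (a24 : ∀ x ∈ B2, ∀ y ∈ B4, ¬ G.Adj x y) (a30 : ∀ x ∈ B3, ∀ y ∈ B0, ¬ G.Adj x y)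
    (a41 : ∀ x ∈ B4, ∀ y ∈ B1, ¬ G.Adj x y) (a40 : ∀ x ∈ B4, ∀ y ∈ B0, ¬ G.Adj x y)
    (hv0 : v ∉ B0) (hv1 : v ∉ B1) (hv2 : v ∉ B2) (hv3 : v ∉ B3) (hv4 : v ∉ B4)
    (hnc : ¬ ((∀ y ∈ B0, G.Adj v y) ∧ (∀ y ∈ B1, G.Adj v y) ∧ (∀ y ∈ B2, G.Adj v y) ∧
      (∀ y ∈ B3, G.Adj v y) ∧ (∀ y ∈ B4, G.Adj v y)))
    (hins1 : (∀ y ∈ B0, G.Adj v y) → (∀ y ∈ B2, G.Adj v y) →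
      (∀ y ∈ B3, ¬ G.Adj v y) → (∀ y ∈ B4, ¬ G.Adj v y) → False)
    (hins2 : (∀ y ∈ B1, G.Adj v y) → (∀ y ∈ B3, G.Adj v y) →
      (∀ y ∈ B0, ¬ G.Adj v y) → (∀ y ∈ B4, ¬ G.Adj v y) → False)
    {x1 x2 : V} (hx1 : x1 ∈ B1) (hx2 : x2 ∈ B2) (hvx1 : G.Adj v x1) (hvx2 : G.Adj v x2) :
    False := by
  by_cases hB3 : ∀ y ∈ B3, G.Adj v y
  · obtain ⟨w, hw⟩ := id hn3
    by_cases hB4 : ∀ y ∈ B4, G.Adj v y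
    · obtain ⟨t, ht⟩ := id hn4
      have hB0 : ∀ u ∈ B0, G.Adj v u := by
        intro u hu
        by_contra hun
        exact bull_ctr hbull x1 v x2 u t
          (dne d14 hx1 ht) (fun h => hv0 (h ▸ hu)) ((dne d02 hu hx2).symm)
          (dne d24 hx2 ht) (dne d04 hu ht)
          hvx1.symm hvx2 (c12 x1 hx1 x2 hx2) ((c01 u hu x1 hx1).symm) (hB4 t ht)
          (fun h => a41 t ht x1 hx1 h.symm) hun (fun h => a02 u hu x2 hx2 h.symm)
          (a24 x2 hx2 t ht) (fun h => a40 t ht u hu h.symm)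
      obtain ⟨u, hu⟩ := id hn0
      have hB1 : ∀ y ∈ B1, G.Adj v y := by
        intro x1' hx1'
        by_contra hx1'n
        exact house_ctr hhouse x2 u w x1' v
          ((dne d02 hu hx2).symm) (dne d03 hu hw) ((dne d13 hx1' hw).symm)
          (fun h => hv1 (h ▸ hx1'))
          (c23 x2 hx2 w hw) ((c12 x1' hx1' x2 hx2).symm) hvx2.symm
          (c01 u hu x1' hx1') ((hB0 u hu).symm) ((hB3 w hw).symm)
          (fun h => a02 u hu x2 hx2 h.symm) (fun h => a30 w hw u hu h.symm)
          (fun h => a13 x1' hx1' w hw h.symm) (fun h => hx1'n h.symm)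
      have hB2 : ∀ y ∈ B2, G.Adj v y := by
        intro x2' hx2'
        by_contra hx2'n
        exact house_ctr hhouse x1 w u x2' v
          (dne d13 hx1 hw) ((dne d03 hu hw).symm) (dne d02 hu hx2')
          (fun h => hv2 (h ▸ hx2'))
          ((c01 u hu x1 hx1).symm) (c12 x1 hx1 x2' hx2') hvx1.symm
          ((c23 x2' hx2' w hw).symm) ((hB3 w hw).symm) ((hB0 u hu).symm)
          (a13 x1 hx1 w hw) (a30 w hw u hu) (a02 u hu x2' hx2')
          (fun h => hx2'n h.symm)
      exact hnc ⟨hB0, hB1, hB2, hB3, hB4⟩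
    · obtain ⟨t, ht, htn⟩ := not_comp hB4
      have hA0 : ∀ u ∈ B0, ¬ G.Adj v u := by
        intro u hu hadj
        exact bull_ctr hbull w v x2 t u
          ((dne d03 hu hw).symm) (fun h => hv4 (h ▸ ht)) (dne d24 hx2 ht)
          ((dne d02 hu hx2).symm) ((dne d04 hu ht).symm)
          ((hB3 w hw).symm) hvx2 ((c23 x2 hx2 w hw).symm) (c34 w hw t ht) hadj
          (a30 w hw u hu) htn (a24 x2 hx2 t ht)
          (fun h => a02 u hu x2 hx2 h.symm) (a40 t ht u hu)
      have hC1 : ∀ y ∈ B1, G.Adj v y := by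
        intro x1' hx1'
        by_contra hx1'n
        exact bull_ctr hbull x2 w v x1' t
          (dne d24 hx2 ht) ((dne d13 hx1' hw).symm) (fun h => hv1 (h ▸ hx1'))
          (fun h => hv4 (h ▸ ht)) (dne d14 hx1' ht)
          (c23 x2 hx2 w hw) ((hB3 w hw).symm) hvx2.symm ((c12 x1' hx1' x2 hx2).symm)
          (c34 w hw t ht)
          (a24 x2 hx2 t ht) (fun h => a13 x1' hx1' w hw h.symm) hx1'n htn
          (fun h => a41 t ht x1' hx1' h.symm)
      have hA4 : ∀ y ∈ B4, ¬ G.Adj v y := by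
        intro t' ht' hadj
        obtain ⟨u, hu⟩ := id hn0
        exact bull_ctr hbull x1 v x2 u t'
          (dne d14 hx1 ht') (fun h => hv0 (h ▸ hu)) ((dne d02 hu hx2).symm)
          (dne d24 hx2 ht') (dne d04 hu ht')
          hvx1.symm hvx2 (c12 x1 hx1 x2 hx2) ((c01 u hu x1 hx1).symm) hadj
          (fun h => a41 t' ht' x1 hx1 h.symm) (hA0 u hu)
          (fun h => a02 u hu x2 hx2 h.symm) (a24 x2 hx2 t' ht')
          (fun h => a40 t' ht' u hu h.symm)
      exact hins2 hC1 hB3 hA0 hA4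
  · obtain ⟨w', hw', hw'n⟩ := not_comp hB3
    have hB0 : ∀ u ∈ B0, G.Adj v u := by
      intro u hu
      by_contra hun
      exact bull_ctr hbull x1 x2 v u w'
        (dne d13 hx1 hw') ((dne d02 hu hx2).symm) (fun h => hv0 (h ▸ hu))
        (fun h => hv3 (h ▸ hw')) (dne d03 hu hw')
        (c12 x1 hx1 x2 hx2) hvx2.symm hvx1.symm ((c01 u hu x1 hx1).symm)
        (c23 x2 hx2 w' hw')
        (a13 x1 hx1 w' hw') (fun h => a02 u hu x2 hx2 h.symm) hun hw'n
        (fun h => a30 w' hw' u hu h.symm)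
    have hA4 : ∀ t ∈ B4, ¬ G.Adj v t := by
      intro t ht hadj
      exact house_ctr hhouse x2 t x1 w' v
        (dne d24 hx2 ht) ((dne d14 hx1 ht).symm) (dne d13 hx1 hw')
        (fun h => hv3 (h ▸ hw'))
        ((c12 x1 hx1 x2 hx2).symm) (c23 x2 hx2 w' hw') hvx2.symm
        ((c34 w' hw' t ht).symm) hadj.symm hvx1.symm
        (a24 x2 hx2 t ht) (a41 t ht x1 hx1) (a13 x1 hx1 w' hw')
        (fun h => hw'n h.symm)
    have hA3 : ∀ w ∈ B3, ¬ G.Adj v w := by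
      intro w hw3 hadj
      obtain ⟨t, ht⟩ := id hn4
      obtain ⟨u, hu⟩ := id hn0
      exact bull_ctr hbull w v x2 t u
        ((dne d03 hu hw3).symm) (fun h => hv4 (h ▸ ht)) (dne d24 hx2 ht)
        ((dne d02 hu hx2).symm) ((dne d04 hu ht).symm)
        hadj.symm hvx2 ((c23 x2 hx2 w hw3).symm) (c34 w hw3 t ht) (hB0 u hu)
        (a30 w hw3 u hu) (hA4 t ht) (a24 x2 hx2 t ht)
        (fun h => a02 u hu x2 hx2 h.symm) (a40 t ht u hu)
    have hB2 : ∀ y ∈ B2, G.Adj v y := by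
      intro x2' hx2'
      by_contra hx2'n
      obtain ⟨t, ht⟩ := id hn4
      by_cases hq : G.Adj x2 x2'
      · exact bull_ctr hbull x2 w' x2' v t
          (dne d24 hx2 ht) (fun h => hv3 (h ▸ hw')) (fun h => hv2 (h ▸ hx2'))
          (dne d24 hx2' ht) (fun h => hv4 (h ▸ ht))
          (c23 x2 hx2 w' hw') ((c23 x2' hx2' w' hw').symm) hq hvx2.symm
          (c34 w' hw' t ht)
          (a24 x2 hx2 t ht) (fun h => hw'n h.symm) (fun h => hx2'n h.symm)
          (a24 x2' hx2' t ht) (hA4 t ht)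
      · exact house_ctr hhouse x1 w' v x2' x2
          (dne d13 hx1 hw') (fun h => hv3 (h ▸ hw')) (fun h => hv2 (h ▸ hx2'))
          (fun h => hx2'n (by rw [h]; exact hvx2))
          hvx1.symm (c12 x1 hx1 x2' hx2') (c12 x1 hx1 x2 hx2)
          ((c23 x2' hx2' w' hw').symm) ((c23 x2 hx2 w' hw').symm) hvx2
          (a13 x1 hx1 w' hw') (fun h => hw'n h.symm) hx2'n
          (fun h => hq h.symm)
    exact hins1 hB0 hB2 hA3 hA4

lemma pathEnd (hbull : _root_.Free G bull) (hhouse : _root_.Free G house)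
    {B0 B1 B2 B3 B4 : Set V} {v : V}
    (hn0 : B0.Nonempty) (hn1 : B1.Nonempty) (hn2 : B2.Nonempty) (hn3 : B3.Nonempty)
    (hn4 : B4.Nonempty)
    (d01 : Disjoint B0 B1) (d02 : Disjoint B0 B2) (d03 : Disjoint B0 B3)
    (d04 : Disjoint B0 B4) (d12 : Disjoint B1 B2) (d13 : Disjoint B1 B3)
    (d14 : Disjoint B1 B4) (d23 : Disjoint B2 B3) (d24 : Disjoint B2 B4)
    (d34 : Disjoint B3 B4)
    (c01 : ∀ x ∈ B0, ∀ y ∈ B1, G.Adj x y) (c12 : ∀ x ∈ B1, ∀ y ∈ B2, G.Adj x y)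
    (c23 : ∀ x ∈ B2, ∀ y ∈ B3, G.Adj x y) (c34 : ∀ x ∈ B3, ∀ y ∈ B4, G.Adj x y)
    (a02 : ∀ x ∈ B0, ∀ y ∈ B2, ¬ G.Adj x y) (a13 : ∀ x ∈ B1, ∀ y ∈ B3, ¬ G.Adj x y)
    (a24 : ∀ x ∈ B2, ∀ y ∈ B4, ¬ G.Adj x y) (a30 : ∀ x ∈ B3, ∀ y ∈ B0, ¬ G.Adj x y)
    (a41 : ∀ x ∈ B4, ∀ y ∈ B1, ¬ G.Adj x y) (a40 : ∀ x ∈ B4, ∀ y ∈ B0, ¬ G.Adj x y)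
    (hv0 : v ∉ B0) (hv1 : v ∉ B1) (hv2 : v ∉ B2) (hv3 : v ∉ B3) (hv4 : v ∉ B4)
    (hins0 : (∀ y ∈ B1, G.Adj v y) → (∀ y ∈ B2, ¬ G.Adj v y) →
      (∀ y ∈ B3, ¬ G.Adj v y) → (∀ y ∈ B4, ¬ G.Adj v y) → False)
    (hmid : ∀ y ∈ B2, G.Adj v y → False)
    {x0 x1 : V} (hx0 : x0 ∈ B0) (hx1 : x1 ∈ B1) (hvx0 : G.Adj v x0) (hvx1 : G.Adj v x1) :
    False := by
  have hA2 : ∀ y ∈ B2, ¬ G.Adj v y := fun y hy hady => hmid y hy hady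
  obtain ⟨x2, hx2⟩ := id hn2
  have hA3 : ∀ w ∈ B3, ¬ G.Adj v w := by
    intro w hw hadj
    exact house_ctr hhouse x1 w x0 x2 v
      (dne d13 hx1 hw) ((dne d03 hx0 hw).symm) (dne d02 hx0 hx2)
      (fun h => hv2 (h ▸ hx2))
      ((c01 x0 hx0 x1 hx1).symm) (c12 x1 hx1 x2 hx2) hvx1.symm
      ((c23 x2 hx2 w hw).symm) hadj.symm hvx0.symm
      (a13 x1 hx1 w hw) (a30 w hw x0 hx0) (a02 x0 hx0 x2 hx2)
      (fun h => hA2 x2 hx2 h.symm)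
  have hA4 : ∀ t ∈ B4, ¬ G.Adj v t := by
    intro t ht hadj
    exact bull_ctr hbull x1 v x0 x2 t
      (dne d14 hx1 ht) (fun h => hv2 (h ▸ hx2)) (dne d02 hx0 hx2)
      (dne d04 hx0 ht) (dne d24 hx2 ht)
      hvx1.symm hvx0 ((c01 x0 hx0 x1 hx1).symm) (c12 x1 hx1 x2 hx2) hadj
      (fun h => a41 t ht x1 hx1 h.symm) (hA2 x2 hx2) (a02 x0 hx0 x2 hx2)
      (fun h => a40 t ht x0 hx0 h.symm) (a24 x2 hx2 t ht)
  have hB1 : ∀ y ∈ B1, G.Adj v y := by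
    intro x1' hx1'
    by_contra hx1'n
    obtain ⟨w, hw⟩ := id hn3
    by_cases hq : G.Adj x1 x1'
    · exact bull_ctr hbull x1 x2 x1' v w
        (dne d13 hx1 hw) (fun h => hv2 (h ▸ hx2)) (fun h => hv1 (h ▸ hx1'))
        (dne d13 hx1' hw) (fun h => hv3 (h ▸ hw))
        (c12 x1 hx1 x2 hx2) ((c12 x1' hx1' x2 hx2).symm) hq hvx1.symm
        (c23 x2 hx2 w hw)
        (a13 x1 hx1 w hw) (fun h => hA2 x2 hx2 h.symm) (fun h => hx1'n h.symm)
        (a13 x1' hx1' w hw) (hA3 w hw)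
    · exact house_ctr hhouse x0 x2 v x1' x1
        (dne d02 hx0 hx2) (fun h => hv2 (h ▸ hx2)) (fun h => hv1 (h ▸ hx1'))
        (fun h => hx1'n (by rw [h]; exact hvx1))
        hvx0.symm (c01 x0 hx0 x1' hx1') (c01 x0 hx0 x1 hx1)
        ((c12 x1' hx1' x2 hx2).symm) ((c12 x1 hx1 x2 hx2).symm) hvx1
        (a02 x0 hx0 x2 hx2) (fun h => hA2 x2 hx2 h.symm) hx1'n
        (fun h => hq h.symm)
  exact hins0 hB1 hA2 hA3 hA4

end PathCase

/-- In a prime (house, bull)-free graph with a maximal P5/C5 blowup, every vertex outside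
`A` that is not complete to `A` is anticomplete to at least one of any two consecutive
parts. -/
theorem stmt7 {V : Type*} [Fintype V] (G : SimpleGraph V)
    (hprime : IsPrime G) (hhouse : _root_.Free G house) (hbull : _root_.Free G bull)
    (A : Fin 5 → Set V) (hA : PathOrCycleBlowup5 G A)
    (hmax : ∀ A' : Fin 5 → Set V, PathOrCycleBlowup5 G A' →
      (⋃ i, A i) ⊆ (⋃ i, A' i) → (⋃ i, A i) = (⋃ i, A' i)) :
    ∀ v ∉ (⋃ i, A i), ¬ (∀ a ∈ (⋃ i, A i), G.Adj v a) →
      (∀ i : Fin 5, i ≠ 4 →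
        ((∀ a ∈ A i, ¬ G.Adj v a) ∨ (∀ a ∈ A (i + 1), ¬ G.Adj v a))) ∧
      ((∀ x ∈ A 4, ∀ y ∈ A 0, G.Adj x y) →
        ((∀ a ∈ A 4, ¬ G.Adj v a) ∨ (∀ a ∈ A 0, ¬ G.Adj v a))) := by
  intro v hv hnotall
  have hne := hA.1
  have hdisj := hA.2.1
  have hcomp := hA.2.2.1
  have hanti := hA.2.2.2.1
  have h5 := hA.2.2.2.2
  have hvA : ∀ i, v ∉ A i := fun i h => hv (Set.mem_iUnion.2 ⟨i, h⟩)
  have hnc : ¬ ((∀ y ∈ A 0, G.Adj v y) ∧ (∀ y ∈ A 1, G.Adj v y) ∧ (∀ y ∈ A 2, G.Adj v y) ∧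
      (∀ y ∈ A 3, G.Adj v y) ∧ (∀ y ∈ A 4, G.Adj v y)) := by
    rintro ⟨h0, h1, h2, h3, h4⟩
    apply hnotall
    intro a ha
    obtain ⟨i, hi⟩ := Set.mem_iUnion.1 ha
    fin_cases i
    exacts [h0 a hi, h1 a hi, h2 a hi, h3 a hi, h4 a hi]
  have c01 : ∀ x ∈ A 0, ∀ y ∈ A 1, G.Adj x y := hcomp 0 (by decide)
  have c12 : ∀ x ∈ A 1, ∀ y ∈ A 2, G.Adj x y := hcomp 1 (by decide)
  have c23 : ∀ x ∈ A 2, ∀ y ∈ A 3, G.Adj x y := hcomp 2 (by decide)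
  have c34 : ∀ x ∈ A 3, ∀ y ∈ A 4, G.Adj x y := hcomp 3 (by decide)
  have a02 : ∀ x ∈ A 0, ∀ y ∈ A 2, ¬ G.Adj x y := hanti 0
  have a13 : ∀ x ∈ A 1, ∀ y ∈ A 3, ¬ G.Adj x y := hanti 1
  have a24 : ∀ x ∈ A 2, ∀ y ∈ A 4, ¬ G.Adj x y := hanti 2
  have a30 : ∀ x ∈ A 3, ∀ y ∈ A 0, ¬ G.Adj x y := hanti 3
  have a41 : ∀ x ∈ A 4, ∀ y ∈ A 1, ¬ G.Adj x y := hanti 4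
  rcases h5 with h40c | h40n
  · -- cycle case
    have ins : ∀ j : Fin 5, (∀ y ∈ A (j + 4), G.Adj v y) → (∀ y ∈ A (j + 1), G.Adj v y) →
        (∀ y ∈ A (j + 2), ¬ G.Adj v y) → (∀ y ∈ A (j + 3), ¬ G.Adj v y) → False :=
      fun j => insert_contra_cyc hA hmax hv h40c j
    have ins0 : (∀ y ∈ A 4, G.Adj v y) → (∀ y ∈ A 1, G.Adj v y) →
        (∀ y ∈ A 2, ¬ G.Adj v y) → (∀ y ∈ A 3, ¬ G.Adj v y) → False := ins 0
    have ins1 : (∀ y ∈ A 0, G.Adj v y) → (∀ y ∈ A 2, G.Adj v y) →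
        (∀ y ∈ A 3, ¬ G.Adj v y) → (∀ y ∈ A 4, ¬ G.Adj v y) → False := ins 1
    have ins2 : (∀ y ∈ A 1, G.Adj v y) → (∀ y ∈ A 3, G.Adj v y) →
        (∀ y ∈ A 4, ¬ G.Adj v y) → (∀ y ∈ A 0, ¬ G.Adj v y) → False := ins 2
    have ins3 : (∀ y ∈ A 2, G.Adj v y) → (∀ y ∈ A 4, G.Adj v y) →
        (∀ y ∈ A 0, ¬ G.Adj v y) → (∀ y ∈ A 1, ¬ G.Adj v y) → False := ins 3
    have ins4 : (∀ y ∈ A 3, G.Adj v y) → (∀ y ∈ A 0, G.Adj v y) →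
        (∀ y ∈ A 1, ¬ G.Adj v y) → (∀ y ∈ A 2, ¬ G.Adj v y) → False := ins 4
    constructor
    · intro i hi
      fin_cases i
      · by_contra hcon
        push_neg at hcon
        obtain ⟨⟨xa, hxa, hvxa⟩, ⟨xb, hxb, hvxb⟩⟩ := hcon
        exact pairCyc hbull hhouse (hne 4) (hne 0) (hne 1) (hne 2) (hne 3)
          (hdisj 4 0 (by decide)) (hdisj 4 1 (by decide)) (hdisj 4 2 (by decide))
          (hdisj 4 3 (by decide)) (hdisj 0 1 (by decide)) (hdisj 0 2 (by decide))
          (hdisj 0 3 (by decide)) (hdisj 1 2 (by decide)) (hdisj 1 3 (by decide))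
          (hdisj 2 3 (by decide))
          h40c c01 c12 c23 c34 a41 a02 a13 a24 a30
          (hvA 4) (hvA 0) (hvA 1) (hvA 2) (hvA 3)
          (fun h => hnc ⟨h.2.1, h.2.2.1, h.2.2.2.1, h.2.2.2.2, h.1⟩)
          (ins 4) (ins 0) (ins 1) (ins 2) (ins 3)
          hxa hxb hvxa hvxb
      · by_contra hcon
        push_neg at hcon
        obtain ⟨⟨xa, hxa, hvxa⟩, ⟨xb, hxb, hvxb⟩⟩ := hcon
        exact pairCyc hbull hhouse (hne 0) (hne 1) (hne 2) (hne 3) (hne 4)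
          (hdisj 0 1 (by decide)) (hdisj 0 2 (by decide)) (hdisj 0 3 (by decide))
          (hdisj 0 4 (by decide)) (hdisj 1 2 (by decide)) (hdisj 1 3 (by decide))
          (hdisj 1 4 (by decide)) (hdisj 2 3 (by decide)) (hdisj 2 4 (by decide))
          (hdisj 3 4 (by decide))
          c01 c12 c23 c34 h40c a02 a13 a24 a30 a41
          (hvA 0) (hvA 1) (hvA 2) (hvA 3) (hvA 4)
          hnc ins0 ins1 ins2 ins3 ins4
          hxa hxb hvxa hvxb
      · by_contra hcon
        push_neg at hcon
        obtain ⟨⟨xa, hxa, hvxa⟩, ⟨xb, hxb, hvxb⟩⟩ := hcon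
        exact pairCyc hbull hhouse (hne 1) (hne 2) (hne 3) (hne 4) (hne 0)
          (hdisj 1 2 (by decide)) (hdisj 1 3 (by decide)) (hdisj 1 4 (by decide))
          (hdisj 1 0 (by decide)) (hdisj 2 3 (by decide)) (hdisj 2 4 (by decide))
          (hdisj 2 0 (by decide)) (hdisj 3 4 (by decide)) (hdisj 3 0 (by decide))
          (hdisj 4 0 (by decide))
          c12 c23 c34 h40c c01 a13 a24 a30 a41 a02
          (hvA 1) (hvA 2) (hvA 3) (hvA 4) (hvA 0)
          (fun h => hnc ⟨h.2.2.2.2, h.1, h.2.1, h.2.2.1, h.2.2.2.1⟩)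
          (ins 1) (ins 2) (ins 3) (ins 4) (ins 0)
          hxa hxb hvxa hvxb
      · by_contra hcon
        push_neg at hcon
        obtain ⟨⟨xa, hxa, hvxa⟩, ⟨xb, hxb, hvxb⟩⟩ := hcon
        exact pairCyc hbull hhouse (hne 2) (hne 3) (hne 4) (hne 0) (hne 1)
          (hdisj 2 3 (by decide)) (hdisj 2 4 (by decide)) (hdisj 2 0 (by decide))
          (hdisj 2 1 (by decide)) (hdisj 3 4 (by decide)) (hdisj 3 0 (by decide))
          (hdisj 3 1 (by decide)) (hdisj 4 0 (by decide)) (hdisj 4 1 (by decide))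
          (hdisj 0 1 (by decide))
          c23 c34 h40c c01 c12 a24 a30 a41 a02 a13
          (hvA 2) (hvA 3) (hvA 4) (hvA 0) (hvA 1)
          (fun h => hnc ⟨h.2.2.2.1, h.2.2.2.2, h.1, h.2.1, h.2.2.1⟩)
          (ins 2) (ins 3) (ins 4) (ins 0) (ins 1)
          hxa hxb hvxa hvxb
      · exact absurd rfl hi
    · intro hpre
      by_contra hcon
      push_neg at hcon
      obtain ⟨⟨xa, hxa, hvxa⟩, ⟨xb, hxb, hvxb⟩⟩ := hcon
      exact pairCyc hbull hhouse (hne 3) (hne 4) (hne 0) (hne 1) (hne 2)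
        (hdisj 3 4 (by decide)) (hdisj 3 0 (by decide)) (hdisj 3 1 (by decide))
        (hdisj 3 2 (by decide)) (hdisj 4 0 (by decide)) (hdisj 4 1 (by decide))
        (hdisj 4 2 (by decide)) (hdisj 0 1 (by decide)) (hdisj 0 2 (by decide))
        (hdisj 1 2 (by decide))
        c34 h40c c01 c12 c23 a30 a41 a02 a13 a24
        (hvA 3) (hvA 4) (hvA 0) (hvA 1) (hvA 2)
        (fun h => hnc ⟨h.2.2.1, h.2.2.2.1, h.2.2.2.2, h.1, h.2.1⟩)
        (ins 3) (ins 4) (ins 0) (ins 1) (ins 2)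
        hxa hxb hvxa hvxb
  · -- path case
    have insP := insert_contra_path hA hmax hv h40n
    have hins1A : (∀ y ∈ A 0, G.Adj v y) → (∀ y ∈ A 2, G.Adj v y) →
        (∀ y ∈ A 3, ¬ G.Adj v y) → (∀ y ∈ A 4, ¬ G.Adj v y) → False :=
      fun p q r s => insP 1 (fun _ => q) (fun _ => p) r s
        (fun h => absurd h (by decide)) (fun h => absurd h (by decide))
    have hins2A : (∀ y ∈ A 1, G.Adj v y) → (∀ y ∈ A 3, G.Adj v y) →
        (∀ y ∈ A 0, ¬ G.Adj v y) → (∀ y ∈ A 4, ¬ G.Adj v y) → False :=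
      fun p q r s => insP 2 (fun _ => q) (fun _ => p) s r
        (fun h => absurd h (by decide)) (fun h => absurd h (by decide))
    have hins1R : (∀ y ∈ A 4, G.Adj v y) → (∀ y ∈ A 2, G.Adj v y) →
        (∀ y ∈ A 1, ¬ G.Adj v y) → (∀ y ∈ A 0, ¬ G.Adj v y) → False :=
      fun p q r s => insP 3 (fun _ => p) (fun _ => q) s r
        (fun h => absurd h (by decide)) (fun h => absurd h (by decide))
    have hins2R : (∀ y ∈ A 3, G.Adj v y) → (∀ y ∈ A 1, G.Adj v y) →
        (∀ y ∈ A 4, ¬ G.Adj v y) → (∀ y ∈ A 0, ¬ G.Adj v y) → False :=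
      fun p q r s => insP 2 (fun _ => p) (fun _ => q) r s
        (fun h => absurd h (by decide)) (fun h => absurd h (by decide))
    have hmidA : ∀ x1 ∈ A 1, G.Adj v x1 → ∀ x2 ∈ A 2, G.Adj v x2 → False := by
      intro x1 hx1 hvx1 x2 hx2 hvx2
      exact pathMid hbull hhouse (hne 0) (hne 1) (hne 2) (hne 3) (hne 4)
        (hdisj 0 1 (by decide)) (hdisj 0 2 (by decide)) (hdisj 0 3 (by decide))
        (hdisj 0 4 (by decide)) (hdisj 1 2 (by decide)) (hdisj 1 3 (by decide))
        (hdisj 1 4 (by decide)) (hdisj 2 3 (by decide)) (hdisj 2 4 (by decide))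
        (hdisj 3 4 (by decide))
        c01 c12 c23 c34 a02 a13 a24 a30 a41 h40n
        (hvA 0) (hvA 1) (hvA 2) (hvA 3) (hvA 4)
        hnc hins1A hins2A hx1 hx2 hvx1 hvx2
    have hmidR : ∀ x1 ∈ A 3, G.Adj v x1 → ∀ x2 ∈ A 2, G.Adj v x2 → False := by
      intro x1 hx1 hvx1 x2 hx2 hvx2
      exact pathMid hbull hhouse (hne 4) (hne 3) (hne 2) (hne 1) (hne 0)
        (hdisj 4 3 (by decide)) (hdisj 4 2 (by decide)) (hdisj 4 1 (by decide))
        (hdisj 4 0 (by decide)) (hdisj 3 2 (by decide)) (hdisj 3 1 (by decide))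
        (hdisj 3 0 (by decide)) (hdisj 2 1 (by decide)) (hdisj 2 0 (by decide))
        (hdisj 1 0 (by decide))
        (symAll c34) (symAll c23) (symAll c12) (symAll c01)
        (symNo a24) (symNo a13) (symNo a02) (symNo a41) (symNo a30) (symNo h40n)
        (hvA 4) (hvA 3) (hvA 2) (hvA 1) (hvA 0)
        (fun h => hnc ⟨h.2.2.2.2, h.2.2.2.1, h.2.2.1, h.2.1, h.1⟩)
        hins1R hins2R hx1 hx2 hvx1 hvx2
    constructor
    · intro i hi
      fin_cases i
      · by_contra hcon
        push_neg at hcon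
        obtain ⟨⟨xa, hxa, hvxa⟩, ⟨xb, hxb, hvxb⟩⟩ := hcon
        exact pathEnd hbull hhouse (hne 0) (hne 1) (hne 2) (hne 3) (hne 4)
          (hdisj 0 1 (by decide)) (hdisj 0 2 (by decide)) (hdisj 0 3 (by decide))
          (hdisj 0 4 (by decide)) (hdisj 1 2 (by decide)) (hdisj 1 3 (by decide))
          (hdisj 1 4 (by decide)) (hdisj 2 3 (by decide)) (hdisj 2 4 (by decide))
          (hdisj 3 4 (by decide))
          c01 c12 c23 c34 a02 a13 a24 a30 a41 h40n
          (hvA 0) (hvA 1) (hvA 2) (hvA 3) (hvA 4)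
          (fun p q r s => insP 0 (fun _ => p) (fun h => absurd rfl h) q r
            (fun h => absurd h (by decide)) (fun _ => s))
          (fun y hy hady => hmidA xb hxb hvxb y hy hady)
          hxa hxb hvxa hvxb
      · by_contra hcon
        push_neg at hcon
        obtain ⟨⟨xa, hxa, hvxa⟩, ⟨xb, hxb, hvxb⟩⟩ := hcon
        exact hmidA xa hxa hvxa xb hxb hvxb
      · by_contra hcon
        push_neg at hcon
        obtain ⟨⟨xa, hxa, hvxa⟩, ⟨xb, hxb, hvxb⟩⟩ := hcon
        exact hmidR xb hxb hvxb xa hxa hvxa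
      · by_contra hcon
        push_neg at hcon
        obtain ⟨⟨xa, hxa, hvxa⟩, ⟨xb, hxb, hvxb⟩⟩ := hcon
        exact pathEnd hbull hhouse (hne 4) (hne 3) (hne 2) (hne 1) (hne 0)
          (hdisj 4 3 (by decide)) (hdisj 4 2 (by decide)) (hdisj 4 1 (by decide))
          (hdisj 4 0 (by decide)) (hdisj 3 2 (by decide)) (hdisj 3 1 (by decide))
          (hdisj 3 0 (by decide)) (hdisj 2 1 (by decide)) (hdisj 2 0 (by decide))
          (hdisj 1 0 (by decide))
          (symAll c34) (symAll c23) (symAll c12) (symAll c01)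
          (symNo a24) (symNo a13) (symNo a02) (symNo a41) (symNo a30) (symNo h40n)
          (hvA 4) (hvA 3) (hvA 2) (hvA 1) (hvA 0)
          (fun p q r s => insP 4 (fun h => absurd rfl h) (fun _ => p) r q
            (fun _ => s) (fun h => absurd h (by decide)))
          (fun y hy hady => hmidR xa hxa hvxa y hy hady)
          hxb hxa hvxb hvxa
      · exact absurd rfl hi
    · intro hpre
      obtain ⟨t, ht⟩ := hne 4
      obtain ⟨u, hu⟩ := hne 0
      exact absurd (hpre t ht u hu) (h40n t ht u hu)
end

section
/- In a bull-free graph G, let B = {v_1,...,v_ℓ} be the vertex set of an induced cycle of length ℓ ≥ 6 with edges v_i v_{i+1} (indices mod ℓ). Then for every vertex x outside B, the set N(x) ∩ B is either a stable set, or equal to B, or equal to {v_{i−1}, v_i, v_{i+1}} for some i, or equal to {v_{i−1}, v_i, v_{i+1}, v_{i+3}} for some i with ℓ = 6. -/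
open SimpleGraph

lemma bull_of {V : Type*} {G : SimpleGraph V} {a b c d e : V}
    (hab : G.Adj a b) (hac : G.Adj a c) (hbc : G.Adj b c)
    (had : G.Adj a d) (hbe : G.Adj b e)
    (hbd : ¬ G.Adj b d) (hcd : ¬ G.Adj c d) (hae : ¬ G.Adj a e)
    (hce : ¬ G.Adj c e) (hde : ¬ G.Adj d e) :
    Nonempty (bull ↪g G) := by
  have dab : a ≠ b := hab.ne
  have dac : a ≠ c := hac.ne
  have dbc : b ≠ c := hbc.ne
  have dad : a ≠ d := had.ne
  have dbe : b ≠ e := hbe.ne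
  have dbd : b ≠ d := fun h => hde (h ▸ hbe)
  have dcd : c ≠ d := fun h => hbd (h ▸ hbc)
  have dae : a ≠ e := fun h => hce (h ▸ hac.symm)
  have dce : c ≠ e := fun h => hae (h ▸ hac)
  have dde : d ≠ e := fun h => hae (h ▸ had)
  refine ⟨⟨⟨![a,b,c,d,e], ?_⟩, ?_⟩⟩
  · intro p q h
    fin_cases p <;> fin_cases q <;> simp_all
  · intro p q
    show G.Adj (![a,b,c,d,e] p) (![a,b,c,d,e] q) ↔ _
    fin_cases p <;> fin_cases q <;>
      simp [bull, SimpleGraph.fromRel_adj, hab, hac, hbc, had, hbe, hbd, hcd, hae, hce, hde,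
        hab.symm, hac.symm, hbc.symm, had.symm, hbe.symm, G.irrefl, adj_comm]

/-- In a bull-free graph, for an induced cycle `v : ZMod ℓ → V` of length `ℓ ≥ 6`, the
neighborhood on the cycle of any outside vertex is stable, all of the cycle, three
consecutive vertices, or (only if `ℓ = 6`) three consecutive vertices plus the opposite
one. -/
theorem stmt8 {V : Type*} (G : SimpleGraph V) (hbull : _root_.Free G bull)
    (ℓ : ℕ) (hℓ : 6 ≤ ℓ) (v : ZMod ℓ → V) (hinj : Function.Injective v)
    (hadj : ∀ i j, G.Adj (v i) (v j) ↔ (j = i + 1 ∨ i = j + 1)) :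
    ∀ x, x ∉ Set.range v →
      ({i | G.Adj x (v i)} : Set (ZMod ℓ)).Pairwise (fun i j => ¬ G.Adj (v i) (v j)) ∨
      {i | G.Adj x (v i)} = (Set.univ : Set (ZMod ℓ)) ∨
      (∃ i : ZMod ℓ, {j | G.Adj x (v j)} = ({i - 1, i, i + 1} : Set (ZMod ℓ))) ∨
      (ℓ = 6 ∧
        ∃ i : ZMod ℓ, {j | G.Adj x (v j)} = ({i - 1, i, i + 1, i + 3} : Set (ZMod ℓ))) := by
  haveI : NeZero ℓ := ⟨by omega⟩
  intro x hx
  have hzne : ∀ a b : ℕ, a < ℓ → b < ℓ → a ≠ b → (a : ZMod ℓ) ≠ (b : ZMod ℓ) := by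
    intro a b ha hb hab h
    apply hab
    rw [← ZMod.val_cast_of_lt (n := ℓ) ha, ← ZMod.val_cast_of_lt (n := ℓ) hb, h]
  have hnadj : ∀ i j : ZMod ℓ, j ≠ i + 1 → i ≠ j + 1 → ¬ G.Adj (v i) (v j) := by
    intro i j h1 h2 h
    rcases (hadj i j).1 h with h' | h'
    · exact h1 h'
    · exact h2 h'
  have hnn : ∀ (p : ZMod ℓ) (a b : ℕ), a < 5 → b < 5 → a + 1 ≠ b → b + 1 ≠ a →
      ¬ G.Adj (v (p + (a : ℕ))) (v (p + (b : ℕ))) := by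
    intro p a b ha hb h1 h2
    apply hnadj
    · intro h
      exact hzne b (a + 1) (by omega) (by omega) (by omega)
        (by push_cast at h ⊢; linear_combination h - (by ring : p + (b:ZMod ℓ) - (p + a + 1) = (b:ZMod ℓ) - (a+1)))
    · intro h
      exact hzne a (b + 1) (by omega) (by omega) (by omega)
        (by push_cast at h ⊢; linear_combination h)
  -- claim 1
  have claim1 : ∀ p : ZMod ℓ, G.Adj x (v (p+1)) → G.Adj x (v (p+2)) →
      G.Adj x (v p) ∨ G.Adj x (v (p+3)) := by
    intro p h1 h2
    by_contra hcon
    push_neg at hcon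
    obtain ⟨h0, h3⟩ := hcon
    exact hbull (bull_of (a := v (p+1)) (b := v (p+2)) (c := x) (d := v p) (e := v (p+3))
      ((hadj _ _).2 (Or.inl (by ring)))
      h1.symm h2.symm
      ((hadj _ _).2 (Or.inr (by ring)))
      ((hadj _ _).2 (Or.inl (by ring)))
      (by simpa using hnn p 2 0 (by norm_num) (by norm_num) (by norm_num) (by norm_num))
      h0
      (by simpa using hnn p 1 3 (by norm_num) (by norm_num) (by norm_num) (by norm_num))
      h3
      (by simpa using hnn p 0 3 (by norm_num) (by norm_num) (by norm_num) (by norm_num)))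
  have ext4 : ∀ p : ZMod ℓ, G.Adj x (v p) → G.Adj x (v (p+1)) → G.Adj x (v (p+2)) →
      G.Adj x (v (p+3)) → G.Adj x (v (p+4)) := by
    intro p h0 h1 h2 h3
    by_contra h4
    exact hbull (bull_of (a := x) (b := v (p+3)) (c := v (p+2)) (d := v p) (e := v (p+4))
      h3 h2 ((hadj _ _).2 (Or.inr (by ring)))
      h0 ((hadj _ _).2 (Or.inl (by ring)))
      (by simpa using hnn p 3 0 (by norm_num) (by norm_num) (by norm_num) (by norm_num))
      (by simpa using hnn p 2 0 (by norm_num) (by norm_num) (by norm_num) (by norm_num))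
      h4
      (by simpa using hnn p 2 4 (by norm_num) (by norm_num) (by norm_num) (by norm_num))
      (by simpa using hnn p 0 4 (by norm_num) (by norm_num) (by norm_num) (by norm_num)))
  by_cases hstab : ∃ i : ZMod ℓ, G.Adj x (v i) ∧ G.Adj x (v (i+1))
  swap
  · left
    rintro i hi j hj hij hA
    rcases (hadj i j).1 hA with h | h
    · exact hstab ⟨i, hi, by rw [← h]; exact hj⟩
    · exact hstab ⟨j, hj, by rw [← h]; exact hi⟩
  obtain ⟨i0, hA0, hA1⟩ := hstab
  by_cases huniv : ∀ j, G.Adj x (v j)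
  · right; left; ext j; simp [huniv j]
  push_neg at huniv
  obtain ⟨m0, hm0⟩ := huniv
  have hno4 : ∀ p : ZMod ℓ, G.Adj x (v p) → G.Adj x (v (p+1)) → G.Adj x (v (p+2)) →
      ¬ G.Adj x (v (p+3)) := by
    intro p h0 h1 h2 h3
    apply hm0
    have quad : ∀ k : ℕ, G.Adj x (v (p + k)) ∧ G.Adj x (v (p + k + 1)) ∧
        G.Adj x (v (p + k + 2)) ∧ G.Adj x (v (p + k + 3)) := by
      intro k
      induction k with
      | zero =>
          refine ⟨?_, ?_, ?_, ?_⟩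
          · convert h0 using 2; push_cast; ring
          · convert h1 using 2; push_cast; ring
          · convert h2 using 2; push_cast; ring
          · convert h3 using 2; push_cast; ring
      | succ n ih =>
          obtain ⟨q0, q1, q2, q3⟩ := ih
          have q4 := ext4 (p + (n:ℕ)) q0 q1 q2 q3
          refine ⟨?_, ?_, ?_, ?_⟩
          · convert q1 using 2; push_cast; ring
          · convert q2 using 2; push_cast; ring
          · convert q3 using 2; push_cast; ring
          · convert q4 using 2; push_cast; ring
    have e : (((m0 - p).val : ℕ) : ZMod ℓ) = m0 - p := ZMod.natCast_rightInverse _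
    have h := (quad (m0 - p).val).1
    rw [e] at h
    have e2 : p + (m0 - p) = m0 := by ring
    rwa [e2] at h
  obtain ⟨c, hc0, hc1, hc2⟩ :
      ∃ c : ZMod ℓ, G.Adj x (v c) ∧ G.Adj x (v (c+1)) ∧ G.Adj x (v (c+2)) := by
    rcases claim1 (i0 - 1) (by convert hA0 using 2; ring) (by convert hA1 using 2; ring) with h | h
    · exact ⟨i0 - 1, h, by convert hA0 using 2; ring, by convert hA1 using 2; ring⟩
    · exact ⟨i0, hA0, hA1, by convert h using 2; ring⟩
  have hc3 : ¬ G.Adj x (v (c+3)) := hno4 c hc0 hc1 hc2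
  have hcm1 : ¬ G.Adj x (v (c-1)) := fun h => hno4 (c-1) h
    (by convert hc0 using 2; ring) (by convert hc1 using 2; ring)
    (by convert hc2 using 2; ring)
  have claim3 : ∀ m : ZMod ℓ, G.Adj x (v m) → m ≠ c → m ≠ c + 1 → m ≠ c + 2 →
      m = c + 4 ∧ ℓ = 6 := by
    intro m hm hm0c hm1c hm2c
    have hmc3 : m ≠ c + 3 := fun h => hc3 (h ▸ hm)
    have hmcm1 : m ≠ c - 1 := fun h => hcm1 (h ▸ hm)
    have h1 : m = c + 4 := by
      by_contra hne
      exact hbull (bull_of (a := x) (b := v (c+2)) (c := v (c+1)) (d := v m) (e := v (c+3))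
        hc2 hc1 ((hadj _ _).2 (Or.inr (by ring)))
        hm ((hadj _ _).2 (Or.inl (by ring)))
        (hnadj _ _ (fun h => hmc3 (by first | linear_combination h | linear_combination -h))
          (fun h => hm1c (by first | linear_combination h | linear_combination -h)))
        (hnadj _ _ (fun h => hm2c (by first | linear_combination h | linear_combination -h))
          (fun h => hm0c (by first | linear_combination h | linear_combination -h)))
        hc3
        (by simpa using hnn c 1 3 (by norm_num) (by norm_num) (by norm_num) (by norm_num))
        (hnadj _ _ (fun h => hm2c (by first | linear_combination h | linear_combination -h))
          (fun h => hne (by first | linear_combination h | linear_combination -h))))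
    have h2 : m = c - 2 := by
      by_contra hne
      exact hbull (bull_of (a := x) (b := v c) (c := v (c+1)) (d := v m) (e := v (c-1))
        hc0 hc1 ((hadj _ _).2 (Or.inl rfl))
        hm ((hadj _ _).2 (Or.inr (by ring)))
        (hnadj _ _ (fun h => hm1c (by first | linear_combination h | linear_combination -h))
          (fun h => hmcm1 (by first | linear_combination h | linear_combination -h)))
        (hnadj _ _ (fun h => hm2c (by first | linear_combination h | linear_combination -h))
          (fun h => hm0c (by first | linear_combination h | linear_combination -h)))
        hcm1
        (hnadj _ _
          (fun h => hzne 0 3 (by omega) (by omega) (by omega)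
            (by push_cast; first | linear_combination h | linear_combination -h))
          (fun h => hzne 1 0 (by omega) (by omega) (by omega)
            (by push_cast; first | linear_combination h | linear_combination -h)))
        (hnadj _ _ (fun h => hne (by first | linear_combination h | linear_combination -h))
          (fun h => hm0c (by first | linear_combination h | linear_combination -h))))
    have h6 : ((6:ℕ) : ZMod ℓ) = 0 := by
      push_cast
      linear_combination h1.symm.trans h2
    have hdvd : ℓ ∣ 6 := (ZMod.natCast_eq_zero_iff 6 ℓ).1 h6
    have := Nat.le_of_dvd (by norm_num) hdvd
    exact ⟨h1, by omega⟩
  by_cases hext : ∃ m : ZMod ℓ, G.Adj x (v m) ∧ m ≠ c ∧ m ≠ c + 1 ∧ m ≠ c + 2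
  · obtain ⟨m, hm, h0, h1, h2⟩ := hext
    obtain ⟨hm4, hl6⟩ := claim3 m hm h0 h1 h2
    right; right; right
    refine ⟨hl6, c + 1, ?_⟩
    ext j
    simp only [Set.mem_setOf_eq, Set.mem_insert_iff, Set.mem_singleton_iff]
    constructor
    · intro hj
      by_cases j0 : j = c
      · left; rw [j0]; ring
      by_cases j1 : j = c + 1
      · right; left; exact j1
      by_cases j2 : j = c + 2
      · right; right; left; rw [j2]; ring
      · right; right; right
        rw [(claim3 j hj j0 j1 j2).1]; ring
    · rintro (h | h | h | h) <;> subst h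
      · convert hc0 using 2; ring
      · exact hc1
      · convert hc2 using 2; ring
      · have : G.Adj x (v (c+4)) := hm4 ▸ hm
        convert this using 2; ring
  · push_neg at hext
    right; right; left
    refine ⟨c + 1, ?_⟩
    ext j
    simp only [Set.mem_setOf_eq, Set.mem_insert_iff, Set.mem_singleton_iff]
    constructor
    · intro hj
      by_cases j0 : j = c
      · left; rw [j0]; ring
      by_cases j1 : j = c + 1
      · right; left; exact j1
      · right; right
        rw [hext j hj j0 j1]; ring
    · rintro (h | h | h) <;> subst h
      · convert hc0 using 2; ring
      · exact hc1
      · convert hc2 using 2; ring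
end

section
/- Let G be a (fork, bull)-free graph containing an induced 6-cycle v_1...v_6. If a vertex x outside the cycle has a neighborhood on the cycle that is a nonempty stable set not equal to the whole cycle's closed patterns, then N(x) restricted to the cycle equals {v_1,v_3,v_5} or {v_2,v_4,v_6}. More generally, in a (fork, bull)-free graph with an induced cycle of length ℓ ≥ 6, every vertex outside the cycle whose cycle-neighborhood is a nonempty stable set satisfies ℓ = 6 and is adjacent to exactly the three alternate vertices of the cycle. -/
open SimpleGraph

lemma fork_aux {V : Type*} (G : SimpleGraph V)
    {a b c d e : V}
    (hab : G.Adj a b) (hbc : G.Adj b c) (hcd : G.Adj c d) (hbe : G.Adj b e)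
    (hac : ¬ G.Adj a c) (had : ¬ G.Adj a d) (hae : ¬ G.Adj a e)
    (hbd : ¬ G.Adj b d) (hce : ¬ G.Adj c e) (hde : ¬ G.Adj d e)
    (hae' : a ≠ e) (hbd' : b ≠ d) :
    Nonempty (fork ↪g G) := by
  have hab' : a ≠ b := hab.ne
  have hbc' : b ≠ c := hbc.ne
  have hcd' : c ≠ d := hcd.ne
  have hbe' : b ≠ e := hbe.ne
  have hac' : a ≠ c := fun h => had (by rw [h]; exact hcd)
  have had' : a ≠ d := fun h => hac (by rw [h]; exact hcd.symm)
  have hce' : c ≠ e := fun h => hde (by rw [← h]; exact hcd.symm)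
  have hde' : d ≠ e := fun h => hbd (by rw [h]; exact hbe)
  refine ⟨⟨⟨![a,b,c,d,e], ?_⟩, ?_⟩⟩
  · intro i j hij
    fin_cases i <;> fin_cases j <;> simp_all
  · intro i j
    fin_cases i <;> fin_cases j <;>
      simp [fork, fromRel_adj, G.adj_comm] <;>
      first | rfl | assumption | exact hab.symm

/-- In a (fork, bull)-free graph with an induced cycle of length `ℓ ≥ 6`, any outside
vertex whose neighborhood on the cycle is a nonempty stable set forces `ℓ = 6` and is
adjacent to exactly the three alternate vertices of the cycle. -/
theorem stmt10 {V : Type*} (G : SimpleGraph V)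
    (hfork : _root_.Free G fork) (hbull : _root_.Free G bull)
    (ℓ : ℕ) (hℓ : 6 ≤ ℓ) (v : ZMod ℓ → V) (hinj : Function.Injective v)
    (hadj : ∀ i j, G.Adj (v i) (v j) ↔ (j = i + 1 ∨ i = j + 1))
    (x : V) (hx : x ∉ Set.range v)
    (hne : ({i | G.Adj x (v i)} : Set (ZMod ℓ)).Nonempty)
    (hstab : ({i | G.Adj x (v i)} : Set (ZMod ℓ)).Pairwise
      (fun i j => ¬ G.Adj (v i) (v j))) :
    ℓ = 6 ∧ ∃ i : ZMod ℓ, {j | G.Adj x (v j)} = ({i, i + 2, i + 4} : Set (ZMod ℓ)) := by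
  haveI : NeZero ℓ := ⟨by omega⟩
  have hxv : ∀ j, x ≠ v j := fun j h => hx ⟨j, h.symm⟩
  have hzero : ∀ k : ℕ, 0 < k → k < ℓ → ((k : ℕ) : ZMod ℓ) ≠ 0 := by
    intro k hk1 hk2 h
    rw [ZMod.natCast_eq_zero_iff] at h
    exact absurd (Nat.le_of_dvd hk1 h) (by omega)
  have z1 : (1 : ZMod ℓ) ≠ 0 := by simpa using hzero 1 (by norm_num) (by omega)
  have z2 : (2 : ZMod ℓ) ≠ 0 := by simpa using hzero 2 (by norm_num) (by omega)
  have z3 : (3 : ZMod ℓ) ≠ 0 := by simpa using hzero 3 (by norm_num) (by omega)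
  have z4 : (4 : ZMod ℓ) ≠ 0 := by simpa using hzero 4 (by norm_num) (by omega)
  have z5 : (5 : ZMod ℓ) ≠ 0 := by simpa using hzero 5 (by norm_num) (by omega)
  have hav : ∀ i : ZMod ℓ, G.Adj (v i) (v (i+1)) := fun i => (hadj i (i+1)).2 (Or.inl rfl)
  have hnv : ∀ i j : ZMod ℓ, j ≠ i + 1 → i ≠ j + 1 → ¬ G.Adj (v i) (v j) :=
    fun i j h1 h2 h => ((hadj i j).1 h).elim h1 h2
  -- x is not adjacent to two consecutive cycle vertices
  have hcons : ∀ i : ZMod ℓ, G.Adj x (v i) → ¬ G.Adj x (v (i+1)) := by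
    intro i hi h1
    exact hstab hi h1 (fun h => z1 (by linear_combination -h)) (hav i)
  have hcons' : ∀ i : ZMod ℓ, G.Adj x (v (i+1)) → ¬ G.Adj x (v i) := by
    intro i h1 hi
    exact hstab hi h1 (fun h => z1 (by linear_combination -h)) (hav i)
  -- key step: adjacency propagates two steps along the cycle
  have step : ∀ i : ZMod ℓ, G.Adj x (v (i+1)) → G.Adj x (v (i+3)) := by
    intro i h1
    by_contra h3
    refine hfork (fork_aux G (a := x) (b := v (i+1)) (c := v (i+2)) (d := v (i+3)) (e := v i)
      h1 ?_ ?_ ((hav i).symm) ?_ h3 (hcons' i h1) ?_ ?_ ?_ (hxv i) ?_)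
    · have := hav (i+1); rwa [show i+1+1 = i+2 by ring] at this
    · have := hav (i+2); rwa [show i+2+1 = i+3 by ring] at this
    · have := hcons (i+1) h1; rwa [show i+1+1 = i+2 by ring] at this
    · exact hnv (i+1) (i+3) (fun h => z1 (by linear_combination h)) (fun h => z3 (by linear_combination -h))
    · exact hnv (i+2) i (fun h => z3 (by linear_combination -h)) (fun h => z1 (by linear_combination h))
    · exact hnv (i+3) i (fun h => z4 (by linear_combination -h)) (fun h => z2 (by linear_combination h))
    · exact fun h => z2 (by linear_combination -(hinj h))
  have hl6 : ℓ = 6 := by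
    by_contra h6
    have z6 : (6 : ZMod ℓ) ≠ 0 := by simpa using hzero 6 (by norm_num) (by omega)
    obtain ⟨i0, hi0⟩ := hne
    have h1 : G.Adj x (v ((i0-1)+1)) := by rwa [show (i0-1)+1 = i0 by ring]
    set i := i0 - 1 with hidef
    have h3 := step i h1
    have h5 : G.Adj x (v (i+5)) := by
      have := step (i+2) (by rwa [show i+2+1 = i+3 by ring])
      rwa [show i+2+3 = i+5 by ring] at this
    refine hfork (fork_aux G (a := v (i+2)) (b := v (i+1)) (c := x) (d := v (i+5)) (e := v i)
      ?_ h1.symm h5 ((hav i).symm) ?_ ?_ ?_ ?_ (hcons' i h1) ?_ ?_ ?_)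
    · have h := hav (i+1); rw [show i+1+1 = i+2 by ring] at h; exact h.symm
    · intro h
      have := hcons (i+1) h1; rw [show i+1+1 = i+2 by ring] at this
      exact this h.symm
    · exact hnv (i+2) (i+5) (fun h => z2 (by linear_combination h)) (fun h => z4 (by linear_combination -h))
    · exact hnv (i+2) i (fun h => z3 (by linear_combination -h)) (fun h => z1 (by linear_combination h))
    · exact hnv (i+1) (i+5) (fun h => z3 (by linear_combination h)) (fun h => z5 (by linear_combination -h))
    · exact hnv (i+5) i (fun h => z6 (by linear_combination -h)) (fun h => z4 (by linear_combination h))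
    · exact fun h => z2 (by linear_combination hinj h)
    · exact fun h => z4 (by linear_combination -(hinj h))
  subst hl6
  obtain ⟨i0, hi0⟩ := hne
  have h2 : G.Adj x (v (i0+2)) := by
    have := step (i0-1) (by rwa [show i0-1+1 = i0 by ring])
    rwa [show i0-1+3 = i0+2 by ring] at this
  have h4 : G.Adj x (v (i0+4)) := by
    have := step (i0+1) (by rwa [show i0+1+1 = i0+2 by ring])
    rwa [show i0+1+3 = i0+4 by ring] at this
  refine ⟨rfl, i0, ?_⟩
  ext j
  simp only [Set.mem_setOf_eq, Set.mem_insert_iff, Set.mem_singleton_iff]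
  constructor
  · intro hj
    have hcases : ∀ e : ZMod 6, e = 0 ∨ e = 1 ∨ e = 2 ∨ e = 3 ∨ e = 4 ∨ e = 5 := by decide
    have hd : j = i0 + (j - i0) := by ring
    rcases hcases (j - i0) with h | h | h | h | h | h <;> rw [h] at hd
    · left; rw [hd]; ring
    · exfalso; exact hcons i0 hi0 (by rwa [hd] at hj)
    · right; left; exact hd
    · exfalso
      have := hcons (i0+2) h2; rw [show i0+2+1 = i0+3 by ring] at this
      exact this (by rwa [hd] at hj)
    · right; right; exact hd
    · exfalso
      have := hcons (i0+4) h4; rw [show i0+4+1 = i0+5 by ring] at this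
      exact this (by rwa [hd] at hj)
  · rintro (h | h | h) <;> rw [h] <;> assumption
end

section
/- Let H be a hyperhole of odd length ℓ ≥ 5, i.e., V(H) is partitioned into cliques A_1,...,A_ℓ with A_i complete to A_{i−1} ∪ A_{i+1} (indices mod ℓ) and anticomplete to all other A_j. Then χ(H) = max( ω(H), ⌈ 2|V(H)| / (ℓ−1) ⌉ ). -/
open SimpleGraph

/-- A hyperhole of length `ℓ`: the vertex set is partitioned into nonempty cliques
`A i` (`i : ZMod ℓ`), with `A i` complete to `A (i+1)` and anticomplete to all other
parts. -/
def IsHyperhole {V : Type*} (G : SimpleGraph V) {ℓ : ℕ} (A : ZMod ℓ → Set V) : Prop :=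
  (∀ i, (A i).Nonempty) ∧
  (∀ i j, i ≠ j → Disjoint (A i) (A j)) ∧
  ((⋃ i, A i) = Set.univ) ∧
  (∀ i, G.IsClique (A i)) ∧
  (∀ i, ∀ x ∈ A i, ∀ y ∈ A (i + 1), G.Adj x y) ∧
  (∀ i j, i ≠ j → j ≠ i + 1 → i ≠ j + 1 → ∀ x ∈ A i, ∀ y ∈ A j, ¬ G.Adj x y)

section HyperholeAux
open Finset

private lemma decomp_base (ℓ : ℕ) [NeZero ℓ] (k : ℕ) (a : ZMod ℓ → ℕ)
    (h1 : ∀ i, a i + a (i + 1) ≤ k) (z : ZMod ℓ) (hz : a z = 0) :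
    ∃ c : ZMod ℓ → Finset ℕ, (∀ i, c i ⊆ Finset.range k) ∧ (∀ i, (c i).card = a i) ∧
      (∀ i, Disjoint (c i) (c (i + 1))) := by
  classical
  set p : ℕ → ℕ := fun t => ∑ s ∈ Finset.range t, a (z + s) with hp
  have hpsucc : ∀ t, p (t + 1) = p t + a (z + t) := fun t => Finset.sum_range_succ _ t
  set c : ZMod ℓ → Finset ℕ :=
    fun i => (Finset.Ico (p (i - z).val) (p ((i - z).val + 1))).image (· % k) with hc
  have hzt : ∀ i : ZMod ℓ, z + ((i - z).val : ZMod ℓ) = i := by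
    intro i; rw [ZMod.natCast_zmod_val]; ring
  -- interval length is a i and ≤ k
  have hlen : ∀ i : ZMod ℓ, p ((i - z).val + 1) = p (i - z).val + a i := by
    intro i; rw [hpsucc, hzt]
  have hak : ∀ i, a i ≤ k := fun i => le_trans (Nat.le_add_right _ _) (h1 i)
  have hsub : ∀ i, c i ⊆ Finset.range k := by
    intro i y hy
    simp only [hc, Finset.mem_image] at hy
    obtain ⟨x, hx, rfl⟩ := hy
    rw [hlen i] at hx
    simp only [Finset.mem_Ico] at hx
    have hai : 0 < a i := by omega
    have hk : 0 < k := lt_of_lt_of_le hai (hak i)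
    simpa using Nat.mod_lt _ hk
  have hinj : ∀ n, Set.InjOn (· % k) (Finset.Ico (p n) (p n + a (z + n)) : Finset ℕ) := by
    intro n
    exact (Nat.mod_injOn_Ico (p n) k).mono (by
      intro x hx
      simp only [Finset.coe_Ico, Set.mem_Ico] at hx ⊢
      exact ⟨hx.1, lt_of_lt_of_le hx.2 (by have := hak (z + n); omega)⟩)
  have hcard : ∀ i, (c i).card = a i := by
    intro i
    rw [hc]
    have := hinj (i - z).val
    rw [hzt] at this
    rw [Finset.card_image_of_injOn (by rw [hlen i] at *; exact this)]
    rw [Nat.card_Ico, hlen i]; omega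
  refine ⟨c, hsub, hcard, ?_⟩
  intro i
  -- case i + 1 = z : c (i+1) is empty
  by_cases hiz : i + 1 = z
  · have : c (i + 1) = ∅ := by
      have : a (i + 1) = 0 := by rw [hiz, hz]
      have h0 := hcard (i + 1)
      rw [this] at h0
      exact Finset.card_eq_zero.mp h0
    simp [this]
  · -- (i+1-z).val = (i-z).val + 1
    have hvlt : (i - z).val < ℓ := ZMod.val_lt _
    have hne : (i - z).val ≠ ℓ - 1 := by
      intro h
      apply hiz
      have : i - z = ((ℓ - 1 : ℕ) : ZMod ℓ) := by rw [← h, ZMod.natCast_zmod_val]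
      have hℓ : (ℓ : ZMod ℓ) = 0 := ZMod.natCast_self ℓ
      have h1ℓ : 1 ≤ ℓ := Nat.one_le_iff_ne_zero.mpr (NeZero.ne ℓ)
      have : i - z = (ℓ : ZMod ℓ) - 1 := by
        rw [this]
        push_cast [h1ℓ]
        ring
      rw [hℓ] at this
      have : i = z - 1 := by linear_combination this
      rw [this]; ring
    have hval1 : (i + 1 - z).val = (i - z).val + 1 := by
      have : i + 1 - z = (((i - z).val + 1 : ℕ) : ZMod ℓ) := by
        push_cast [ZMod.natCast_zmod_val]
        ring
      rw [this, ZMod.val_cast_of_lt (by omega)]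
    rw [Finset.disjoint_left]
    intro u hu hu'
    simp only [hc, Finset.mem_image] at hu hu'
    obtain ⟨x, hx, hxu⟩ := hu
    obtain ⟨y, hy, hyu⟩ := hu'
    rw [hlen i, Finset.mem_Ico] at hx
    have h2' := hlen (i + 1)
    rw [hval1] at h2'
    rw [hval1, h2', hlen i, Finset.mem_Ico] at hy
    have hk : 0 < k := lt_of_lt_of_le (by omega : 0 < a (i + 1)) (hak (i + 1))
    have hxy : x < y := by omega
    have hdvd : k ∣ y - x := (Nat.modEq_iff_dvd' hxy.le).mp (by
      have : x % k = y % k := by rw [hxu, hyu]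
      exact this)
    have hlt : y - x < k := by have := h1 i; omega
    have : y - x = 0 := Nat.eq_zero_of_dvd_of_lt hdvd hlt
    omega

private lemma decomp (ℓ : ℕ) (hℓ : 5 ≤ ℓ) (hodd : Odd ℓ) :
    ∀ (k : ℕ) (a : ZMod ℓ → ℕ), (∀ i, a i + a (i + 1) ≤ k) →
    (haveI : NeZero ℓ := ⟨by omega⟩; 2 * ∑ i, a i ≤ k * (ℓ - 1)) →
    ∃ c : ZMod ℓ → Finset ℕ, (∀ i, c i ⊆ Finset.range k) ∧ (∀ i, (c i).card = a i) ∧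
      (∀ i, Disjoint (c i) (c (i + 1))) := by
  haveI : NeZero ℓ := ⟨by omega⟩
  classical
  intro k
  induction k with
  | zero =>
    intro a h1 _
    exact ⟨fun _ => ∅, fun i => by simp, fun i => by have := h1 i; simp; omega, fun i => by simp⟩
  | succ k ih =>
    intro a h1 h2
    by_cases hz : ∃ z, a z = 0
    · obtain ⟨z, hz⟩ := hz
      exact decomp_base ℓ (k + 1) a h1 z hz
    push_neg at hz
    set α := (ℓ - 1) / 2 with hα
    have h2α : 2 * α = ℓ - 1 := by
      obtain ⟨t, ht⟩ := hodd; omega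
    -- sum shift identity
    have hshift : ∑ i : ZMod ℓ, a (i + 1) = ∑ i : ZMod ℓ, a i :=
      Fintype.sum_equiv (Equiv.addRight 1) _ _ (fun i => rfl)
    -- find a non-tight edge
    have hnt : ∃ i1 : ZMod ℓ, a i1 + a (i1 + 1) ≤ k := by
      by_contra h
      push_neg at h
      have hsum : (k + 1) * ℓ ≤ ∑ i : ZMod ℓ, (a i + a (i + 1)) := by
        calc (k + 1) * ℓ = ∑ _i : ZMod ℓ, (k + 1) := by
              simp [Finset.sum_const, ZMod.card]; ring
          _ ≤ _ := Finset.sum_le_sum (fun i _ => (h i))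
      rw [Finset.sum_add_distrib, hshift] at hsum
      have hmul : (k + 1) * ℓ = (k + 1) * (ℓ - 1) + (k + 1) := by
        have h1ℓ : ℓ - 1 + 1 = ℓ := by omega
        calc (k + 1) * ℓ = (k + 1) * ((ℓ - 1) + 1) := by rw [h1ℓ]
          _ = (k + 1) * (ℓ - 1) + (k + 1) := by ring
      omega
    obtain ⟨i1, hi1⟩ := hnt
    set i0 := i1 + 1 with hi0
    set S : Finset (ZMod ℓ) := (Finset.range α).image (fun j => i0 + ((2 * j + 1 : ℕ) : ZMod ℓ)) with hS
    have hmemS : ∀ i : ZMod ℓ, i ∈ S ↔ ∃ j < α, i = i0 + ((2 * j + 1 : ℕ) : ZMod ℓ) := by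
      intro i
      simp only [hS, Finset.mem_image, Finset.mem_range]
      constructor
      · rintro ⟨j, hj, rfl⟩; exact ⟨j, hj, rfl⟩
      · rintro ⟨j, hj, rfl⟩; exact ⟨j, hj, rfl⟩
    have hcardS : S.card = α := by
      rw [hS, Finset.card_image_of_injOn, Finset.card_range]
      intro j hj j' hj' hee
      simp only [Finset.coe_range, Set.mem_Iio] at hj hj'
      have : ((2 * j + 1 : ℕ) : ZMod ℓ) = ((2 * j' + 1 : ℕ) : ZMod ℓ) := by
        have := add_left_cancel hee
        exact this
      have := congrArg ZMod.val this
      rw [ZMod.val_cast_of_lt (by omega), ZMod.val_cast_of_lt (by omega)] at this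
      omega
    -- S is independent
    have hindep : ∀ i : ZMod ℓ, ¬(i ∈ S ∧ i + 1 ∈ S) := by
      rintro i ⟨hi, hi'⟩
      rw [hmemS] at hi hi'
      obtain ⟨j, hj, rfl⟩ := hi
      obtain ⟨j', hj', he⟩ := hi'
      have : ((2 * j + 2 : ℕ) : ZMod ℓ) = ((2 * j' + 1 : ℕ) : ZMod ℓ) := by
        have : i0 + ((2 * j + 1 : ℕ) : ZMod ℓ) + 1 = i0 + ((2 * j' + 1 : ℕ) : ZMod ℓ) := he
        push_cast at this ⊢
        linear_combination this
      have := congrArg ZMod.val this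
      rw [ZMod.val_cast_of_lt (by omega), ZMod.val_cast_of_lt (by omega)] at this
      omega
    -- S covers all edges except (i1, i1+1)
    have hcover : ∀ i : ZMod ℓ, i ≠ i1 → i ∈ S ∨ i + 1 ∈ S := by
      intro i hne
      set t := (i - i0).val with ht
      have htl : t < ℓ := ZMod.val_lt _
      have hit : i = i0 + (t : ZMod ℓ) := by rw [ht, ZMod.natCast_zmod_val]; ring
      have htne : t ≠ ℓ - 1 := by
        intro h
        apply hne
        rw [hit, h]
        have : ((ℓ - 1 : ℕ) : ZMod ℓ) = -1 := by
          have h1ℓ : 1 ≤ ℓ := by omega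
          have : ((ℓ - 1 : ℕ) : ZMod ℓ) = (ℓ : ZMod ℓ) - 1 := by push_cast [h1ℓ]; ring
          rw [this, ZMod.natCast_self]; ring
        rw [this, hi0]; ring
      rcases Nat.even_or_odd t with he | ho
      · right
        rw [hmemS]
        obtain ⟨j, hj⟩ := he
        refine ⟨j, by omega, ?_⟩
        rw [hit]
        push_cast
        ring_nf
        rw [hj]
        push_cast
        ring
      · left
        rw [hmemS]
        obtain ⟨j, hj⟩ := ho
        exact ⟨j, by omega, by rw [hit, hj]⟩
    -- new multiplicities
    set a' : ZMod ℓ → ℕ := fun i => if i ∈ S then a i - 1 else a i with ha'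
    have ha'i : ∀ i, a' i = if i ∈ S then a i - 1 else a i := fun i => rfl
    have ha'le : ∀ i, a' i ≤ a i := by
      intro i; rw [ha'i]; split <;> omega
    have h1' : ∀ i, a' i + a' (i + 1) ≤ k := by
      intro i
      have e1 := ha'i i
      have e2 := ha'i (i + 1)
      by_cases hi : i ∈ S <;> by_cases hi' : i + 1 ∈ S
      · exact absurd ⟨hi, hi'⟩ (hindep i)
      · rw [if_pos hi] at e1; rw [if_neg hi'] at e2
        have := hz i; have := h1 i; omega
      · rw [if_neg hi] at e1; rw [if_pos hi'] at e2
        have := hz (i + 1); have := h1 i; omega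
      · rw [if_neg hi] at e1; rw [if_neg hi'] at e2
        have hii : i = i1 := by
          by_contra hne
          rcases hcover i hne with h | h
          exacts [hi h, hi' h]
        rw [e1, e2, hii]
        exact hi1
    have hsum' : ∑ i, a' i = (∑ i, a i) - α := by
      have hfe : ∀ i, a' i = a i - (if i ∈ S then 1 else 0) := by
        intro i; rw [ha'i]; split <;> simp
      have hg : ∀ x ∈ (Finset.univ : Finset (ZMod ℓ)), (if x ∈ S then 1 else 0) ≤ a x := by
        intro x _
        split
        · exact Nat.pos_of_ne_zero (hz x)
        · exact Nat.zero_le _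
      have hind : ∑ x : ZMod ℓ, (if x ∈ S then (1 : ℕ) else 0) = α := by
        rw [Finset.sum_ite_mem, Finset.univ_inter, Finset.sum_const, smul_eq_mul, mul_one, hcardS]
      calc ∑ i, a' i = ∑ i, (a i - (if i ∈ S then 1 else 0)) := by
            exact Finset.sum_congr rfl (fun i _ => hfe i)
        _ = (∑ i, a i) - ∑ i : ZMod ℓ, (if i ∈ S then (1 : ℕ) else 0) :=
            Finset.sum_tsub_distrib _ hg
        _ = (∑ i, a i) - α := by rw [hind]
    have hsumge : α ≤ ∑ i, a i := by
      calc α = S.card := hcardS.symm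
        _ = ∑ i ∈ S, 1 := by simp
        _ ≤ ∑ i ∈ S, a i := Finset.sum_le_sum (fun i _ => Nat.pos_of_ne_zero (hz i))
        _ ≤ ∑ i, a i := Finset.sum_le_sum_of_subset (Finset.subset_univ S)
    have h2' : 2 * ∑ i, a' i ≤ k * (ℓ - 1) := by
      rw [hsum']
      have hme : (k + 1) * (ℓ - 1) = k * (ℓ - 1) + (ℓ - 1) := by ring
      omega
    obtain ⟨c', hc'sub, hc'card, hc'disj⟩ := ih a' h1' h2'
    have hknotmem : ∀ i, k ∉ c' i := by
      intro i hmem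
      have := hc'sub i hmem
      simp at this
    refine ⟨fun i => if i ∈ S then insert k (c' i) else c' i, ?_, ?_, ?_⟩
    · intro i y hy
      replace hy : y ∈ (if i ∈ S then insert k (c' i) else c' i) := hy
      by_cases hi : i ∈ S
      · rw [if_pos hi] at hy
        rcases Finset.mem_insert.mp hy with rfl | hy
        · simp
        · exact Finset.range_subset_range.mpr (Nat.le_succ k) (hc'sub i hy)
      · rw [if_neg hi] at hy
        exact Finset.range_subset_range.mpr (Nat.le_succ k) (hc'sub i hy)
    · intro i
      show (if i ∈ S then insert k (c' i) else c' i).card = a i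
      by_cases hi : i ∈ S
      · rw [if_pos hi, Finset.card_insert_of_notMem (hknotmem i), hc'card]
        have e1 := ha'i i
        rw [if_pos hi] at e1
        have := hz i
        omega
      · rw [if_neg hi, hc'card]
        have e1 := ha'i i
        rw [if_neg hi] at e1
        omega
    · intro i
      rw [Finset.disjoint_left]
      intro x hx hx'
      replace hx : x ∈ (if i ∈ S then insert k (c' i) else c' i) := hx
      replace hx' : x ∈ (if i + 1 ∈ S then insert k (c' (i + 1)) else c' (i + 1)) := hx'
      by_cases hi : i ∈ S <;> by_cases hi' : i + 1 ∈ S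
      · exact hindep i ⟨hi, hi'⟩
      · rw [if_pos hi] at hx; rw [if_neg hi'] at hx'
        rcases Finset.mem_insert.mp hx with rfl | hx
        · exact hknotmem _ hx'
        · exact (Finset.disjoint_left.mp (hc'disj i) hx) hx'
      · rw [if_neg hi] at hx; rw [if_pos hi'] at hx'
        rcases Finset.mem_insert.mp hx' with h | hx'
        · exact hknotmem _ (h ▸ hx)
        · exact (Finset.disjoint_left.mp (hc'disj i) hx) hx'
      · rw [if_neg hi] at hx; rw [if_neg hi'] at hx'
        exact (Finset.disjoint_left.mp (hc'disj i) hx) hx'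

end HyperholeAux

/-- The chromatic number of a hyperhole of odd length `ℓ ≥ 5` is
`max(ω(H), ⌈2|V(H)|/(ℓ-1)⌉)` (the ceiling is expressed via natural division). -/
theorem stmt11 {V : Type*} [Fintype V] (G : SimpleGraph V)
    (ℓ : ℕ) (hℓ : 5 ≤ ℓ) (hodd : Odd ℓ)
    (A : ZMod ℓ → Set V) (hA : IsHyperhole G A) :
    G.chromaticNumber =
      ((max G.cliqueNum ((2 * Fintype.card V + ℓ - 2) / (ℓ - 1)) : ℕ) : ℕ∞) := by
  classical
  haveI : NeZero ℓ := ⟨by omega⟩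
  haveI : Fact (1 < ℓ) := ⟨by omega⟩
  obtain ⟨hne, hdisj, hcover, hclique, hcomp, hanti⟩ := hA
  set N := Fintype.card V with hN
  set m := (2 * N + ℓ - 2) / (ℓ - 1) with hm
  set K := max G.cliqueNum m with hK
  have h2α : 2 * ((ℓ - 1) / 2) = ℓ - 1 := by obtain ⟨t, ht⟩ := hodd; omega
  have hex : ∀ v : V, ∃ i, v ∈ A i := by
    intro v
    have : v ∈ ⋃ i, A i := hcover ▸ Set.mem_univ v
    simpa [Set.mem_iUnion] using this
  choose idx hidx using hex
  set B : ZMod ℓ → Finset V := fun i => (A i).toFinset with hB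
  have hmemB : ∀ i (v : V), v ∈ B i ↔ v ∈ A i := by intro i v; simp [hB]
  set a : ZMod ℓ → ℕ := fun i => (B i).card with ha
  have hadj_cases : ∀ v w, G.Adj v w →
      idx v = idx w ∨ idx w = idx v + 1 ∨ idx v = idx w + 1 := by
    intro v w hvw
    by_contra h
    push_neg at h
    exact hanti (idx v) (idx w) h.1 h.2.1 h.2.2 v (hidx v) w (hidx w) hvw
  have hsumB : ∑ i, a i = N := by
    rw [hN, ← Finset.card_univ]
    rw [show (Finset.univ : Finset V) = Finset.univ.biUnion B from ?_]
    · rw [Finset.card_biUnion]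
      intro i _ j _ hij
      rw [Function.onFun, Finset.disjoint_left]
      intro x hx hx'
      exact Set.disjoint_left.mp (hdisj i j hij) ((hmemB i x).mp hx) ((hmemB j x).mp hx')
    · symm
      apply Finset.eq_univ_of_forall
      intro v
      exact Finset.mem_biUnion.mpr ⟨idx v, Finset.mem_univ _, (hmemB _ v).mpr (hidx v)⟩
  have hcliq : ∀ i, a i + a (i + 1) ≤ G.cliqueNum := by
    intro i
    have hiu : i ≠ i + 1 := fun h => one_ne_zero (left_eq_add.mp h)
    have hdisjB : Disjoint (B i) (B (i + 1)) := by
      rw [Finset.disjoint_left]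
      intro x hx hx'
      exact Set.disjoint_left.mp (hdisj i (i + 1) hiu) ((hmemB i x).mp hx) ((hmemB _ x).mp hx')
    have hcl : G.IsClique ((B i ∪ B (i + 1) : Finset V) : Set V) := by
      intro x hx y hy hxy
      simp only [Finset.coe_union, Set.mem_union, Finset.mem_coe, hmemB] at hx hy
      rcases hx with hx | hx <;> rcases hy with hy | hy
      · exact hclique i hx hy hxy
      · exact hcomp i x hx y hy
      · exact (hcomp i y hy x hx).symm
      · exact hclique (i + 1) hx hy hxy
    have := SimpleGraph.IsClique.card_le_cliqueNum (tc := hcl)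
    rwa [Finset.card_union_of_disjoint hdisjB] at this
  -- upper bound
  have hcolK : G.Colorable K := by
    have h1 : ∀ i, a i + a (i + 1) ≤ K := fun i => le_trans (hcliq i) (le_max_left _ _)
    have h2 : 2 * ∑ i, a i ≤ K * (ℓ - 1) := by
      have hdm := Nat.div_add_mod (2 * N + ℓ - 2) (ℓ - 1)
      have hmlt : (2 * N + ℓ - 2) % (ℓ - 1) < ℓ - 1 := Nat.mod_lt _ (by omega)
      have h3 : m * (ℓ - 1) ≤ K * (ℓ - 1) := Nat.mul_le_mul_right _ (le_max_right _ _)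
      have hcomm : (ℓ - 1) * m = m * (ℓ - 1) := Nat.mul_comm _ _
      rw [← hm] at hdm
      rw [hsumB]
      omega
    obtain ⟨c, hcsub, hccard, hcdisj⟩ := decomp ℓ hℓ hodd K a h1 h2
    have hcards : ∀ i, (B i).card = (c i).card := fun i => (hccard i).symm
    set e : ∀ i : ZMod ℓ, {x // x ∈ B i} ≃ {x // x ∈ c i} :=
      fun i => Finset.equivOfCardEq (hcards i) with he
    set col : V → ℕ :=
      fun v => (e (idx v) ⟨v, (hmemB _ v).mpr (hidx v)⟩ : ℕ) with hcol
    have hcol_eq : ∀ (v : V) (i : ZMod ℓ) (h : idx v = i) (hv : v ∈ B i),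
        col v = (e i ⟨v, hv⟩ : ℕ) := by
      intro v i h hv
      subst h
      rfl
    have hmemcol : ∀ v : V, col v ∈ c (idx v) :=
      fun v => (e (idx v) ⟨v, (hmemB _ v).mpr (hidx v)⟩).2
    have hltK : ∀ v : V, col v < K := by
      intro v
      have := hcsub (idx v) (hmemcol v)
      simpa using this
    refine ⟨SimpleGraph.Coloring.mk (fun v => (⟨col v, hltK v⟩ : Fin K)) ?_⟩
    intro v w hvw hcc
    have hcc' : col v = col w := congrArg Fin.val hcc
    rcases hadj_cases v w hvw with h | h | h
    · have hw' : w ∈ B (idx v) := (hmemB _ w).mpr (by rw [h]; exact hidx w)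
      have e1 := hcol_eq v (idx v) rfl ((hmemB _ v).mpr (hidx v))
      have e2 := hcol_eq w (idx v) h.symm hw'
      have hveq : (⟨v, (hmemB _ v).mpr (hidx v)⟩ : {x // x ∈ B (idx v)}) = ⟨w, hw'⟩ :=
        (e (idx v)).injective (Subtype.ext (by rw [← e1, ← e2, hcc']))
      exact hvw.ne (congrArg Subtype.val hveq)
    · have m1 : col v ∈ c (idx v) := hmemcol v
      have m2 : col w ∈ c (idx w) := hmemcol w
      rw [h] at m2
      rw [hcc'] at m1
      exact Finset.disjoint_left.mp (hcdisj (idx v)) m1 m2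
    · have m1 : col v ∈ c (idx v) := hmemcol v
      have m2 : col w ∈ c (idx w) := hmemcol w
      rw [h] at m1
      rw [hcc'] at m1
      exact Finset.disjoint_left.mp (hcdisj (idx w)) m2 m1
  -- lower bound: cliqueNum
  have hlow1 : (G.cliqueNum : ℕ∞) ≤ G.chromaticNumber := by
    obtain ⟨s, hs⟩ := G.exists_isNClique_cliqueNum
    have := hs.isClique.card_le_chromaticNumber
    rwa [hs.card_eq] at this
  have hχne : G.chromaticNumber ≠ ⊤ := by
    intro h
    have := hcolK.chromaticNumber_le
    rw [h] at this
    simp at this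
  set n := G.chromaticNumber.toNat with hn
  have hχ : G.chromaticNumber = (n : ℕ∞) := (ENat.coe_toNat hχne).symm
  have hcoln : G.Colorable n := G.colorable_chromaticNumber_of_fintype
  have hlow2 : m ≤ n := by
    obtain ⟨C⟩ := hcoln
    have hfib : ∀ b : Fin n, (Finset.univ.filter (fun v => C v = b)).card ≤ (ℓ - 1) / 2 := by
      intro b
      set W := Finset.univ.filter (fun v => C v = b) with hW
      set T : Finset (ZMod ℓ) := W.image idx with hT
      have hWT : W.card = T.card := by
        rw [hT]
        refine (Finset.card_image_of_injOn ?_).symm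
        intro v hv w hw hvw
        by_contra hne'
        have hadj : G.Adj v w := hclique (idx v) (hidx v) (by rw [hvw]; exact hidx w) hne'
        apply C.valid hadj
        simp only [hW, Finset.mem_coe, Finset.mem_filter] at hv hw
        rw [hv.2, hw.2]
      have hTcons : ∀ i : ZMod ℓ, ¬(i ∈ T ∧ i + 1 ∈ T) := by
        rintro i ⟨hi, hi'⟩
        simp only [hT, Finset.mem_image] at hi hi'
        obtain ⟨v, hv, hv2⟩ := hi
        obtain ⟨w, hw, hw2⟩ := hi'
        have hadj : G.Adj v w := hcomp i v (by rw [← hv2]; exact hidx v) w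
          (by rw [← hw2]; exact hidx w)
        apply C.valid hadj
        simp only [hW, Finset.mem_filter] at hv hw
        rw [hv.2, hw.2]
      have hdisjT : Disjoint T (T.image (· + 1)) := by
        rw [Finset.disjoint_left]
        intro x hx hx'
        simp only [Finset.mem_image] at hx'
        obtain ⟨y, hy, rfl⟩ := hx'
        exact hTcons y ⟨hy, hx⟩
      have hcT : T.card + T.card ≤ ℓ := by
        have hun := Finset.card_union_of_disjoint hdisjT
        have him : (T.image (· + 1)).card = T.card :=
          Finset.card_image_of_injective _ (add_left_injective 1)
        have hle : (T ∪ T.image (· + 1)).card ≤ ℓ := by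
          have := Finset.card_le_univ (T ∪ T.image (· + 1))
          have h2 : Fintype.card (ZMod ℓ) = ℓ := ZMod.card ℓ
          omega
        omega
      omega
    have hNsum : N = ∑ b : Fin n, (Finset.univ.filter (fun v => C v = b)).card := by
      have hfw := Finset.card_eq_sum_card_fiberwise
        (f := C) (s := Finset.univ) (t := Finset.univ) (fun v _ => Finset.mem_univ (C v))
      rw [Finset.card_univ] at hfw
      rw [hN]
      exact hfw
    have hNle : N ≤ n * ((ℓ - 1) / 2) := by
      rw [hNsum]
      calc ∑ b : Fin n, (Finset.univ.filter (fun v => C v = b)).card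
          ≤ ∑ _b : Fin n, (ℓ - 1) / 2 := Finset.sum_le_sum (fun b _ => hfib b)
        _ = n * ((ℓ - 1) / 2) := by
            rw [Finset.sum_const, Finset.card_univ, Fintype.card_fin, smul_eq_mul]
    have h2N : 2 * N ≤ n * (ℓ - 1) := by
      calc 2 * N ≤ 2 * (n * ((ℓ - 1) / 2)) := by omega
        _ = n * (2 * ((ℓ - 1) / 2)) := by ring
        _ = n * (ℓ - 1) := by rw [h2α]
    rw [hm]
    have hstep : 2 * N + ℓ - 2 ≤ n * (ℓ - 1) + (ℓ - 2) := by omega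
    calc (2 * N + ℓ - 2) / (ℓ - 1) ≤ (n * (ℓ - 1) + (ℓ - 2)) / (ℓ - 1) :=
          Nat.div_le_div_right hstep
      _ = n := by
          rw [show n * (ℓ - 1) + (ℓ - 2) = (ℓ - 2) + (ℓ - 1) * n by ring,
            Nat.add_mul_div_left _ _ (by omega : 0 < ℓ - 1),
            Nat.div_eq_of_lt (by omega : ℓ - 2 < ℓ - 1)]
          omega
  have hnK : n ≤ K := by
    have := hcolK.chromaticNumber_le
    rw [hχ] at this
    exact_mod_cast this
  have hKn : K ≤ n := by
    have h1 : G.cliqueNum ≤ n := by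
      rw [hχ] at hlow1
      exact_mod_cast hlow1
    exact max_le h1 hlow2
  have hfinal : n = K := le_antisymm hnK hKn
  rw [hχ, hfinal]
end

section
/- Let G be a prime (fork, bull)-free graph with no hole of length at least 6 containing an induced path v_1-v_2-v_3-v_4-v_5 = B. Then every vertex x outside B with N(x) ∩ B nonempty and not equal to B satisfies: N(x) ∩ B is one of {v_1}, {v_5}, {v_1,v_2}, {v_4,v_5}, {v_2,v_4}, {v_1,v_2,v_3}, {v_2,v_3,v_4}, {v_3,v_4,v_5}, {v_1,v_3,v_5}, {v_1,v_3,v_4,v_5}, {v_1,v_2,v_3,v_5}. -/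
open SimpleGraph

lemma emb5 {V : Type*} (G : SimpleGraph V) (H : SimpleGraph (Fin 5)) (f : Fin 5 → V)
    (hinj : ∀ i j : Fin 5, i ≠ j → f i ≠ f j)
    (hadj : ∀ i j : Fin 5, G.Adj (f i) (f j) ↔ H.Adj i j) : Nonempty (H ↪g G) :=
  ⟨⟨⟨f, fun i j h => Classical.byContradiction fun hne => hinj i j hne h⟩, hadj _ _⟩⟩

lemma emb6 {V : Type*} (G : SimpleGraph V) (f : Fin 6 → V)
    (hinj : ∀ i j : Fin 6, i ≠ j → f i ≠ f j)
    (hadj : ∀ i j : Fin 6, G.Adj (f i) (f j) ↔ (SimpleGraph.cycleGraph 6).Adj i j) :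
    Nonempty (SimpleGraph.cycleGraph 6 ↪g G) :=
  ⟨⟨⟨f, fun i j h => Classical.byContradiction fun hne => hinj i j hne h⟩, hadj _ _⟩⟩

lemma cv6_0 {α : Type*} (a b c d e f : α) (h : 0 < 6) : ![a,b,c,d,e,f] ⟨0,h⟩ = a := rfl
lemma cv6_1 {α : Type*} (a b c d e f : α) (h : 1 < 6) : ![a,b,c,d,e,f] ⟨1,h⟩ = b := rfl
lemma cv6_2 {α : Type*} (a b c d e f : α) (h : 2 < 6) : ![a,b,c,d,e,f] ⟨2,h⟩ = c := rfl
lemma cv6_3 {α : Type*} (a b c d e f : α) (h : 3 < 6) : ![a,b,c,d,e,f] ⟨3,h⟩ = d := rfl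
lemma cv6_4 {α : Type*} (a b c d e f : α) (h : 4 < 6) : ![a,b,c,d,e,f] ⟨4,h⟩ = e := rfl
lemma cv6_5 {α : Type*} (a b c d e f : α) (h : 5 < 6) : ![a,b,c,d,e,f] ⟨5,h⟩ = f := rfl

set_option maxHeartbeats 4000000 in
/-- In a prime (fork, bull)-free graph with no induced cycle of length at least 6
containing an induced `P5` `p 0 - ... - p 4`, every outside vertex whose neighborhood on
the path is nonempty and proper has one of eleven prescribed neighborhood patterns. -/
theorem stmt14 {V : Type*} [Fintype V] (G : SimpleGraph V)
    (hprime : IsPrime G) (hfork : _root_.Free G fork) (hbull : _root_.Free G bull)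
    (hnohole : ∀ n : ℕ, 6 ≤ n → ¬ Nonempty (cycleGraph n ↪g G))
    (p : pathGraph 5 ↪g G) :
    ∀ x, x ∉ Set.range p →
      ({i | G.Adj x (p i)} : Set (Fin 5)).Nonempty →
      {i | G.Adj x (p i)} ≠ (Set.univ : Set (Fin 5)) →
      {i | G.Adj x (p i)} = ({0} : Set (Fin 5)) ∨
      {i | G.Adj x (p i)} = ({4} : Set (Fin 5)) ∨
      {i | G.Adj x (p i)} = ({0, 1} : Set (Fin 5)) ∨
      {i | G.Adj x (p i)} = ({3, 4} : Set (Fin 5)) ∨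
      {i | G.Adj x (p i)} = ({1, 3} : Set (Fin 5)) ∨
      {i | G.Adj x (p i)} = ({0, 1, 2} : Set (Fin 5)) ∨
      {i | G.Adj x (p i)} = ({1, 2, 3} : Set (Fin 5)) ∨
      {i | G.Adj x (p i)} = ({2, 3, 4} : Set (Fin 5)) ∨
      {i | G.Adj x (p i)} = ({0, 2, 4} : Set (Fin 5)) ∨
      {i | G.Adj x (p i)} = ({0, 2, 3, 4} : Set (Fin 5)) ∨
      {i | G.Adj x (p i)} = ({0, 1, 2, 4} : Set (Fin 5)) := by
  intro x hxr hnemp hnuniv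
  have hpadj : ∀ i j : Fin 5, G.Adj (p i) (p j) ↔ ((i : ℕ) + 1 = (j : ℕ) ∨ (j : ℕ) + 1 = (i : ℕ)) := by
    intro i j; rw [p.map_adj_iff, pathGraph_adj]
  have hx' : ∀ i, G.Adj (p i) x ↔ G.Adj x (p i) := fun i => G.adj_comm _ _
  have hxne : ∀ i, x ≠ p i := fun i h => hxr ⟨i, h.symm⟩
  have hpne : ∀ i j : Fin 5, i ≠ j → p i ≠ p j := fun i j h e => h (p.injective e)
  by_cases h0 : G.Adj x (p 0) <;> by_cases h1 : G.Adj x (p 1) <;>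
    by_cases h2 : G.Adj x (p 2) <;> by_cases h3 : G.Adj x (p 3) <;> by_cases h4 : G.Adj x (p 4)
  · -- TTTTT
    exact absurd (by ext i; fin_cases i <;> simp [h0, h1, h2, h3, h4]) hnuniv
  · -- TTTTF
    exact absurd (emb5 G bull ![p 3, x, p 2, p 4, p 0]
      (by
        intro i j hij
        fin_cases i <;> fin_cases j <;>
          simp only [Matrix.cons_val_zero, Matrix.cons_val_one, Matrix.head_cons,
            Matrix.cons_val_two, Matrix.tail_cons, Matrix.cons_val_three, Matrix.cons_val_four] <;>
          first
            | exact absurd rfl hij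
            | exact hxne _
            | exact (hxne _).symm
            | exact hpne _ _ (by decide))
      (by
        intro i j
        fin_cases i <;> fin_cases j <;>
          simp [bull, hpadj, hx', h0, h1, h2, h3, h4] <;> decide)) hbull
  · -- TTTFT
    exact Or.inr (Or.inr (Or.inr (Or.inr (Or.inr (Or.inr (Or.inr (Or.inr (Or.inr (Or.inr ((by ext i; fin_cases i <;> simp [h0, h1, h2, h3, h4] <;> decide)))))))))))
  · -- TTTFF
    exact Or.inr (Or.inr (Or.inr (Or.inr (Or.inr (Or.inl (by ext i; fin_cases i <;> simp [h0, h1, h2, h3, h4] <;> decide))))))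
  · -- TTFTT
    exact absurd (emb5 G bull ![p 1, x, p 0, p 2, p 4]
      (by
        intro i j hij
        fin_cases i <;> fin_cases j <;>
          simp only [Matrix.cons_val_zero, Matrix.cons_val_one, Matrix.head_cons,
            Matrix.cons_val_two, Matrix.tail_cons, Matrix.cons_val_three, Matrix.cons_val_four] <;>
          first
            | exact absurd rfl hij
            | exact hxne _
            | exact (hxne _).symm
            | exact hpne _ _ (by decide))
      (by
        intro i j
        fin_cases i <;> fin_cases j <;>
          simp [bull, hpadj, hx', h0, h1, h2, h3, h4] <;> decide)) hbull
  · -- TTFTF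
    exact absurd (emb5 G fork ![p 4, p 3, x, p 0, p 2]
      (by
        intro i j hij
        fin_cases i <;> fin_cases j <;>
          simp only [Matrix.cons_val_zero, Matrix.cons_val_one, Matrix.head_cons,
            Matrix.cons_val_two, Matrix.tail_cons, Matrix.cons_val_three, Matrix.cons_val_four] <;>
          first
            | exact absurd rfl hij
            | exact hxne _
            | exact (hxne _).symm
            | exact hpne _ _ (by decide))
      (by
        intro i j
        fin_cases i <;> fin_cases j <;>
          simp [fork, hpadj, hx', h0, h1, h2, h3, h4] <;> decide)) hfork
  · -- TTFFT
    exact absurd (emb5 G bull ![p 1, x, p 0, p 2, p 4]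
      (by
        intro i j hij
        fin_cases i <;> fin_cases j <;>
          simp only [Matrix.cons_val_zero, Matrix.cons_val_one, Matrix.head_cons,
            Matrix.cons_val_two, Matrix.tail_cons, Matrix.cons_val_three, Matrix.cons_val_four] <;>
          first
            | exact absurd rfl hij
            | exact hxne _
            | exact (hxne _).symm
            | exact hpne _ _ (by decide))
      (by
        intro i j
        fin_cases i <;> fin_cases j <;>
          simp [bull, hpadj, hx', h0, h1, h2, h3, h4] <;> decide)) hbull
  · -- TTFFF
    exact Or.inr (Or.inr (Or.inl (by ext i; fin_cases i <;> simp [h0, h1, h2, h3, h4] <;> decide)))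
  · -- TFTTT
    exact Or.inr (Or.inr (Or.inr (Or.inr (Or.inr (Or.inr (Or.inr (Or.inr (Or.inr (Or.inl (by ext i; fin_cases i <;> simp [h0, h1, h2, h3, h4] <;> decide))))))))))
  · -- TFTTF
    exact absurd (emb5 G bull ![p 2, p 3, x, p 1, p 4]
      (by
        intro i j hij
        fin_cases i <;> fin_cases j <;>
          simp only [Matrix.cons_val_zero, Matrix.cons_val_one, Matrix.head_cons,
            Matrix.cons_val_two, Matrix.tail_cons, Matrix.cons_val_three, Matrix.cons_val_four] <;>
          first
            | exact absurd rfl hij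
            | exact hxne _
            | exact (hxne _).symm
            | exact hpne _ _ (by decide))
      (by
        intro i j
        fin_cases i <;> fin_cases j <;>
          simp [bull, hpadj, hx', h0, h1, h2, h3, h4] <;> decide)) hbull
  · -- TFTFT
    exact Or.inr (Or.inr (Or.inr (Or.inr (Or.inr (Or.inr (Or.inr (Or.inr (Or.inl (by ext i; fin_cases i <;> simp [h0, h1, h2, h3, h4] <;> decide)))))))))
  · -- TFTFF
    exact absurd (emb5 G fork ![p 1, p 2, p 3, p 4, x]
      (by
        intro i j hij
        fin_cases i <;> fin_cases j <;>
          simp only [Matrix.cons_val_zero, Matrix.cons_val_one, Matrix.head_cons,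
            Matrix.cons_val_two, Matrix.tail_cons, Matrix.cons_val_three, Matrix.cons_val_four] <;>
          first
            | exact absurd rfl hij
            | exact hxne _
            | exact (hxne _).symm
            | exact hpne _ _ (by decide))
      (by
        intro i j
        fin_cases i <;> fin_cases j <;>
          simp [fork, hpadj, hx', h0, h1, h2, h3, h4] <;> decide)) hfork
  · -- TFFTT
    exact absurd (emb5 G bull ![p 3, x, p 4, p 2, p 0]
      (by
        intro i j hij
        fin_cases i <;> fin_cases j <;>
          simp only [Matrix.cons_val_zero, Matrix.cons_val_one, Matrix.head_cons,
            Matrix.cons_val_two, Matrix.tail_cons, Matrix.cons_val_three, Matrix.cons_val_four] <;>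
          first
            | exact absurd rfl hij
            | exact hxne _
            | exact (hxne _).symm
            | exact hpne _ _ (by decide))
      (by
        intro i j
        fin_cases i <;> fin_cases j <;>
          simp [bull, hpadj, hx', h0, h1, h2, h3, h4] <;> decide)) hbull
  · -- TFFTF
    exact absurd (emb5 G fork ![p 4, p 3, p 2, p 1, x]
      (by
        intro i j hij
        fin_cases i <;> fin_cases j <;>
          simp only [Matrix.cons_val_zero, Matrix.cons_val_one, Matrix.head_cons,
            Matrix.cons_val_two, Matrix.tail_cons, Matrix.cons_val_three, Matrix.cons_val_four] <;>
          first
            | exact absurd rfl hij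
            | exact hxne _
            | exact (hxne _).symm
            | exact hpne _ _ (by decide))
      (by
        intro i j
        fin_cases i <;> fin_cases j <;>
          simp [fork, hpadj, hx', h0, h1, h2, h3, h4] <;> decide)) hfork
  · -- TFFFT
    exact absurd (emb6 G ![x, p 0, p 1, p 2, p 3, p 4]
      (by
        intro i j hij
        fin_cases i <;> fin_cases j <;>
          simp only [cv6_0, cv6_1, cv6_2, cv6_3, cv6_4, cv6_5] <;>
          first
            | exact absurd rfl hij
            | exact hxne _
            | exact (hxne _).symm
            | exact hpne _ _ (by decide))
      (by
        intro i j
        fin_cases i <;> fin_cases j <;>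
          simp only [cv6_0, cv6_1, cv6_2, cv6_3, cv6_4, cv6_5] <;>
          simp [cycleGraph_adj, hpadj, hx', h0, h1, h2, h3, h4] <;> decide))
      (hnohole 6 (by norm_num))
  · -- TFFFF
    exact Or.inl (by ext i; fin_cases i <;> simp [h0, h1, h2, h3, h4] <;> decide)
  · -- FTTTT
    exact absurd (emb5 G bull ![p 1, x, p 2, p 0, p 4]
      (by
        intro i j hij
        fin_cases i <;> fin_cases j <;>
          simp only [Matrix.cons_val_zero, Matrix.cons_val_one, Matrix.head_cons,
            Matrix.cons_val_two, Matrix.tail_cons, Matrix.cons_val_three, Matrix.cons_val_four] <;>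
          first
            | exact absurd rfl hij
            | exact hxne _
            | exact (hxne _).symm
            | exact hpne _ _ (by decide))
      (by
        intro i j
        fin_cases i <;> fin_cases j <;>
          simp [bull, hpadj, hx', h0, h1, h2, h3, h4] <;> decide)) hbull
  · -- FTTTF
    exact Or.inr (Or.inr (Or.inr (Or.inr (Or.inr (Or.inr (Or.inl (by ext i; fin_cases i <;> simp [h0, h1, h2, h3, h4] <;> decide)))))))
  · -- FTTFT
    exact absurd (emb5 G bull ![p 1, p 2, x, p 0, p 3]
      (by
        intro i j hij
        fin_cases i <;> fin_cases j <;>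
          simp only [Matrix.cons_val_zero, Matrix.cons_val_one, Matrix.head_cons,
            Matrix.cons_val_two, Matrix.tail_cons, Matrix.cons_val_three, Matrix.cons_val_four] <;>
          first
            | exact absurd rfl hij
            | exact hxne _
            | exact (hxne _).symm
            | exact hpne _ _ (by decide))
      (by
        intro i j
        fin_cases i <;> fin_cases j <;>
          simp [bull, hpadj, hx', h0, h1, h2, h3, h4] <;> decide)) hbull
  · -- FTTFF
    exact absurd (emb5 G bull ![p 1, p 2, x, p 0, p 3]
      (by
        intro i j hij
        fin_cases i <;> fin_cases j <;>
          simp only [Matrix.cons_val_zero, Matrix.cons_val_one, Matrix.head_cons,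
            Matrix.cons_val_two, Matrix.tail_cons, Matrix.cons_val_three, Matrix.cons_val_four] <;>
          first
            | exact absurd rfl hij
            | exact hxne _
            | exact (hxne _).symm
            | exact hpne _ _ (by decide))
      (by
        intro i j
        fin_cases i <;> fin_cases j <;>
          simp [bull, hpadj, hx', h0, h1, h2, h3, h4] <;> decide)) hbull
  · -- FTFTT
    exact absurd (emb5 G fork ![p 0, p 1, x, p 4, p 2]
      (by
        intro i j hij
        fin_cases i <;> fin_cases j <;>
          simp only [Matrix.cons_val_zero, Matrix.cons_val_one, Matrix.head_cons,
            Matrix.cons_val_two, Matrix.tail_cons, Matrix.cons_val_three, Matrix.cons_val_four] <;>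
          first
            | exact absurd rfl hij
            | exact hxne _
            | exact (hxne _).symm
            | exact hpne _ _ (by decide))
      (by
        intro i j
        fin_cases i <;> fin_cases j <;>
          simp [fork, hpadj, hx', h0, h1, h2, h3, h4] <;> decide)) hfork
  · -- FTFTF
    exact Or.inr (Or.inr (Or.inr (Or.inr (Or.inl (by ext i; fin_cases i <;> simp [h0, h1, h2, h3, h4] <;> decide)))))
  · -- FTFFT
    exact absurd (emb5 G fork ![p 0, p 1, p 2, p 3, x]
      (by
        intro i j hij
        fin_cases i <;> fin_cases j <;>
          simp only [Matrix.cons_val_zero, Matrix.cons_val_one, Matrix.head_cons,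
            Matrix.cons_val_two, Matrix.tail_cons, Matrix.cons_val_three, Matrix.cons_val_four] <;>
          first
            | exact absurd rfl hij
            | exact hxne _
            | exact (hxne _).symm
            | exact hpne _ _ (by decide))
      (by
        intro i j
        fin_cases i <;> fin_cases j <;>
          simp [fork, hpadj, hx', h0, h1, h2, h3, h4] <;> decide)) hfork
  · -- FTFFF
    exact absurd (emb5 G fork ![p 0, p 1, p 2, p 3, x]
      (by
        intro i j hij
        fin_cases i <;> fin_cases j <;>
          simp only [Matrix.cons_val_zero, Matrix.cons_val_one, Matrix.head_cons,
            Matrix.cons_val_two, Matrix.tail_cons, Matrix.cons_val_three, Matrix.cons_val_four] <;>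
          first
            | exact absurd rfl hij
            | exact hxne _
            | exact (hxne _).symm
            | exact hpne _ _ (by decide))
      (by
        intro i j
        fin_cases i <;> fin_cases j <;>
          simp [fork, hpadj, hx', h0, h1, h2, h3, h4] <;> decide)) hfork
  · -- FFTTT
    exact Or.inr (Or.inr (Or.inr (Or.inr (Or.inr (Or.inr (Or.inr (Or.inl (by ext i; fin_cases i <;> simp [h0, h1, h2, h3, h4] <;> decide))))))))
  · -- FFTTF
    exact absurd (emb5 G bull ![p 2, p 3, x, p 1, p 4]
      (by
        intro i j hij
        fin_cases i <;> fin_cases j <;>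
          simp only [Matrix.cons_val_zero, Matrix.cons_val_one, Matrix.head_cons,
            Matrix.cons_val_two, Matrix.tail_cons, Matrix.cons_val_three, Matrix.cons_val_four] <;>
          first
            | exact absurd rfl hij
            | exact hxne _
            | exact (hxne _).symm
            | exact hpne _ _ (by decide))
      (by
        intro i j
        fin_cases i <;> fin_cases j <;>
          simp [bull, hpadj, hx', h0, h1, h2, h3, h4] <;> decide)) hbull
  · -- FFTFT
    exact absurd (emb5 G fork ![p 3, p 2, p 1, p 0, x]
      (by
        intro i j hij
        fin_cases i <;> fin_cases j <;>
          simp only [Matrix.cons_val_zero, Matrix.cons_val_one, Matrix.head_cons,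
            Matrix.cons_val_two, Matrix.tail_cons, Matrix.cons_val_three, Matrix.cons_val_four] <;>
          first
            | exact absurd rfl hij
            | exact hxne _
            | exact (hxne _).symm
            | exact hpne _ _ (by decide))
      (by
        intro i j
        fin_cases i <;> fin_cases j <;>
          simp [fork, hpadj, hx', h0, h1, h2, h3, h4] <;> decide)) hfork
  · -- FFTFF
    exact absurd (emb5 G fork ![p 1, p 2, p 3, p 4, x]
      (by
        intro i j hij
        fin_cases i <;> fin_cases j <;>
          simp only [Matrix.cons_val_zero, Matrix.cons_val_one, Matrix.head_cons,
            Matrix.cons_val_two, Matrix.tail_cons, Matrix.cons_val_three, Matrix.cons_val_four] <;>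
          first
            | exact absurd rfl hij
            | exact hxne _
            | exact (hxne _).symm
            | exact hpne _ _ (by decide))
      (by
        intro i j
        fin_cases i <;> fin_cases j <;>
          simp [fork, hpadj, hx', h0, h1, h2, h3, h4] <;> decide)) hfork
  · -- FFFTT
    exact Or.inr (Or.inr (Or.inr (Or.inl (by ext i; fin_cases i <;> simp [h0, h1, h2, h3, h4] <;> decide))))
  · -- FFFTF
    exact absurd (emb5 G fork ![p 4, p 3, p 2, p 1, x]
      (by
        intro i j hij
        fin_cases i <;> fin_cases j <;>
          simp only [Matrix.cons_val_zero, Matrix.cons_val_one, Matrix.head_cons,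
            Matrix.cons_val_two, Matrix.tail_cons, Matrix.cons_val_three, Matrix.cons_val_four] <;>
          first
            | exact absurd rfl hij
            | exact hxne _
            | exact (hxne _).symm
            | exact hpne _ _ (by decide))
      (by
        intro i j
        fin_cases i <;> fin_cases j <;>
          simp [fork, hpadj, hx', h0, h1, h2, h3, h4] <;> decide)) hfork
  · -- FFFFT
    exact Or.inr (Or.inl (by ext i; fin_cases i <;> simp [h0, h1, h2, h3, h4] <;> decide))
  · -- FFFFF
    obtain ⟨i, hi⟩ := hnemp
    fin_cases i <;> simp_all
end
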